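/- arXiv:2503.11397 — 5 statements merged into one kernel-verified Lean document; each statement's English description precedes it below -/
import Mathlib

section
/- For every dimension d ≥ 1, every degree ℓ ∈ ℕ, and every θ ∈ (0,1], there exists a constant C > 0, depending only on d, ℓ and θ, such that for every d-variate real polynomial p of total degree at most ℓ, all points x, y ∈ ℝ^d and all radii R > 0 and ρ > 0 with θR ≤ ρ and closedBall(y,ρ) ⊆ closedBall(x,R), one has ∫_{B(x,R)} p(z)² dz ≤ C ∫_{B(y,ρ)} p(z)² dz. (Norm comparison for polynomials on nested balls: the polynomial extension estimate underlying the discrete inverse inequalities of the unfitted HHO analysis, where a polynomial defined on a well-cut sub-cell containing a ball of radius proportional to the cell size is extended to a neighborhood contained in a comparable ball.) -/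
open MeasureTheory Metric Filter
open scoped Topology

namespace PNC

variable {d ℓ : ℕ}

noncomputable def P (d ℓ : ℕ) (c : (Fin d → Fin (ℓ+1)) → ℝ) (z : EuclideanSpace ℝ (Fin d)) : ℝ :=
  ∑ m : Fin d → Fin (ℓ+1), c m * ∏ i, (z i) ^ (m i : ℕ)

theorem P_cont : Continuous fun q : ((Fin d → Fin (ℓ+1)) → ℝ) × EuclideanSpace ℝ (Fin d) =>
    P d ℓ q.1 q.2 := by
  unfold P
  refine continuous_finset_sum _ fun m _ => ?_
  refine ((continuous_apply m).comp continuous_fst).mul ?_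
  refine continuous_finset_prod _ fun i _ => ?_
  exact (((EuclideanSpace.proj i).continuous.comp continuous_snd).pow _)

theorem P_contz (c : (Fin d → Fin (ℓ+1)) → ℝ) : Continuous (P d ℓ c) :=
  P_cont.comp (continuous_const.prodMk continuous_id)

theorem P_smul (t : ℝ) (c : (Fin d → Fin (ℓ+1)) → ℝ) (z : EuclideanSpace ℝ (Fin d)) :
    P d ℓ (t • c) z = t * P d ℓ c z := by
  unfold P
  rw [Finset.mul_sum]
  refine Finset.sum_congr rfl fun m _ => ?_
  simp [mul_assoc]

theorem P_zero (z : EuclideanSpace ℝ (Fin d)) : P d ℓ 0 z = 0 := by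
  simp [P]

theorem P_analytic (c : (Fin d → Fin (ℓ+1)) → ℝ) :
    AnalyticOnNhd ℝ (P d ℓ c) Set.univ := by
  intro z _
  unfold P
  refine Finset.analyticAt_fun_sum _ fun m _ => ?_
  refine (analyticAt_const.mul ?_)
  refine Finset.analyticAt_fun_prod _ fun i _ => ?_
  exact ((EuclideanSpace.proj (𝕜 := ℝ) i).analyticAt z).pow _

noncomputable def emb (d ℓ : ℕ) (m : Fin d → Fin (ℓ+1)) : Fin d →₀ ℕ :=
  Finsupp.equivFunOnFinite.symm (fun i => (m i : ℕ))

theorem integrableOn_P_sq (c : (Fin d → Fin (ℓ+1)) → ℝ) (y : EuclideanSpace ℝ (Fin d)) (ρ : ℝ) :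
    IntegrableOn (fun z => (P d ℓ c z)^2) (ball y ρ) volume :=
  ((((P_contz c).pow 2).locallyIntegrable).integrableOn_isCompact
    (isCompact_closedBall y ρ)).mono_set ball_subset_closedBall

theorem emb_inj : Function.Injective (emb d ℓ) := by
  intro a b h
  have := congrArg Finsupp.equivFunOnFinite h
  simp only [emb, Equiv.apply_symm_apply] at this
  funext i
  exact Fin.ext (congrFun this i)

@[simp] theorem emb_apply (m : Fin d → Fin (ℓ+1)) (i : Fin d) : emb d ℓ m i = (m i : ℕ) := rfl

theorem prod_pow_eq (v : Fin d → ℝ) (m : Fin d → Fin (ℓ+1)) :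
    (∏ a ∈ (emb d ℓ m).support, v a ^ (emb d ℓ m) a) = ∏ i, v i ^ (m i : ℕ) := by
  rw [Finset.prod_subset (Finset.subset_univ _)]
  · exact Finset.prod_congr rfl fun i _ => by simp
  · intro i _ hi
    have : emb d ℓ m i = 0 := Finsupp.notMem_support_iff.mp hi
    simp [this]

theorem P_eq_eval (c : (Fin d → Fin (ℓ+1)) → ℝ) (v : Fin d → ℝ) :
    (∑ m : Fin d → Fin (ℓ+1), c m * ∏ i, (v i) ^ (m i : ℕ)) =
      MvPolynomial.eval v (∑ m : Fin d → Fin (ℓ+1), MvPolynomial.monomial (emb d ℓ m) (c m)) := by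
  rw [map_sum]
  refine Finset.sum_congr rfl fun m _ => ?_
  rw [MvPolynomial.eval_monomial, Finsupp.prod]
  rw [prod_pow_eq]

theorem P_zero_imp (c : (Fin d → Fin (ℓ+1)) → ℝ) (h : ∀ v : Fin d → ℝ,
    (∑ m : Fin d → Fin (ℓ+1), c m * ∏ i, (v i) ^ (m i : ℕ)) = 0) : c = 0 := by
  have hq : (∑ m : Fin d → Fin (ℓ+1), MvPolynomial.monomial (emb d ℓ m) (c m)) = 0 := by
    apply MvPolynomial.funext
    intro v
    rw [← P_eq_eval, h v, map_zero]
  funext m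
  have h2 := congrArg (MvPolynomial.coeff (emb d ℓ m)) hq
  rw [MvPolynomial.coeff_zero, MvPolynomial.coeff_sum] at h2
  rw [Finset.sum_eq_single m] at h2
  · rwa [MvPolynomial.coeff_monomial, if_pos rfl] at h2
  · intro b _ hb
    rw [MvPolynomial.coeff_monomial, if_neg (fun hc => hb (emb_inj hc))]
  · simp
  
theorem exists_coeff (p : MvPolynomial (Fin d) ℝ) (hp : p.totalDegree ≤ ℓ) :
    ∃ c : (Fin d → Fin (ℓ+1)) → ℝ, ∀ v : Fin d → ℝ,
      MvPolynomial.eval v p = ∑ m : Fin d → Fin (ℓ+1), c m * ∏ i, (v i) ^ (m i : ℕ) := by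
  classical
  refine ⟨fun m => p.coeff (emb d ℓ m), fun v => ?_⟩
  have hsub : p.support ⊆ Finset.univ.image (emb d ℓ) := by
    intro μ hμ
    have hle : ∀ i, μ i ≤ ℓ := by
      intro i
      have h1 : μ i ≤ μ.sum fun _ e => e := by
        by_cases hi : i ∈ μ.support
        · exact Finset.single_le_sum (fun _ _ => Nat.zero_le _) hi
        · simp [Finsupp.notMem_support_iff.mp hi]
      exact h1.trans ((MvPolynomial.le_totalDegree hμ).trans hp)
    refine Finset.mem_image.mpr ⟨fun i => ⟨μ i, Nat.lt_succ_of_le (hle i)⟩, Finset.mem_univ _, ?_⟩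
    apply Finsupp.ext; intro i; simp
  rw [MvPolynomial.eval_eq' v p]
  rw [Finset.sum_subset hsub]
  · rw [Finset.sum_image (fun a _ b _ h => emb_inj h)]
    refine Finset.sum_congr rfl fun m _ => by simp
  · intro μ _ hμ
    rw [MvPolynomial.notMem_support_iff.mp hμ, zero_mul]

theorem totalDegree_comp_le (p : MvPolynomial (Fin d) ℝ) (x : Fin d → ℝ) (R : ℝ) :
    (MvPolynomial.aeval (fun i => MvPolynomial.C (x i) + MvPolynomial.C R * MvPolynomial.X i :
      Fin d → MvPolynomial (Fin d) ℝ) p).totalDegree ≤ p.totalDegree := by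
  classical
  set φ : Fin d → MvPolynomial (Fin d) ℝ :=
    fun i => MvPolynomial.C (x i) + MvPolynomial.C R * MvPolynomial.X i with hφ
  have hφdeg : ∀ i, (φ i).totalDegree ≤ 1 := by
    intro i
    refine (MvPolynomial.totalDegree_add _ _).trans (max_le ?_ ?_)
    · simp [MvPolynomial.totalDegree_C]
    · refine (MvPolynomial.totalDegree_mul _ _).trans ?_
      simp [MvPolynomial.totalDegree_C, MvPolynomial.totalDegree_X]
  conv_lhs => rw [p.as_sum, map_sum]
  refine (MvPolynomial.totalDegree_finset_sum _ _).trans (Finset.sup_le fun μ hμ => ?_)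
  rw [MvPolynomial.aeval_monomial]
  refine (MvPolynomial.totalDegree_mul _ _).trans ?_
  have h1 : (algebraMap ℝ (MvPolynomial (Fin d) ℝ) (p.coeff μ)).totalDegree = 0 :=
    MvPolynomial.totalDegree_C _
  rw [h1, zero_add]
  rw [Finsupp.prod]
  refine (MvPolynomial.totalDegree_finset_prod _ _).trans ?_
  calc ∑ i ∈ μ.support, (φ i ^ μ i).totalDegree
      ≤ ∑ i ∈ μ.support, μ i * 1 := by
        refine Finset.sum_le_sum fun i _ => ?_
        exact (MvPolynomial.totalDegree_pow _ _).trans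
          (Nat.mul_le_mul_left _ (hφdeg i))
    _ = μ.sum fun _ e => e := by simp [Finsupp.sum]
    _ ≤ p.totalDegree := MvPolynomial.le_totalDegree hμ

theorem eval_comp (p : MvPolynomial (Fin d) ℝ) (x : Fin d → ℝ) (R : ℝ) (v : Fin d → ℝ) :
    MvPolynomial.eval v (MvPolynomial.aeval
        (fun i => MvPolynomial.C (x i) + MvPolynomial.C R * MvPolynomial.X i :
          Fin d → MvPolynomial (Fin d) ℝ) p) =
      MvPolynomial.eval (fun i => x i + R * v i) p := by
  have h := MvPolynomial.eval₂_comp_left (MvPolynomial.eval v) MvPolynomial.C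
      (fun i => MvPolynomial.C (x i) + MvPolynomial.C R * MvPolynomial.X i) p
  rw [MvPolynomial.aeval_def, MvPolynomial.algebraMap_eq, h]
  have h1 : (MvPolynomial.eval v).comp MvPolynomial.C = RingHom.id ℝ := by
    ext a
    simp
  have h2 : ((MvPolynomial.eval v) ∘ fun i =>
      MvPolynomial.C (x i) + MvPolynomial.C R * MvPolynomial.X i) = fun i => x i + R * v i := by
    funext i
    simp
  rw [h1, h2]
  rfl

theorem cov (f : EuclideanSpace ℝ (Fin d) → ℝ) (x b : EuclideanSpace ℝ (Fin d))
    {R r : ℝ} (hR : 0 < R) :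
    ∫ z in ball b r, f z =
      R ^ d * ∫ w in ball (R⁻¹ • (b - x)) (r / R), f (x + R • w) := by
  have hmeas : MeasurableSet (ball b r) := measurableSet_ball
  rw [← integral_indicator hmeas, ← integral_indicator measurableSet_ball]
  have h1 : ∫ z, Set.indicator (ball b r) f z =
      ∫ z, Set.indicator (ball b r) f (x + z) := by
    rw [integral_add_left_eq_self]
  have hs := MeasureTheory.Measure.integral_comp_smul (volume : Measure (EuclideanSpace ℝ (Fin d)))
      (fun z => Set.indicator (ball b r) f (x + z)) R
  simp only [finrank_euclideanSpace_fin] at hs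
  have h3 : ∀ w : EuclideanSpace ℝ (Fin d),
      Set.indicator (ball b r) f (x + R • w) =
      Set.indicator (ball (R⁻¹ • (b - x)) (r / R)) (fun w => f (x + R • w)) w := by
    intro w
    have hmem : x + R • w ∈ ball b r ↔ w ∈ ball (R⁻¹ • (b - x)) (r / R) := by
      simp only [mem_ball, dist_eq_norm]
      have : x + R • w - b = R • (w - R⁻¹ • (b - x)) := by
        rw [smul_sub, smul_smul, mul_inv_cancel₀ hR.ne', one_smul]
        abel
      rw [this, norm_smul, Real.norm_of_nonneg hR.le, lt_div_iff₀ hR, mul_comm]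
    by_cases hw : w ∈ ball (R⁻¹ • (b - x)) (r / R)
    · rw [Set.indicator_of_mem (hmem.mpr hw), Set.indicator_of_mem hw]
    · rw [Set.indicator_of_notMem (fun hc => hw (hmem.mp hc)), Set.indicator_of_notMem hw]
  simp_rw [h3] at hs
  rw [h1, hs, smul_eq_mul, abs_of_nonneg (by positivity), ← mul_assoc,
    mul_inv_cancel₀ (by positivity), one_mul]


theorem c_eq_zero_of_ball (c : (Fin d → Fin (ℓ+1)) → ℝ) (y : EuclideanSpace ℝ (Fin d)) {ρ : ℝ}
    (hρ : 0 < ρ) (h : ∀ z ∈ ball y ρ, P d ℓ c z = 0) : c = 0 := by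
  have hzero : ∀ z : EuclideanSpace ℝ (Fin d), P d ℓ c z = 0 := by
    have h1 := (P_analytic c).eqOn_zero_of_preconnected_of_eventuallyEq_zero
      isPreconnected_univ (Set.mem_univ y)
      (Filter.eventuallyEq_iff_exists_mem.mpr ⟨ball y ρ, ball_mem_nhds y hρ, h⟩)
    exact fun z => h1 (Set.mem_univ z)
  apply P_zero_imp
  intro v
  simpa [P] using hzero ((WithLp.equiv 2 (Fin d → ℝ)).symm v)

theorem F_pos (c : (Fin d → Fin (ℓ+1)) → ℝ) (hc : c ≠ 0) (y : EuclideanSpace ℝ (Fin d)) {ρ : ℝ}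
    (hρ : 0 < ρ) : 0 < ∫ z in ball y ρ, (P d ℓ c z)^2 := by
  obtain ⟨z₀, hz₀, hne⟩ : ∃ z ∈ ball y ρ, P d ℓ c z ≠ 0 := by
    by_contra hcon
    push_neg at hcon
    exact hc (c_eq_zero_of_ball c y hρ hcon)
  rw [setIntegral_pos_iff_support_of_nonneg_ae (ae_of_all _ fun z => sq_nonneg _)
    (integrableOn_P_sq c y ρ)]
  have hUopen : IsOpen (Function.support fun z => (P d ℓ c z)^2) :=
    ((P_contz c).pow 2).isOpen_support
  refine lt_of_lt_of_le ?_ (measure_mono (Set.inter_subset_inter_left _ le_rfl))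
  exact (hUopen.inter isOpen_ball).measure_pos volume ⟨z₀, pow_ne_zero 2 hne, hz₀⟩

theorem F_contAt (q₀ : (((Fin d → Fin (ℓ+1)) → ℝ) × (EuclideanSpace ℝ (Fin d) × ℝ)))
    (hd : 1 ≤ d) (hρ : 0 < q₀.2.2) :
    ContinuousAt (fun q : (((Fin d → Fin (ℓ+1)) → ℝ) × (EuclideanSpace ℝ (Fin d) × ℝ)) =>
      ∫ z in ball q.2.1 q.2.2, (P d ℓ q.1 z) ^ 2) q₀ := by
  obtain ⟨c₀, y₀, ρ₀⟩ := q₀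
  simp only at hρ
  obtain ⟨cz₀, hcz₀, hmax⟩ :=
    ((isCompact_closedBall c₀ 1).prod (isCompact_closedBall y₀ (ρ₀+1))).exists_isMaxOn
      (⟨(c₀, y₀), by constructor <;> simp <;> positivity⟩)
      ((P_cont.pow 2)).continuousOn
  set M : ℝ := (P d ℓ cz₀.1 cz₀.2)^2 with hMdef
  have hM : ∀ cz ∈ (closedBall c₀ 1) ×ˢ (closedBall y₀ (ρ₀+1)), (P d ℓ cz.1 cz.2)^2 ≤ M :=
    fun cz h => hmax h
  have hM0 : 0 ≤ M := sq_nonneg _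
  set bound : EuclideanSpace ℝ (Fin d) → ℝ := Set.indicator (ball y₀ (ρ₀+1)) (fun _ => M)
    with hbdef
  have key : Filter.Tendsto
      (fun q : (((Fin d → Fin (ℓ+1)) → ℝ) × (EuclideanSpace ℝ (Fin d) × ℝ)) =>
        ∫ z, Set.indicator (ball q.2.1 q.2.2) (fun z => (P d ℓ q.1 z)^2) z)
      (𝓝 (c₀, y₀, ρ₀)) (𝓝 (∫ z, Set.indicator (ball y₀ ρ₀) (fun z => (P d ℓ c₀ z)^2) z)) := by
    refine tendsto_integral_filter_of_dominated_convergence bound ?_ ?_ ?_ ?_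
    · refine Filter.Eventually.of_forall fun q => ?_
      exact (((P_contz q.1).pow 2).aestronglyMeasurable).indicator measurableSet_ball
    · have t1 : ∀ᶠ q : (((Fin d → Fin (ℓ+1)) → ℝ) × (EuclideanSpace ℝ (Fin d) × ℝ))
          in 𝓝 (c₀, y₀, ρ₀), dist q.1 c₀ < 1 := by
        exact Filter.Tendsto.eventually_lt_const (by simp)
          ((continuous_fst.dist continuous_const).tendsto (c₀, y₀, ρ₀))
      have t2 : ∀ᶠ q : (((Fin d → Fin (ℓ+1)) → ℝ) × (EuclideanSpace ℝ (Fin d) × ℝ))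
          in 𝓝 (c₀, y₀, ρ₀), dist q.2.1 y₀ + q.2.2 < ρ₀ + 1 := by
        have hc2 : Continuous fun q : ((Fin d → Fin (ℓ+1)) → ℝ) × EuclideanSpace ℝ (Fin d) × ℝ =>
            dist q.2.1 y₀ + q.2.2 := by fun_prop
        exact Filter.Tendsto.eventually_lt_const
          (by simp only [dist_self, zero_add]; linarith) (hc2.tendsto (c₀, y₀, ρ₀))
      filter_upwards [t1, t2] with q h1 h2
      refine Filter.Eventually.of_forall fun z => ?_
      by_cases hz : z ∈ ball q.2.1 q.2.2
      · rw [Set.indicator_of_mem hz]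
        have hzy : z ∈ ball y₀ (ρ₀ + 1) := by
          rw [mem_ball] at hz ⊢
          calc dist z y₀ ≤ dist z q.2.1 + dist q.2.1 y₀ := dist_triangle _ _ _
            _ < q.2.2 + dist q.2.1 y₀ := by linarith
            _ < ρ₀ + 1 := by linarith
        have hmem : (q.1, z) ∈ (closedBall c₀ 1) ×ˢ (closedBall y₀ (ρ₀+1)) :=
          ⟨mem_closedBall.mpr h1.le, ball_subset_closedBall hzy⟩
        rw [hbdef, Set.indicator_of_mem hzy]
        calc ‖(P d ℓ q.1 z)^2‖ = (P d ℓ q.1 z)^2 := Real.norm_of_nonneg (sq_nonneg _)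
          _ ≤ M := hM _ hmem
      · rw [Set.indicator_of_notMem hz, norm_zero]
        exact Set.indicator_nonneg (fun _ _ => hM0) z
    · rw [hbdef, integrable_indicator_iff measurableSet_ball]
      exact integrableOn_const measure_ball_lt_top.ne
    · have hsph : volume (sphere y₀ ρ₀) = 0 :=
        Measure.addHaar_sphere_of_ne_zero volume y₀ hρ.ne'
      have hae : ∀ᵐ z : EuclideanSpace ℝ (Fin d), z ∉ sphere y₀ ρ₀ :=
        MeasureTheory.compl_mem_ae_iff.mpr hsph
      filter_upwards [hae] with z hz
      have hδ : dist z y₀ ≠ ρ₀ := by simpa [mem_sphere, dist_eq_norm] using hz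
      rcases hδ.lt_or_gt with hlt | hgt
      · have ev : ∀ᶠ q : (((Fin d → Fin (ℓ+1)) → ℝ) × (EuclideanSpace ℝ (Fin d) × ℝ))
            in 𝓝 (c₀, y₀, ρ₀), dist z q.2.1 < q.2.2 := by
          have hc3 : Continuous fun q : ((Fin d → Fin (ℓ+1)) → ℝ) × EuclideanSpace ℝ (Fin d) × ℝ =>
              q.2.2 - dist z q.2.1 := by fun_prop
          have h2 := Filter.Tendsto.eventually_const_lt
            (by linarith : (0:ℝ) < ρ₀ - dist z y₀) (hc3.tendsto (c₀, y₀, ρ₀))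
          filter_upwards [h2] with q hq
          linarith
        have hc5 : Continuous fun q : ((Fin d → Fin (ℓ+1)) → ℝ) × EuclideanSpace ℝ (Fin d) × ℝ =>
            (P d ℓ q.1 z) ^ 2 :=
          (P_cont.comp (continuous_fst.prodMk (continuous_const (y := z)))).pow 2
        have hcont := hc5.tendsto (c₀, y₀, ρ₀)
        rw [Set.indicator_of_mem (mem_ball.mpr hlt)]
        refine Filter.Tendsto.congr' ?_ hcont
        filter_upwards [ev] with q hq
        rw [Set.indicator_of_mem (mem_ball.mpr hq)]
      · have ev : ∀ᶠ q : (((Fin d → Fin (ℓ+1)) → ℝ) × (EuclideanSpace ℝ (Fin d) × ℝ))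
            in 𝓝 (c₀, y₀, ρ₀), q.2.2 < dist z q.2.1 := by
          have hc4 : Continuous fun q : ((Fin d → Fin (ℓ+1)) → ℝ) × EuclideanSpace ℝ (Fin d) × ℝ =>
              dist z q.2.1 - q.2.2 := by fun_prop
          have h2 := Filter.Tendsto.eventually_const_lt
            (by linarith : (0:ℝ) < dist z y₀ - ρ₀) (hc4.tendsto (c₀, y₀, ρ₀))
          filter_upwards [h2] with q hq
          linarith
        rw [Set.indicator_of_notMem (by simpa [mem_ball, not_lt] using hgt.le)]
        refine Filter.Tendsto.congr' ?_ tendsto_const_nhds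
        filter_upwards [ev] with q hq
        rw [Set.indicator_of_notMem (by simpa [mem_ball, not_lt] using hq.le)]
  have heq : (fun q : (((Fin d → Fin (ℓ+1)) → ℝ) × (EuclideanSpace ℝ (Fin d) × ℝ)) =>
      ∫ z in ball q.2.1 q.2.2, (P d ℓ q.1 z) ^ 2) =
      fun q => ∫ z, Set.indicator (ball q.2.1 q.2.2) (fun z => (P d ℓ q.1 z)^2) z :=
    funext fun q => (integral_indicator measurableSet_ball).symm
  rw [ContinuousAt, heq, ← integral_indicator measurableSet_ball]
  exact key


theorem key (d ℓ : ℕ) (hd : 1 ≤ d) {θ : ℝ} (hθ : θ ∈ Set.Ioc (0:ℝ) 1) :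
    ∃ C : ℝ, 0 < C ∧ ∀ (c : (Fin d → Fin (ℓ+1)) → ℝ) (y : EuclideanSpace ℝ (Fin d)) (ρ : ℝ),
      θ ≤ ρ → ρ ≤ 1 → ‖y‖ + ρ ≤ 1 →
      (∫ z in ball (0 : EuclideanSpace ℝ (Fin d)) 1, (P d ℓ c z)^2) ≤
        C * ∫ z in ball y ρ, (P d ℓ c z)^2 := by
  obtain ⟨hθ0, hθ1⟩ := hθ
  classical
  set K : Set (EuclideanSpace ℝ (Fin d) × ℝ) :=
    {p | ‖p.1‖ + p.2 ≤ 1 ∧ θ ≤ p.2 ∧ p.2 ≤ 1} with hK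
  have hKclosed : IsClosed K := by
    have h1 : IsClosed {p : EuclideanSpace ℝ (Fin d) × ℝ | ‖p.1‖ + p.2 ≤ 1} :=
      isClosed_le (by fun_prop) continuous_const
    have h2 : IsClosed {p : EuclideanSpace ℝ (Fin d) × ℝ | θ ≤ p.2} :=
      isClosed_le continuous_const continuous_snd
    have h3 : IsClosed {p : EuclideanSpace ℝ (Fin d) × ℝ | p.2 ≤ 1} :=
      isClosed_le continuous_snd continuous_const
    exact h1.inter (h2.inter h3)
  have hKcompact : IsCompact K := by
    refine IsCompact.of_isClosed_subset
      ((isCompact_closedBall (0 : EuclideanSpace ℝ (Fin d)) 1).prod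
        (isCompact_Icc (a := θ) (b := 1))) hKclosed ?_
    rintro ⟨yy, rr⟩ ⟨ha, hb, hcc⟩
    refine ⟨?_, hb, hcc⟩
    simp only [mem_closedBall_zero_iff]
    have := norm_nonneg yy
    linarith
  haveI : Nontrivial ((Fin d → Fin (ℓ+1)) → ℝ) := by
    refine ⟨0, fun _ => 1, fun hcon => ?_⟩
    have := congrFun hcon (fun _ => 0)
    simp at this
  obtain ⟨cu, hcu⟩ := exists_norm_eq ((Fin d → Fin (ℓ+1)) → ℝ) (zero_le_one)
  set T : Set ((((Fin d → Fin (ℓ+1)) → ℝ) × (EuclideanSpace ℝ (Fin d) × ℝ))) :=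
    (sphere (0 : (Fin d → Fin (ℓ+1)) → ℝ) 1) ×ˢ K with hT
  have hTcompact : IsCompact T := (isCompact_sphere _ _).prod hKcompact
  have hTne : T.Nonempty := by
    refine ⟨(cu, (0, θ)), mem_sphere_zero_iff_norm.mpr hcu, ?_, le_rfl, hθ1⟩
    simp [hθ1]
  set G : (((Fin d → Fin (ℓ+1)) → ℝ) × (EuclideanSpace ℝ (Fin d) × ℝ)) → ℝ :=
    fun q => ∫ z in ball q.2.1 q.2.2, (P d ℓ q.1 z) ^ 2 with hG
  have hGcontOn : ContinuousOn G T := fun q hq =>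
    (F_contAt q hd (lt_of_lt_of_le hθ0 hq.2.2.1)).continuousWithinAt
  obtain ⟨qmin, hqminT, hmin⟩ := hTcompact.exists_isMinOn hTne hGcontOn
  have hqρ : (0:ℝ) < qmin.2.2 := lt_of_lt_of_le hθ0 hqminT.2.2.1
  have hqc : qmin.1 ≠ 0 := by
    intro hcon
    have := mem_sphere_zero_iff_norm.mp hqminT.1
    rw [hcon] at this
    simp at this
  have hm : 0 < G qmin := F_pos qmin.1 hqc qmin.2.1 hqρ
  set H : ((Fin d → Fin (ℓ+1)) → ℝ) → ℝ :=
    fun c => ∫ z in ball (0 : EuclideanSpace ℝ (Fin d)) 1, (P d ℓ c z) ^ 2 with hH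
  have hHcontOn : ContinuousOn H (sphere (0 : (Fin d → Fin (ℓ+1)) → ℝ) 1) := by
    intro c _
    refine ContinuousAt.continuousWithinAt ?_
    have h1 := F_contAt (q₀ := (c, ((0 : EuclideanSpace ℝ (Fin d)), (1:ℝ)))) hd (by norm_num)
    have h2 : Filter.Tendsto (fun c' : (Fin d → Fin (ℓ+1)) → ℝ =>
        (c', ((0 : EuclideanSpace ℝ (Fin d)), (1:ℝ)))) (𝓝 c)
        (𝓝 (c, ((0 : EuclideanSpace ℝ (Fin d)), (1:ℝ)))) :=
      Continuous.tendsto (by fun_prop) c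
    have h3 : ContinuousAt ((fun q : ((Fin d → Fin (ℓ+1)) → ℝ) ×
        (EuclideanSpace ℝ (Fin d) × ℝ) => ∫ z in ball q.2.1 q.2.2, (P d ℓ q.1 z)^2) ∘
        (fun c' : (Fin d → Fin (ℓ+1)) → ℝ =>
          (c', ((0 : EuclideanSpace ℝ (Fin d)), (1:ℝ))))) c :=
      Filter.Tendsto.comp h1 h2
    exact h3
  obtain ⟨cmax, hcmaxS, hmax⟩ := (isCompact_sphere (0 : (Fin d → Fin (ℓ+1)) → ℝ) 1).exists_isMaxOn
    ⟨cu, mem_sphere_zero_iff_norm.mpr hcu⟩ hHcontOn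
  set m := G qmin with hmdef
  set M := H cmax with hMdef
  have hMpos : 0 < M := by
    have h1 : 0 < H qmin.1 := F_pos qmin.1 hqc 0 one_pos
    exact lt_of_lt_of_le h1 (hmax hqminT.1)
  refine ⟨M / m, div_pos hMpos hm, ?_⟩
  intro c y ρ hθρ hρ1 hyρ
  by_cases hc : c = 0
  · subst hc
    simp [P_zero]
  · have hcn : ‖c‖ ≠ 0 := norm_ne_zero_iff.mpr hc
    set c' := ‖c‖⁻¹ • c with hc'def
    have hc' : ‖c'‖ = 1 := norm_smul_inv_norm hc
    have hdecomp : c = ‖c‖ • c' := by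
      rw [hc'def, smul_smul, mul_inv_cancel₀ hcn, one_smul]
    have hscale : ∀ (y0 : EuclideanSpace ℝ (Fin d)) (r : ℝ),
        ∫ z in ball y0 r, (P d ℓ c z)^2 = ‖c‖^2 * ∫ z in ball y0 r, (P d ℓ c' z)^2 := by
      intro y0 r
      have hPc : ∀ z, P d ℓ c z = ‖c‖ * P d ℓ c' z := by
        intro z
        conv_lhs => rw [hdecomp]
        rw [P_smul]
      simp_rw [hPc, mul_pow]
      rw [MeasureTheory.integral_const_mul]
    have hqT : (c', (y, ρ)) ∈ T := ⟨mem_sphere_zero_iff_norm.mpr hc', hyρ, hθρ, hρ1⟩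
    have h1 : m ≤ G (c', (y, ρ)) := hmin hqT
    have h2 : H c' ≤ M := hmax (mem_sphere_zero_iff_norm.mpr hc')
    have hGc : G (c', (y, ρ)) = ∫ z in ball y ρ, (P d ℓ c' z)^2 := rfl
    calc (∫ z in ball (0 : EuclideanSpace ℝ (Fin d)) 1, (P d ℓ c z)^2)
        = ‖c‖^2 * H c' := hscale 0 1
      _ ≤ ‖c‖^2 * M := mul_le_mul_of_nonneg_left h2 (sq_nonneg _)
      _ = (M / m) * (‖c‖^2 * m) := by field_simp
      _ ≤ (M / m) * (‖c‖^2 * G (c', (y, ρ))) := by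
          refine mul_le_mul_of_nonneg_left ?_ (le_of_lt (div_pos hMpos hm))
          exact mul_le_mul_of_nonneg_left h1 (sq_nonneg _)
      _ = (M / m) * ∫ z in ball y ρ, (P d ℓ c z)^2 := by rw [hscale y ρ, hGc]

theorem nested_balls {d : ℕ} (hd : 1 ≤ d) {x y : EuclideanSpace ℝ (Fin d)} {R ρ : ℝ}
    (hρ : 0 < ρ) (hsub : closedBall y ρ ⊆ closedBall x R) : ‖y - x‖ + ρ ≤ R := by
  rcases eq_or_ne y x with rfl | hne
  · have hu : ∃ u : EuclideanSpace ℝ (Fin d), ‖u‖ = ρ := by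
      refine ⟨EuclideanSpace.single ⟨0, hd⟩ ρ, ?_⟩
      rw [EuclideanSpace.norm_single]
      exact abs_of_pos hρ
    obtain ⟨u, hu⟩ := hu
    have hmem : y + u ∈ closedBall y ρ := by
      simp [dist_eq_norm, hu]
    have := hsub hmem
    rw [mem_closedBall, dist_eq_norm] at this
    simp only [add_sub_cancel_left] at this
    rw [hu] at this
    simpa using this
  · set s := ρ * ‖y - x‖⁻¹ with hs
    have hnx : (0:ℝ) < ‖y - x‖ := norm_pos_iff.mpr (sub_ne_zero_of_ne hne)
    have hspos : 0 < s := mul_pos hρ (inv_pos.mpr hnx)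
    set z := x + (1 + s) • (y - x) with hz
    have hzy : z - y = s • (y - x) := by
      rw [hz, add_smul, one_smul]
      abel
    have hmem : z ∈ closedBall y ρ := by
      rw [mem_closedBall, dist_eq_norm, hzy, norm_smul, Real.norm_of_nonneg hspos.le, hs]
      rw [mul_assoc, inv_mul_cancel₀ hnx.ne', mul_one]
    have h2 := hsub hmem
    rw [mem_closedBall, dist_eq_norm, hz] at h2
    simp only [add_sub_cancel_left] at h2
    rw [norm_smul, Real.norm_of_nonneg (by linarith), add_mul, one_mul, hs, mul_assoc,
      inv_mul_cancel₀ hnx.ne', mul_one] at h2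
    linarith

end PNC

open PNC in
/-- Norm comparison for polynomials on nested balls. -/
theorem polynomial_norm_comparison_nested_balls
    (d ℓ : ℕ) (hd : 1 ≤ d) (θ : ℝ) (hθ : θ ∈ Set.Ioc (0 : ℝ) 1) :
    ∃ C : ℝ, 0 < C ∧
      ∀ (p : MvPolynomial (Fin d) ℝ), p.totalDegree ≤ ℓ →
        ∀ (x y : EuclideanSpace ℝ (Fin d)) (R ρ : ℝ), 0 < R → 0 < ρ →
          θ * R ≤ ρ → closedBall y ρ ⊆ closedBall x R →
          (∫ z in ball x R, (MvPolynomial.eval (fun i => z i) p) ^ 2) ≤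
            C * ∫ z in ball y ρ, (MvPolynomial.eval (fun i => z i) p) ^ 2 := by
  obtain ⟨C, hC, hkey⟩ := key d ℓ hd hθ
  refine ⟨C, hC, ?_⟩
  intro p hp x y R ρ hR hρ hθR hsub
  -- the rescaled polynomial
  set pt : MvPolynomial (Fin d) ℝ := MvPolynomial.aeval
    (fun i => MvPolynomial.C (x i) + MvPolynomial.C R * MvPolynomial.X i) p with hpt
  have hptdeg : pt.totalDegree ≤ ℓ := (totalDegree_comp_le p (fun i => x i) R).trans hp
  obtain ⟨c, hcrep⟩ := exists_coeff pt hptdeg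
  have hfun : ∀ w : EuclideanSpace ℝ (Fin d),
      MvPolynomial.eval (fun i => (x + R • w) i) p = P d ℓ c w := by
    intro w
    have h1 := hcrep (fun i => w i)
    have h2 := eval_comp p (fun i => x i) R (fun i => w i)
    rw [← hpt] at h2
    have h3 : (fun i => (x + R • w) i) = fun i => x i + R * w i := by
      funext i
      simp [PiLp.add_apply, PiLp.smul_apply, smul_eq_mul]
    rw [h3, ← h2, h1]
    rfl
  -- change of variables
  have hcov1 := cov (fun z => (MvPolynomial.eval (fun i => z i) p) ^ 2) x x (hR) (r := R)
  have hcov2 := cov (fun z => (MvPolynomial.eval (fun i => z i) p) ^ 2) x y (hR) (r := ρ)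
  rw [sub_self, smul_zero, div_self hR.ne'] at hcov1
  simp only [hfun] at hcov1 hcov2
  rw [hcov1, hcov2]
  -- the parameters
  have hnest := nested_balls hd hρ hsub
  have h1 : θ ≤ ρ / R := (le_div_iff₀ hR).mpr hθR
  have h2 : ρ / R ≤ 1 := by
    rw [div_le_one hR]
    have := norm_nonneg (y - x)
    linarith
  have h3 : ‖R⁻¹ • (y - x)‖ + ρ / R ≤ 1 := by
    rw [norm_smul, Real.norm_of_nonneg (inv_nonneg.mpr hR.le)]
    rw [div_eq_inv_mul]
    have hRinv : (0:ℝ) < R⁻¹ := inv_pos.mpr hR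
    calc R⁻¹ * ‖y - x‖ + R⁻¹ * ρ = R⁻¹ * (‖y - x‖ + ρ) := by ring
      _ ≤ R⁻¹ * R := mul_le_mul_of_nonneg_left hnest hRinv.le
      _ = 1 := inv_mul_cancel₀ hR.ne'
  have hfin := hkey c (R⁻¹ • (y - x)) (ρ / R) h1 h2 h3
  calc R ^ d * ∫ w in ball (0 : EuclideanSpace ℝ (Fin d)) 1, (P d ℓ c w) ^ 2
      ≤ R ^ d * (C * ∫ w in ball (R⁻¹ • (y - x)) (ρ / R), (P d ℓ c w) ^ 2) :=
        mul_le_mul_of_nonneg_left hfin (pow_nonneg hR.le d)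
    _ = C * (R ^ d * ∫ w in ball (R⁻¹ • (y - x)) (ρ / R), (P d ℓ c w) ^ 2) := by ring
end

section
/- For every dimension d ≥ 1 and every degree ℓ ∈ ℕ, there exists a constant C > 0, depending only on d and ℓ, such that for every d-variate real polynomial p of total degree at most ℓ, every x ∈ ℝ^d and every r > 0, one has ∫_{S(x,r)} p(z)² dμ^{d−1}(z) ≤ C r⁻¹ ∫_{B(x,r)} p(z)² dz. (Discrete trace inequality for polynomials on spheres, the prototype of the discrete trace inequality h_S^{1/2}‖φ⁺‖_{∂S ∪ S^Γ} ≲ ‖φ‖ used in the unfitted HHO analysis.) -/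
open MeasureTheory Metric MvPolynomial
open scoped ENNReal NNReal

noncomputable section

namespace PolyTrace

variable (d ℓ : ℕ)

lemma contEval (d : ℕ) (p : MvPolynomial (Fin d) ℝ) :
    Continuous fun z : EuclideanSpace ℝ (Fin d) => eval (fun i => z i) p := by
  induction p using MvPolynomial.induction_on with
  | C a => simpa using continuous_const
  | add p q hp hq => simpa [eval_add, Pi.add_def] using hp.add hq
  | mul_X p i hp => simpa [eval_mul, Pi.mul_def] using hp.mul (EuclideanSpace.proj i).continuous

lemma analyticEval (d : ℕ) (p : MvPolynomial (Fin d) ℝ) :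
    AnalyticOnNhd ℝ (fun z : EuclideanSpace ℝ (Fin d) => eval (fun i => z i) p) Set.univ := by
  induction p using MvPolynomial.induction_on with
  | C a => simpa using analyticOnNhd_const
  | add p q hp hq => simpa [eval_add, Pi.add_def] using hp.add hq
  | mul_X p i hp =>
      simpa [eval_mul] using hp.mul ((EuclideanSpace.proj (𝕜 := ℝ) i).analyticOnNhd Set.univ)

lemma zero_of_vanish (d : ℕ) (p : MvPolynomial (Fin d) ℝ)
    (h : ∀ z ∈ ball (0 : EuclideanSpace ℝ (Fin d)) 1, eval (fun i => z i) p = 0) : p = 0 := by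
  have h0 : ∀ z : EuclideanSpace ℝ (Fin d), eval (fun i => z i) p = 0 := by
    have := (analyticEval d p).eqOn_zero_of_preconnected_of_eventuallyEq_zero
      isPreconnected_univ (Set.mem_univ (0 : EuclideanSpace ℝ (Fin d)))
      (Filter.eventually_of_mem (isOpen_ball.mem_nhds (by simp : (0:EuclideanSpace ℝ (Fin d)) ∈ ball 0 1)) h)
    exact fun z => this (Set.mem_univ z)
  refine MvPolynomial.funext fun x => ?_
  simpa using h0 (WithLp.toLp 2 x)


variable (d ℓ : ℕ)

abbrev Idx := Fin d → Fin (ℓ + 1)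

def F (m : Idx d ℓ) : Fin d →₀ ℕ := Finsupp.equivFunOnFinite.symm fun i => (m i : ℕ)

lemma F_apply (m : Idx d ℓ) (i : Fin d) : F d ℓ m i = m i := rfl

lemma injF : Function.Injective (F d ℓ) := by
  intro a b h
  funext i
  have := congrArg (fun g => g i) h
  simpa [F_apply, Fin.val_injective.eq_iff] using Fin.val_injective (by simpa [F_apply] using this)

def mon (m : Idx d ℓ) (y : EuclideanSpace ℝ (Fin d)) : ℝ := ∏ i, y i ^ (m i : ℕ)

def fc (c : Idx d ℓ → ℝ) (y : EuclideanSpace ℝ (Fin d)) : ℝ := ∑ m, c m * mon d ℓ m y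

lemma eval_rep (p : MvPolynomial (Fin d) ℝ) (hp : p.totalDegree ≤ ℓ)
    (y : EuclideanSpace ℝ (Fin d)) :
    eval (fun i => y i) p = fc d ℓ (fun m => coeff (F d ℓ m) p) y := by
  have hsub : p.support ⊆ Finset.univ.image (F d ℓ) := by
    intro m' hm'
    have hle : ∀ i, m' i ≤ ℓ := by
      intro i
      have h1 : m' i ≤ m'.sum fun _ e => e := by
        by_cases h : m' i = 0
        · simp [h]
        · exact Finset.single_le_sum (fun _ _ => Nat.zero_le _) (Finsupp.mem_support_iff.2 h)
      exact h1.trans ((MvPolynomial.le_totalDegree hm').trans hp)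
    refine Finset.mem_image.2 ⟨fun i => ⟨m' i, Nat.lt_succ_of_le (hle i)⟩, Finset.mem_univ _, ?_⟩
    ext i
    simp [F_apply]
  rw [eval_eq']
  rw [Finset.sum_subset hsub (by
    intro m' _ hm'
    simp [MvPolynomial.notMem_support_iff.1 hm'])]
  rw [Finset.sum_image (fun a _ b _ h => injF d ℓ h)]
  rfl

lemma fc_eq_eval (c : Idx d ℓ → ℝ) (y : EuclideanSpace ℝ (Fin d)) :
    fc d ℓ c y = eval (fun i => y i) (∑ m, monomial (F d ℓ m) (c m)) := by
  rw [map_sum]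
  refine Finset.sum_congr rfl fun m _ => ?_
  rw [eval_monomial, Finsupp.prod_fintype _ _ (fun i => pow_zero _)]
  rfl

lemma coeff_sum_monomial (c : Idx d ℓ → ℝ) (m : Idx d ℓ) :
    coeff (F d ℓ m) (∑ m', monomial (F d ℓ m') (c m')) = c m := by
  rw [MvPolynomial.coeff_sum]
  rw [Finset.sum_eq_single m]
  · simp [MvPolynomial.coeff_monomial]
  · intro b _ hb
    simp [MvPolynomial.coeff_monomial, (injF d ℓ).ne_iff.2 hb.symm, Ne.symm]
  · simp


lemma contPhi : Continuous fun q : (Idx d ℓ → ℝ) × EuclideanSpace ℝ (Fin d) => fc d ℓ q.1 q.2 := by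
  unfold fc mon
  refine continuous_finset_sum _ fun m _ => ?_
  exact ((continuous_apply m).comp continuous_fst).mul
    (continuous_finset_prod _ fun i _ =>
      (((EuclideanSpace.proj i).continuous.comp continuous_snd).pow _))

lemma contfc (c : Idx d ℓ → ℝ) : Continuous fun y => fc d ℓ c y :=
  (contPhi d ℓ).comp (Continuous.prodMk_right c)

lemma integrableOn_sq (c : Idx d ℓ → ℝ) :
    IntegrableOn (fun y => fc d ℓ c y ^ 2) (ball (0 : EuclideanSpace ℝ (Fin d)) 1) volume :=
  (((contfc d ℓ c).pow 2).continuousOn.integrableOn_compact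
    (isCompact_closedBall _ _)).mono_set ball_subset_closedBall

lemma fc_smul (t : ℝ) (c : Idx d ℓ → ℝ) (y : EuclideanSpace ℝ (Fin d)) :
    fc d ℓ (t • c) y = t * fc d ℓ c y := by
  unfold fc
  rw [Finset.mul_sum]
  exact Finset.sum_congr rfl fun m _ => by simp [mul_assoc]

lemma g_cont : Continuous fun c : Idx d ℓ → ℝ =>
    ∫ y in ball (0 : EuclideanSpace ℝ (Fin d)) 1, fc d ℓ c y ^ 2 := by
  have hmon : ∀ m m' : Idx d ℓ, IntegrableOn
      (fun y => mon d ℓ m y * mon d ℓ m' y) (ball (0 : EuclideanSpace ℝ (Fin d)) 1) volume := by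
    intro m m'
    have hc : Continuous fun y : EuclideanSpace ℝ (Fin d) => mon d ℓ m y * mon d ℓ m' y := by
      unfold mon
      exact (continuous_finset_prod _ fun i _ => ((EuclideanSpace.proj i).continuous.pow _)).mul
        (continuous_finset_prod _ fun i _ => ((EuclideanSpace.proj i).continuous.pow _))
    exact (hc.continuousOn.integrableOn_compact (isCompact_closedBall _ _)).mono_set
      ball_subset_closedBall
  have key : ∀ c : Idx d ℓ → ℝ,
      (∫ y in ball (0 : EuclideanSpace ℝ (Fin d)) 1, fc d ℓ c y ^ 2) =
      ∑ m, ∑ m', (c m * c m') * ∫ y in ball (0 : EuclideanSpace ℝ (Fin d)) 1,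
        mon d ℓ m y * mon d ℓ m' y := by
    intro c
    have hexp : ∀ y, fc d ℓ c y ^ 2 =
        ∑ m, ∑ m', (c m * c m') * (mon d ℓ m y * mon d ℓ m' y) := by
      intro y
      rw [sq, fc, Finset.sum_mul_sum]
      exact Finset.sum_congr rfl fun m _ => Finset.sum_congr rfl fun m' _ => by ring
    simp_rw [hexp]
    rw [integral_finset_sum _ (fun m _ => integrable_finset_sum _ (fun m' _ =>
      ((hmon m m').const_mul _)))]
    refine Finset.sum_congr rfl fun m _ => ?_
    rw [integral_finset_sum _ (fun m' _ => ((hmon m m').const_mul _))]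
    exact Finset.sum_congr rfl fun m' _ => integral_const_mul _ _
  simp_rw [key]
  exact continuous_finset_sum _ fun m _ => continuous_finset_sum _ fun m' _ =>
    (((continuous_apply m).mul (continuous_apply m')).mul continuous_const)


lemma fc_zero_of_vanish (c : Idx d ℓ → ℝ)
    (h : ∀ y ∈ ball (0 : EuclideanSpace ℝ (Fin d)) 1, fc d ℓ c y = 0) : c = 0 := by
  have hP : (∑ m, monomial (F d ℓ m) (c m)) = 0 := by
    refine zero_of_vanish d _ fun z hz => ?_
    rw [← fc_eq_eval d ℓ c z]
    exact h z hz
  funext m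
  have h2 := coeff_sum_monomial d ℓ c m
  rw [hP] at h2
  simpa using h2.symm

lemma unit_bound : ∃ C : ℝ, 0 ≤ C ∧ ∀ (c : Idx d ℓ → ℝ)
    (y : EuclideanSpace ℝ (Fin d)), y ∈ closedBall 0 1 →
    fc d ℓ c y ^ 2 ≤ C * ∫ z in ball (0 : EuclideanSpace ℝ (Fin d)) 1, fc d ℓ c z ^ 2 := by
  set g : (Idx d ℓ → ℝ) → ℝ :=
    fun c => ∫ z in ball (0 : EuclideanSpace ℝ (Fin d)) 1, fc d ℓ c z ^ 2 with hg
  set S : Set (Idx d ℓ → ℝ) := sphere 0 1 with hS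
  have hSne : S.Nonempty := NormedSpace.sphere_nonempty.mpr zero_le_one
  have hScomp : IsCompact S := isCompact_sphere _ _
  -- minimum of g on S
  obtain ⟨c₀, hc₀S, hc₀⟩ := hScomp.exists_isMinOn hSne (g_cont d ℓ).continuousOn
  have hm : 0 < g c₀ := by
    rcases (integral_nonneg fun z => sq_nonneg _ : 0 ≤ g c₀).lt_or_eq with h | h
    · exact h
    · exfalso
      have hae : (fun y => fc d ℓ c₀ y ^ 2) =ᵐ[volume.restrict (ball (0 : EuclideanSpace ℝ (Fin d)) 1)] 0 :=
        (integral_eq_zero_iff_of_nonneg (fun z => sq_nonneg _) (integrableOn_sq d ℓ c₀)).1 h.symm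
      have hae' : ∀ᵐ y ∂(volume : Measure (EuclideanSpace ℝ (Fin d))),
          y ∈ ball (0 : EuclideanSpace ℝ (Fin d)) 1 → fc d ℓ c₀ y ^ 2 = 0 :=
        (ae_restrict_iff' measurableSet_ball).1 hae
      set U : Set (EuclideanSpace ℝ (Fin d)) :=
        ball 0 1 ∩ {y | fc d ℓ c₀ y ≠ 0} with hU
      have hUopen : IsOpen U :=
        isOpen_ball.inter (isOpen_ne_fun (contfc d ℓ c₀) continuous_const)
      have hU0 : volume U = 0 := by
        refine measure_mono_null ?_ hae'
        intro y hy hy'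
        exact hy.2 ((pow_eq_zero_iff two_ne_zero).1 (hy' hy.1))
      have hUe : U = ∅ := hUopen.eq_empty_of_measure_zero hU0
      have : c₀ = 0 := by
        refine fc_zero_of_vanish d ℓ c₀ fun y hy => ?_
        by_contra hne
        have hmem : y ∈ U := ⟨hy, hne⟩
        rw [hUe] at hmem
        exact hmem.elim
      rw [hS] at hc₀S
      rw [this] at hc₀S
      simp at hc₀S
  -- maximum of Φ on S × closedBall
  have hKcomp : IsCompact (S ×ˢ closedBall (0 : EuclideanSpace ℝ (Fin d)) 1) :=
    hScomp.prod (isCompact_closedBall _ _)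
  have hKne : (S ×ˢ closedBall (0 : EuclideanSpace ℝ (Fin d)) 1).Nonempty :=
    hSne.prod ⟨0, mem_closedBall_self zero_le_one⟩
  obtain ⟨q₀, hq₀K, hq₀⟩ := hKcomp.exists_isMaxOn hKne
    (((contPhi d ℓ).pow 2).continuousOn)
  set M : ℝ := fc d ℓ q₀.1 q₀.2 ^ 2 with hM
  have hM0 : 0 ≤ M := sq_nonneg _
  refine ⟨M / g c₀, div_nonneg hM0 hm.le, ?_⟩
  intro c y hy
  rcases eq_or_ne c 0 with rfl | hc
  · simp [fc]
  · have ht : 0 < ‖c‖ := norm_pos_iff.2 hc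
    set c' : Idx d ℓ → ℝ := ‖c‖⁻¹ • c with hc'
    have hc'S : c' ∈ S := by
      simp [hS, hc', norm_smul, inv_mul_cancel₀ ht.ne']
    have hrep : c = ‖c‖ • c' := by
      rw [hc', smul_smul, mul_inv_cancel₀ ht.ne', one_smul]
    have hfc : ∀ z, fc d ℓ c z = ‖c‖ * fc d ℓ c' z := by
      intro z
      have h2 := fc_smul d ℓ ‖c‖ c' z
      rw [← hrep] at h2
      exact h2
    have hgc : g c = ‖c‖ ^ 2 * g c' := by
      simp_rw [hg, hfc, mul_pow]
      rw [integral_const_mul]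
    have hgc' : g c₀ ≤ g c' := hc₀ hc'S
    have hΦ : fc d ℓ c' y ^ 2 ≤ M :=
      hq₀ (Set.mk_mem_prod hc'S hy)
    calc fc d ℓ c y ^ 2 = ‖c‖ ^ 2 * fc d ℓ c' y ^ 2 := by rw [hfc, mul_pow]
      _ ≤ ‖c‖ ^ 2 * M := by nlinarith
      _ ≤ M / g c₀ * g c := by
          rw [hgc, div_mul_eq_mul_div, le_div_iff₀ hm]
          nlinarith [mul_le_mul_of_nonneg_left hgc' (mul_nonneg hM0 (sq_nonneg ‖c‖))]


lemma unit_poly_bound : ∃ C : ℝ, 0 ≤ C ∧ ∀ p : MvPolynomial (Fin d) ℝ, p.totalDegree ≤ ℓ →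
    ∀ y ∈ closedBall (0 : EuclideanSpace ℝ (Fin d)) 1,
      (eval (fun i => y i) p) ^ 2 ≤
        C * ∫ z in ball (0 : EuclideanSpace ℝ (Fin d)) 1, (eval (fun i => z i) p) ^ 2 := by
  obtain ⟨C, hC0, hC⟩ := unit_bound d ℓ
  refine ⟨C, hC0, fun p hp y hy => ?_⟩
  have h1 : ∀ w : EuclideanSpace ℝ (Fin d),
      eval (fun i => w i) p = fc d ℓ (fun m => coeff (F d ℓ m) p) w := eval_rep d ℓ p hp
  rw [h1 y]
  have h2 : (∫ z in ball (0 : EuclideanSpace ℝ (Fin d)) 1, (eval (fun i => z i) p) ^ 2) =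
      ∫ z in ball (0 : EuclideanSpace ℝ (Fin d)) 1, fc d ℓ (fun m => coeff (F d ℓ m) p) z ^ 2 :=
    integral_congr_ae (Filter.Eventually.of_forall fun z => by simp only [h1])
  rw [h2]
  exact hC _ y hy


lemma exists_subst (d ℓ : ℕ) (p : MvPolynomial (Fin d) ℝ) (hp : p.totalDegree ≤ ℓ)
    (x : EuclideanSpace ℝ (Fin d)) (r : ℝ) :
    ∃ q : MvPolynomial (Fin d) ℝ, q.totalDegree ≤ ℓ ∧
      ∀ y : EuclideanSpace ℝ (Fin d),
        eval (fun i => y i) q = eval (fun i => x i + r * y i) p := by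
  set g : Fin d → MvPolynomial (Fin d) ℝ := fun i => C (x i) + C r * X i with hgdef
  have hg : ∀ i, (g i).totalDegree ≤ 1 := by
    intro i
    refine (totalDegree_add _ _).trans (max_le (by simp [totalDegree_C]) ?_)
    refine (totalDegree_mul _ _).trans ?_
    simp [totalDegree_C, totalDegree_X]
  refine ⟨eval₂ C g p, ?_, ?_⟩
  · rw [eval₂_eq]
    refine (totalDegree_finset_sum _ _).trans (Finset.sup_le fun m hm => ?_)
    refine (totalDegree_mul _ _).trans ?_
    rw [totalDegree_C, zero_add]
    refine (totalDegree_finset_prod _ _).trans ?_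
    calc ∑ i ∈ m.support, ((g i) ^ m i).totalDegree
        ≤ ∑ i ∈ m.support, m i * 1 := by
          refine Finset.sum_le_sum fun i _ => (totalDegree_pow _ _).trans ?_
          exact Nat.mul_le_mul_left _ (hg i)
      _ = m.sum fun _ e => e := by simp [Finsupp.sum]
      _ ≤ ℓ := (MvPolynomial.le_totalDegree hm).trans hp
  · intro y
    have h1 := eval₂_comp_left (eval (fun i => y i)) (C : ℝ →+* MvPolynomial (Fin d) ℝ) g p
    rw [h1]
    have h2 : (eval (fun i : Fin d => y i)).comp (C : ℝ →+* MvPolynomial (Fin d) ℝ) =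
        RingHom.id ℝ := by
      ext a
      simp
    rw [h2]
    have h3 : ((eval fun i : Fin d => y i) ∘ g) = fun i => x i + r * y i := by
      funext i
      simp [hgdef]
    rw [h3]
    rfl


lemma ball_cov (d : ℕ) (G : EuclideanSpace ℝ (Fin d) → ℝ)
    (x : EuclideanSpace ℝ (Fin d)) {r : ℝ} (hr : 0 < r) :
    ∫ z in ball x r, G z = r ^ d * ∫ y in ball (0 : EuclideanSpace ℝ (Fin d)) 1, G (x + r • y) := by
  have hmem : ∀ y : EuclideanSpace ℝ (Fin d),
      x + r • y ∈ ball x r ↔ y ∈ ball (0 : EuclideanSpace ℝ (Fin d)) 1 := by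
    intro y
    rw [mem_ball, mem_ball, dist_eq_norm, dist_eq_norm, add_sub_cancel_left, sub_zero, norm_smul,
      Real.norm_of_nonneg hr.le]
    constructor
    · intro h; nlinarith [norm_nonneg y]
    · intro h; nlinarith [norm_nonneg y]
  set F : EuclideanSpace ℝ (Fin d) → ℝ := (ball x r).indicator G with hF
  have h1 : ∫ z in ball x r, G z = ∫ z, F z := (integral_indicator measurableSet_ball).symm
  have h2 : ∫ y, F (x + r • y) = |(r ^ Module.finrank ℝ (EuclideanSpace ℝ (Fin d)))⁻¹| • ∫ z, F z := by
    have ha := MeasureTheory.Measure.integral_comp_smul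
      (volume : Measure (EuclideanSpace ℝ (Fin d))) (fun z => F (x + z)) r
    rw [ha, integral_add_left_eq_self]
  have h3 : ∀ y, F (x + r • y) =
      (ball (0 : EuclideanSpace ℝ (Fin d)) 1).indicator (fun y => G (x + r • y)) y := by
    intro y
    by_cases hy : y ∈ ball (0 : EuclideanSpace ℝ (Fin d)) 1
    · rw [Set.indicator_of_mem hy, hF, Set.indicator_of_mem ((hmem y).2 hy)]
    · rw [Set.indicator_of_notMem hy, hF,
        Set.indicator_of_notMem (fun hmem' => hy ((hmem y).1 hmem'))]
  have h4 : ∫ y in ball (0 : EuclideanSpace ℝ (Fin d)) 1, G (x + r • y) = ∫ y, F (x + r • y) := by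
    rw [← integral_indicator measurableSet_ball]
    exact integral_congr_ae (Filter.Eventually.of_forall fun y => (h3 y).symm)
  rw [h1, h4, h2, finrank_euclideanSpace_fin, smul_eq_mul, abs_of_pos (by positivity),
    ← mul_assoc, mul_inv_cancel₀ (by positivity), one_mul]


variable (n : ℕ)

variable (n : ℕ)

def sfun (u : Fin n → ℝ) : ℝ := Real.sqrt (1 - ∑ k, u k ^ 2)

def ψ (i : Fin (n + 1)) (ε : ℝ) (u : Fin n → ℝ) : EuclideanSpace ℝ (Fin (n + 1)) :=
  WithLp.toLp 2 (i.insertNth (ε * sfun n u) u)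

def K : Set (Fin n → ℝ) := {u | ∑ k, u k ^ 2 ≤ 1 - 1 / (n + 1)}

lemma mem_K {u : Fin n → ℝ} (hu : u ∈ K n) : ∑ k, u k ^ 2 ≤ 1 - 1 / (n + 1) := hu

lemma K_coord {u : Fin n → ℝ} (hu : u ∈ K n) (k : Fin n) : |u k| ≤ 1 := by
  have h2 : u k ^ 2 ≤ ∑ j, u j ^ 2 :=
    Finset.single_le_sum (fun j _ => sq_nonneg (u j)) (Finset.mem_univ k)
  have h3 : (0:ℝ) < 1 / (n + 1) := by positivity
  have h4 := mem_K n hu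
  rw [abs_le]
  constructor <;> nlinarith

lemma sfun_lip {u v : Fin n → ℝ} (hu : u ∈ K n) (hv : v ∈ K n) :
    |sfun n u - sfun n v| ≤ (2 * n * Real.sqrt (n + 1)) * dist u v := by
  set a : ℝ := 1 - ∑ k, u k ^ 2 with hadef
  set b : ℝ := 1 - ∑ k, v k ^ 2 with hbdef
  have hc : (0:ℝ) < 1 / (n + 1) := by positivity
  have ha : 1 / (n + 1) ≤ a := by have := mem_K n hu; simp only [hadef]; linarith
  have hb : 1 / (n + 1) ≤ b := by have := mem_K n hv; simp only [hbdef]; linarith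
  have hab : |a - b| ≤ 2 * n * dist u v := by
    have h1 : a - b = ∑ k, (v k ^ 2 - u k ^ 2) := by
      rw [Finset.sum_sub_distrib, hadef, hbdef]; ring
    calc |a - b| = |∑ k, (v k ^ 2 - u k ^ 2)| := by rw [h1]
      _ ≤ ∑ k, |v k ^ 2 - u k ^ 2| := Finset.abs_sum_le_sum_abs _ _
      _ ≤ ∑ _k : Fin n, 2 * dist u v := by
          refine Finset.sum_le_sum fun k _ => ?_
          have h2 : v k ^ 2 - u k ^ 2 = (v k - u k) * (v k + u k) := by ring
          rw [h2, abs_mul]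
          have h3 : |v k - u k| ≤ dist u v := by
            rw [← Real.dist_eq, dist_comm]
            exact dist_le_pi_dist u v k
          have h4 : |v k + u k| ≤ 2 := by
            have := K_coord n hu k; have := K_coord n hv k
            rw [abs_le] at *
            constructor <;> [linarith; linarith]
          have h5 : (0:ℝ) ≤ |v k - u k| := abs_nonneg _
          nlinarith [dist_nonneg (x := u) (y := v)]
      _ = 2 * n * dist u v := by
          rw [Finset.sum_const, Finset.card_univ, Fintype.card_fin]
          push_cast; ring
  set s₁ := Real.sqrt a
  set s₂ := Real.sqrt b
  have hs₁ : Real.sqrt (1 / (n + 1)) ≤ s₁ := Real.sqrt_le_sqrt ha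
  have hs₂0 : 0 ≤ s₂ := Real.sqrt_nonneg _
  have hdiff : |s₁ - s₂| * (s₁ + s₂) = |a - b| := by
    have e1 : (s₁ - s₂) * (s₁ + s₂) = a - b := by
      have := Real.sq_sqrt (le_trans hc.le ha)
      have := Real.sq_sqrt (le_trans hc.le hb)
      nlinarith
    rw [← abs_of_nonneg (by positivity : (0:ℝ) ≤ s₁ + s₂), ← abs_mul, e1]
  have hprod : Real.sqrt (1 / (n + 1)) * Real.sqrt (n + 1) = 1 := by
    rw [← Real.sqrt_mul hc.le]
    rw [show (1 / ((n:ℝ) + 1)) * ((n:ℝ) + 1) = 1 by field_simp]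
    exact Real.sqrt_one
  have h6 : |s₁ - s₂| * Real.sqrt (1 / (n + 1)) ≤ |a - b| := by
    rw [← hdiff]
    refine mul_le_mul_of_nonneg_left ?_ (abs_nonneg _)
    linarith
  calc |s₁ - s₂| = |s₁ - s₂| * (Real.sqrt (1 / (n + 1)) * Real.sqrt (n + 1)) := by
        rw [hprod, mul_one]
    _ = (|s₁ - s₂| * Real.sqrt (1 / (n + 1))) * Real.sqrt (n + 1) := by ring
    _ ≤ |a - b| * Real.sqrt (n + 1) := by
        exact mul_le_mul_of_nonneg_right h6 (Real.sqrt_nonneg _)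
    _ ≤ (2 * n * dist u v) * Real.sqrt (n + 1) := by
        exact mul_le_mul_of_nonneg_right hab (Real.sqrt_nonneg _)
    _ = (2 * n * Real.sqrt (n + 1)) * dist u v := by ring

def Lc : ℝ := 2 * n * Real.sqrt (n + 1) + n + 1

lemma Lc_nonneg : 0 ≤ Lc n := by unfold Lc; positivity

lemma ψ_lip (i : Fin (n + 1)) (ε : ℝ) (hε : ε = 1 ∨ ε = -1) :
    LipschitzOnWith (Real.toNNReal (Lc n)) (ψ n i ε) (K n) := by
  refine LipschitzOnWith.of_dist_le_mul fun u hu v hv => ?_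
  rw [Real.coe_toNNReal _ (Lc_nonneg n)]
  have hε2 : ε ^ 2 = 1 := by rcases hε with rfl | rfl <;> norm_num
  set D := dist u v with hD
  have hD0 : 0 ≤ D := dist_nonneg
  have hcoord : ∀ k, dist (u k) (v k) ≤ D := fun k => dist_le_pi_dist u v k
  have hL1 := sfun_lip n hu hv
  set L₁ : ℝ := 2 * n * Real.sqrt (n + 1) with hL₁def
  have hL₁0 : 0 ≤ L₁ := by positivity
  rw [EuclideanSpace.dist_eq]
  have hsum : ∑ j, dist (ψ n i ε u j) (ψ n i ε v j) ^ 2 ≤ (Lc n * D) ^ 2 := by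
    rw [Fin.sum_univ_succAbove (fun j => dist (ψ n i ε u j) (ψ n i ε v j) ^ 2) i]
    have e1 : ψ n i ε u i = ε * sfun n u := by
      unfold ψ; exact Fin.insertNth_apply_same (α := fun _ => ℝ) i _ u
    have e2 : ψ n i ε v i = ε * sfun n v := by
      unfold ψ; exact Fin.insertNth_apply_same (α := fun _ => ℝ) i _ v
    have e3 : ∀ k, ψ n i ε u (i.succAbove k) = u k := by
      intro k; unfold ψ; exact Fin.insertNth_apply_succAbove (α := fun _ => ℝ) i _ u k
    have e4 : ∀ k, ψ n i ε v (i.succAbove k) = v k := by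
      intro k; unfold ψ; exact Fin.insertNth_apply_succAbove (α := fun _ => ℝ) i _ v k
    have t1 : dist (ψ n i ε u i) (ψ n i ε v i) ^ 2 ≤ (L₁ * D) ^ 2 := by
      rw [e1, e2, Real.dist_eq]
      have : ε * sfun n u - ε * sfun n v = ε * (sfun n u - sfun n v) := by ring
      rw [this, abs_mul]
      have hεabs : |ε| = 1 := by rcases hε with rfl | rfl <;> norm_num
      rw [hεabs, one_mul]
      have := abs_nonneg (sfun n u - sfun n v)
      nlinarith
    have t2 : ∑ k : Fin n, dist (ψ n i ε u (i.succAbove k)) (ψ n i ε v (i.succAbove k)) ^ 2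
        ≤ n * D ^ 2 := by
      calc ∑ k : Fin n, dist (ψ n i ε u (i.succAbove k)) (ψ n i ε v (i.succAbove k)) ^ 2
          ≤ ∑ _k : Fin n, D ^ 2 := by
            refine Finset.sum_le_sum fun k _ => ?_
            rw [e3, e4]
            have := hcoord k
            nlinarith [dist_nonneg (x := u k) (y := v k)]
        _ = n * D ^ 2 := by
            rw [Finset.sum_const, Finset.card_univ, Fintype.card_fin, nsmul_eq_mul]
    have hLc : L₁ ^ 2 + n ≤ Lc n ^ 2 := by
      have : Lc n = L₁ + n + 1 := rfl
      nlinarith [hL₁0, Nat.cast_nonneg (α := ℝ) n]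
    nlinarith [sq_nonneg D, sq_nonneg (L₁ * D), mul_le_mul_of_nonneg_right hLc (sq_nonneg D)]
  calc Real.sqrt (∑ j, dist (ψ n i ε u j) (ψ n i ε v j) ^ 2)
      ≤ Real.sqrt ((Lc n * D) ^ 2) := Real.sqrt_le_sqrt hsum
    _ = |Lc n * D| := Real.sqrt_sq_eq_abs _
    _ = Lc n * D := abs_of_nonneg (mul_nonneg (Lc_nonneg n) hD0)

lemma cover : sphere (0 : EuclideanSpace ℝ (Fin (n + 1))) 1 ⊆
    ⋃ i : Fin (n + 1), (ψ n i 1 '' K n ∪ ψ n i (-1) '' K n) := by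
  intro y hy
  have hnorm : ∑ j, y j ^ 2 = 1 := by
    have h1 : ‖y‖ = 1 := mem_sphere_zero_iff_norm.1 hy
    rw [EuclideanSpace.norm_eq] at h1
    have h2 := Real.sqrt_eq_one.1 h1
    simpa [Real.norm_eq_abs, sq_abs] using h2
  obtain ⟨i, -, hi⟩ := Finset.exists_max_image Finset.univ (fun j => |y j|)
    ⟨0, Finset.mem_univ _⟩
  have hyi : 1 / ((n:ℝ) + 1) ≤ y i ^ 2 := by
    have h3 : (1:ℝ) ≤ (n + 1) * y i ^ 2 := by
      have h4 : ∑ j, y j ^ 2 ≤ ∑ _j : Fin (n + 1), y i ^ 2 := by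
        refine Finset.sum_le_sum fun j _ => ?_
        have := hi j (Finset.mem_univ j)
        nlinarith [abs_nonneg (y j), abs_nonneg (y i), sq_abs (y j), sq_abs (y i)]
      rw [Finset.sum_const, Finset.card_univ, Fintype.card_fin, nsmul_eq_mul] at h4
      rw [hnorm] at h4
      push_cast at h4 ⊢
      linarith
    rw [div_le_iff₀ (by positivity)]
    linarith
  set u : Fin n → ℝ := i.removeNth y with hudef
  have hsum : ∑ k, u k ^ 2 = 1 - y i ^ 2 := by
    have h5 := Fin.sum_univ_succAbove (fun j => y j ^ 2) i
    rw [hnorm] at h5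
    have : ∑ k, u k ^ 2 = ∑ k : Fin n, y (i.succAbove k) ^ 2 := rfl
    rw [this]
    linarith
  have hK : u ∈ K n := by
    show ∑ k, u k ^ 2 ≤ 1 - 1 / (n + 1)
    rw [hsum]
    push_cast
    linarith
  have hs : sfun n u = |y i| := by
    rw [sfun, hsum]
    rw [show (1 : ℝ) - (1 - y i ^ 2) = y i ^ 2 by ring]
    exact Real.sqrt_sq_eq_abs _
  refine Set.mem_iUnion.2 ⟨i, ?_⟩
  by_cases hsign : 0 ≤ y i
  · refine Or.inl ⟨u, hK, ?_⟩
    show WithLp.toLp 2 (i.insertNth (1 * sfun n u) u) = y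
    rw [one_mul, hs, abs_of_nonneg hsign, hudef]
    exact congrArg (WithLp.toLp 2) (Fin.insertNth_self_removeNth i y.ofLp)
  · refine Or.inr ⟨u, hK, ?_⟩
    show WithLp.toLp 2 (i.insertNth (-1 * sfun n u) u) = y
    rw [hs, abs_of_neg (not_le.1 hsign), hudef]
    rw [show -1 * -y i = y i by ring]
    exact congrArg (WithLp.toLp 2) (Fin.insertNth_self_removeNth i y.ofLp)

lemma K_vol : μH[(n:ℝ)] (K n) < ⊤ := by
  have hpi : (μH[(n:ℝ)] : Measure (Fin n → ℝ)) = volume := by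
    have h := hausdorffMeasure_pi_real (ι := Fin n)
    rwa [Fintype.card_fin] at h
  rw [hpi]
  have hsub : K n ⊆ closedBall (0 : Fin n → ℝ) 1 := by
    intro u hu
    rw [mem_closedBall, dist_zero_right]
    rw [pi_norm_le_iff_of_nonneg zero_le_one]
    intro k
    rw [Real.norm_eq_abs]
    exact K_coord n hu k
  exact lt_of_le_of_lt (measure_mono hsub) measure_closedBall_lt_top

lemma sphere_hausdorff_lt_top :
    μH[(n:ℝ)] (sphere (0 : EuclideanSpace ℝ (Fin (n + 1))) 1) < ⊤ := by
  have himg : ∀ (i : Fin (n + 1)) (ε : ℝ), (ε = 1 ∨ ε = -1) →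
      μH[(n:ℝ)] (ψ n i ε '' K n) < ⊤ := by
    intro i ε hε
    refine lt_of_le_of_lt ((ψ_lip n i ε hε).hausdorffMeasure_image_le (by positivity)) ?_
    exact ENNReal.mul_lt_top (ENNReal.rpow_lt_top_of_nonneg (by positivity) ENNReal.coe_ne_top)
      (K_vol n)
  calc μH[(n:ℝ)] (sphere (0 : EuclideanSpace ℝ (Fin (n + 1))) 1)
      ≤ μH[(n:ℝ)] (⋃ i : Fin (n + 1), (ψ n i 1 '' K n ∪ ψ n i (-1) '' K n)) :=
        measure_mono (cover n)
    _ ≤ ∑' i : Fin (n + 1), μH[(n:ℝ)] (ψ n i 1 '' K n ∪ ψ n i (-1) '' K n) :=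
        measure_iUnion_le _
    _ < ⊤ := by
        rw [tsum_fintype]
        refine ENNReal.sum_lt_top.2 fun i _ => ?_
        refine lt_of_le_of_lt (measure_union_le _ _) ?_
        exact ENNReal.add_lt_top.2 ⟨himg i 1 (Or.inl rfl), himg i (-1) (Or.inr rfl)⟩

lemma sphere_scaled (x : EuclideanSpace ℝ (Fin (n + 1))) {r : ℝ} (hr : 0 < r) :
    μH[(n:ℝ)] (sphere x r) ≤ ENNReal.ofReal (r ^ n) *
      μH[(n:ℝ)] (sphere (0 : EuclideanSpace ℝ (Fin (n + 1))) 1) := by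
  set T : EuclideanSpace ℝ (Fin (n + 1)) → EuclideanSpace ℝ (Fin (n + 1)) :=
    fun y => x + r • y with hT
  have hlip : LipschitzWith (Real.toNNReal r) T := by
    refine LipschitzWith.of_dist_le_mul fun y z => ?_
    rw [Real.coe_toNNReal _ hr.le, hT]
    simp only
    rw [dist_add_left, dist_smul₀, Real.norm_of_nonneg hr.le]
  have himg : T '' sphere (0 : EuclideanSpace ℝ (Fin (n + 1))) 1 = sphere x r := by
    ext z
    constructor
    · rintro ⟨y, hy, rfl⟩
      have h1 : ‖y‖ = 1 := mem_sphere_zero_iff_norm.1 hy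
      rw [mem_sphere, hT]
      simp only
      rw [dist_eq_norm, add_sub_cancel_left, norm_smul, Real.norm_of_nonneg hr.le, h1, mul_one]
    · intro hz
      refine ⟨r⁻¹ • (z - x), ?_, ?_⟩
      · rw [mem_sphere_zero_iff_norm, norm_smul, Real.norm_of_nonneg (by positivity)]
        rw [show ‖z - x‖ = dist z x from (dist_eq_norm _ _).symm, mem_sphere.1 hz]
        field_simp
      · rw [hT]
        simp only
        rw [smul_smul, mul_inv_cancel₀ hr.ne', one_smul]
        abel
  calc μH[(n:ℝ)] (sphere x r) = μH[(n:ℝ)] (T '' sphere (0:EuclideanSpace ℝ (Fin (n+1))) 1) := by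
        rw [himg]
    _ ≤ (Real.toNNReal r : ℝ≥0∞) ^ (n:ℝ) * μH[(n:ℝ)] (sphere (0:EuclideanSpace ℝ (Fin (n+1))) 1) :=
        hlip.hausdorffMeasure_image_le (by positivity) _
    _ = ENNReal.ofReal (r ^ n) * μH[(n:ℝ)] (sphere (0:EuclideanSpace ℝ (Fin (n+1))) 1) := by
        congr 1
        rw [ENNReal.rpow_natCast, ENNReal.ofReal_pow hr.le]
        rfl


end PolyTrace

/-- Discrete trace inequality for polynomials on spheres. -/
theorem polynomial_trace_inequality_sphere
    (d ℓ : ℕ) (hd : 1 ≤ d) :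
    ∃ C : ℝ, 0 < C ∧
      ∀ (p : MvPolynomial (Fin d) ℝ), p.totalDegree ≤ ℓ →
        ∀ (x : EuclideanSpace ℝ (Fin d)) (r : ℝ), 0 < r →
          (∫ z in sphere x r, (MvPolynomial.eval (fun i => z i) p) ^ 2
              ∂(MeasureTheory.Measure.hausdorffMeasure ((d : ℝ) - 1))) ≤
            C * r⁻¹ * ∫ z in ball x r, (MvPolynomial.eval (fun i => z i) p) ^ 2 := by
  obtain ⟨n, rfl⟩ : ∃ n, d = n + 1 := ⟨d - 1, (Nat.succ_pred_eq_of_pos hd).symm⟩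
  have hexp : ((n + 1 : ℕ) : ℝ) - 1 = (n : ℝ) := by push_cast; ring
  obtain ⟨C₀, hC₀, hB⟩ := PolyTrace.unit_poly_bound (n + 1) ℓ
  set A : ℝ := (μH[(n : ℝ)] (sphere (0 : EuclideanSpace ℝ (Fin (n + 1))) 1)).toReal with hA
  have hA0 : 0 ≤ A := ENNReal.toReal_nonneg
  refine ⟨C₀ * A + 1, by positivity, ?_⟩
  intro p hp x r hr
  rw [hexp]
  set G : EuclideanSpace ℝ (Fin (n + 1)) → ℝ :=
    fun z => (MvPolynomial.eval (fun i => z i) p) ^ 2 with hG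
  have hGc : Continuous G := (PolyTrace.contEval (n + 1) p).pow 2
  obtain ⟨q, hq, hqe⟩ := PolyTrace.exists_subst (n + 1) ℓ p hp x r
  have hqG : ∀ y : EuclideanSpace ℝ (Fin (n + 1)),
      G (x + r • y) = (MvPolynomial.eval (fun i => y i) q) ^ 2 := by
    intro y
    have hco : (fun i => (x + r • y) i) = fun i => x i + r * y i := rfl
    rw [hG]
    simp only
    rw [hco, ← hqe y]
  set J : ℝ := ∫ y in ball (0 : EuclideanSpace ℝ (Fin (n + 1))) 1,
    (MvPolynomial.eval (fun i => y i) q) ^ 2 with hJ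
  set I : ℝ := ∫ z in ball x r, G z with hI
  have hIJ : I = r ^ (n + 1) * J := by
    rw [hI, PolyTrace.ball_cov (n + 1) G x hr, hJ]
    congr 1
    exact integral_congr_ae (Filter.Eventually.of_forall fun y => hqG y)
  have hJ0 : 0 ≤ J := integral_nonneg fun y => sq_nonneg _
  have hI0 : 0 ≤ I := integral_nonneg fun z => sq_nonneg _
  have hsup : ∀ z ∈ sphere x r, G z ≤ C₀ * J := by
    intro z hz
    have hz' : dist z x = r := mem_sphere.1 hz
    set y : EuclideanSpace ℝ (Fin (n + 1)) := r⁻¹ • (z - x) with hy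
    have hy1 : y ∈ closedBall (0 : EuclideanSpace ℝ (Fin (n + 1))) 1 := by
      rw [mem_closedBall, dist_zero_right, hy, norm_smul, Real.norm_of_nonneg (by positivity)]
      rw [show ‖z - x‖ = dist z x from (dist_eq_norm _ _).symm, hz']
      rw [inv_mul_cancel₀ hr.ne']
    have hzy : z = x + r • y := by
      rw [hy, smul_smul, mul_inv_cancel₀ hr.ne', one_smul]
      abel
    rw [hzy, hqG y]
    exact hB q hq y hy1
  have hμ1 : μH[(n : ℝ)] (sphere x r) ≤ ENNReal.ofReal (r ^ n) *
      μH[(n : ℝ)] (sphere (0 : EuclideanSpace ℝ (Fin (n + 1))) 1) :=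
    PolyTrace.sphere_scaled n x hr
  have hfin : μH[(n : ℝ)] (sphere x r) ≠ ⊤ :=
    (lt_of_le_of_lt hμ1 (ENNReal.mul_lt_top ENNReal.ofReal_lt_top
      (PolyTrace.sphere_hausdorff_lt_top n))).ne
  have htr : (μH[(n : ℝ)] (sphere x r)).toReal ≤ r ^ n * A := by
    have h1 := ENNReal.toReal_mono
      (ENNReal.mul_lt_top ENNReal.ofReal_lt_top (PolyTrace.sphere_hausdorff_lt_top n)).ne hμ1
    rwa [ENNReal.toReal_mul, ENNReal.toReal_ofReal (by positivity), ← hA] at h1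
  have hLHS : (∫ z in sphere x r, G z ∂(μH[(n : ℝ)])) ≤
      (C₀ * J) * (μH[(n : ℝ)] (sphere x r)).toReal := by
    rw [integral_eq_lintegral_of_nonneg_ae
      (Filter.Eventually.of_forall fun z => sq_nonneg _) hGc.aestronglyMeasurable]
    have hlin : (∫⁻ z in sphere x r, ENNReal.ofReal (G z) ∂μH[(n : ℝ)]) ≤
        ENNReal.ofReal (C₀ * J) * μH[(n : ℝ)] (sphere x r) := by
      calc ∫⁻ z in sphere x r, ENNReal.ofReal (G z) ∂μH[(n : ℝ)]
          ≤ ∫⁻ _z in sphere x r, ENNReal.ofReal (C₀ * J) ∂μH[(n : ℝ)] :=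
            lintegral_mono_ae ((ae_restrict_iff' (isClosed_sphere.measurableSet)).2
              (Filter.Eventually.of_forall fun z hz => ENNReal.ofReal_le_ofReal (hsup z hz)))
        _ = ENNReal.ofReal (C₀ * J) * μH[(n : ℝ)] (sphere x r) := by
            rw [lintegral_const, Measure.restrict_apply_univ]
    calc (∫⁻ z in sphere x r, ENNReal.ofReal (G z) ∂μH[(n : ℝ)]).toReal
        ≤ (ENNReal.ofReal (C₀ * J) * μH[(n : ℝ)] (sphere x r)).toReal :=
          ENNReal.toReal_mono (ENNReal.mul_lt_top ENNReal.ofReal_lt_top hfin.lt_top).ne hlin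
      _ = (C₀ * J) * (μH[(n : ℝ)] (sphere x r)).toReal := by
          rw [ENNReal.toReal_mul, ENNReal.toReal_ofReal (by positivity)]
  have hrI : r⁻¹ * I = r ^ n * J := by
    rw [hIJ]
    field_simp
    ring
  calc (∫ z in sphere x r, G z ∂(μH[(n : ℝ)])) ≤
        (C₀ * J) * (μH[(n : ℝ)] (sphere x r)).toReal := hLHS
    _ ≤ (C₀ * J) * (r ^ n * A) := by
        refine mul_le_mul_of_nonneg_left htr (by positivity)
    _ = (C₀ * A) * (r⁻¹ * I) := by rw [hrI]; ring
    _ ≤ (C₀ * A + 1) * r⁻¹ * I := by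
        have h9 : 0 ≤ r⁻¹ * I := mul_nonneg (inv_nonneg.2 hr.le) hI0
        nlinarith
end
end

section
/- For every dimension d ≥ 1 and every degree ℓ ∈ ℕ, there exists a constant C > 0, depending only on d and ℓ, such that for every d-variate real polynomial p of total degree at most ℓ, every x ∈ ℝ^d, every r > 0, every unit vector n ∈ ℝ^d and every c ∈ ℝ, letting F := {z ∈ closedBall(x,r) : ⟪z,n⟫ = c} be the intersection of the closed ball with an affine hyperplane, one has ∫_F p(z)² dμ^{d−1}(z) ≤ C r⁻¹ ∫_{B(x,r)} p(z)² dz. (Discrete trace inequality for polynomials on flat faces cutting through a ball, the prototype of the trace bound on the flat sub-faces ∂S^i of mesh cells in the unfitted HHO analysis.) -/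
open MeasureTheory Metric MvPolynomial Module Pointwise
open scoped ENNReal NNReal

noncomputable def pev (d : ℕ) (p : MvPolynomial (Fin d) ℝ) (z : EuclideanSpace ℝ (Fin d)) : ℝ :=
  MvPolynomial.eval (fun i => z i) p





-- evaluation as function on EuclideanSpace
lemma pev_continuous {d : ℕ} (p : MvPolynomial (Fin d) ℝ) : Continuous (pev d p) := by
  exact (MvPolynomial.continuous_eval (p := p)).comp (PiLp.continuous_ofLp 2 (fun _ : Fin d => ℝ))

lemma pev_analytic {d : ℕ} (p : MvPolynomial (Fin d) ℝ) :
    AnalyticOnNhd ℝ (pev d p) Set.univ := by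
  have h : ∀ i : Fin d, AnalyticOnNhd ℝ (fun z : EuclideanSpace ℝ (Fin d) => z i) Set.univ := by
    intro i
    exact fun z _ => (EuclideanSpace.proj i : EuclideanSpace ℝ (Fin d) →L[ℝ] ℝ).analyticAt z
  have := AnalyticOnNhd.aeval_mvPolynomial (𝕜 := ℝ) (f := fun (z : EuclideanSpace ℝ (Fin d)) i => z i)
    (s := Set.univ) h p
  have heq : ∀ z : EuclideanSpace ℝ (Fin d), (MvPolynomial.aeval (fun i => z i) p : ℝ)
      = MvPolynomial.eval (fun i => z i) p := fun z => by
    rw [← MvPolynomial.coe_aeval_eq_eval]; rfl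
  show AnalyticOnNhd ℝ (fun z : EuclideanSpace ℝ (Fin d) => MvPolynomial.eval (fun i => z i) p) Set.univ
  simpa [heq] using this

lemma pev_zero_on_ball {d : ℕ} (p : MvPolynomial (Fin d) ℝ)
    (h : ∀ z ∈ ball (0 : EuclideanSpace ℝ (Fin d)) 1, pev d p z = 0) : p = 0 := by
  have hz : Set.EqOn (pev d p) 0 Set.univ := by
    apply (pev_analytic p).eqOn_zero_of_preconnected_of_eventuallyEq_zero
      isPreconnected_univ (Set.mem_univ (0 : EuclideanSpace ℝ (Fin d)))
      (by
        filter_upwards [ball_mem_nhds (0 : EuclideanSpace ℝ (Fin d)) one_pos] with z hzball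
        exact h z hzball)
  apply MvPolynomial.funext
  intro x
  have := hz (Set.mem_univ ((WithLp.equiv 2 (Fin d → ℝ)).symm x))
  simpa [pev] using this


lemma totalDegree_aeval_affine {d : ℕ} (p : MvPolynomial (Fin d) ℝ) (a b : Fin d → ℝ) :
    (MvPolynomial.aeval (fun i => MvPolynomial.C (a i) * MvPolynomial.X i
        + MvPolynomial.C (b i)) p).totalDegree ≤ p.totalDegree := by
  set f : Fin d → MvPolynomial (Fin d) ℝ :=
    fun i => MvPolynomial.C (a i) * MvPolynomial.X i + MvPolynomial.C (b i) with hf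
  have hdeg : ∀ i, (f i).totalDegree ≤ 1 := by
    intro i
    refine (totalDegree_add _ _).trans ?_
    simp only [max_le_iff]
    constructor
    · exact (totalDegree_mul _ _).trans (by simpa using (totalDegree_X i).le)
    · simp
  -- write p as a sum of monomials
  conv_lhs => rw [p.as_sum]
  rw [map_sum]
  refine (totalDegree_finset_sum _ _).trans ?_
  refine Finset.sup_le fun m hm => ?_
  have : (MvPolynomial.aeval f) (monomial m (coeff m p))
      = MvPolynomial.C (coeff m p) * ∏ i ∈ m.support, f i ^ m i := by
    rw [monomial_eq]
    simp only [map_mul, algHom_C, Finsupp.prod]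
    rw [map_prod]
    simp [map_pow]
  rw [this]
  refine (totalDegree_mul _ _).trans ?_
  have h2 : (∏ i ∈ m.support, f i ^ m i).totalDegree ≤ ∑ i ∈ m.support, m i := by
    refine (totalDegree_finset_prod _ _).trans ?_
    refine Finset.sum_le_sum fun i _ => ?_
    exact (totalDegree_pow _ _).trans (by
      calc m i * (f i).totalDegree ≤ m i * 1 := Nat.mul_le_mul_left _ (hdeg i)
      _ = m i := by ring)
  have h3 : ∑ i ∈ m.support, m i ≤ p.totalDegree := MvPolynomial.le_totalDegree hm
  simpa [totalDegree_C] using h2.trans h3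


lemma pev_add {d : ℕ} (p q : MvPolynomial (Fin d) ℝ) (z : EuclideanSpace ℝ (Fin d)) :
    pev d (p + q) z = pev d p z + pev d q z := by simp [pev]

lemma pev_smul {d : ℕ} (a : ℝ) (p : MvPolynomial (Fin d) ℝ) (z : EuclideanSpace ℝ (Fin d)) :
    pev d (a • p) z = a * pev d p z := by simp [pev, MvPolynomial.smul_eval]

lemma integrableOn_ball_of_continuous {d : ℕ} {f : EuclideanSpace ℝ (Fin d) → ℝ}
    (hf : Continuous f) : IntegrableOn f (ball (0 : EuclideanSpace ℝ (Fin d)) 1) := by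
  exact ((hf.continuousOn).integrableOn_compact (isCompact_closedBall _ _)).mono_set
    ball_subset_closedBall

set_option maxHeartbeats 1000000 in
lemma unit_inverse_estimate (d ℓ : ℕ) :
    ∃ C₀ : ℝ, 0 < C₀ ∧ ∀ p : MvPolynomial (Fin d) ℝ, p.totalDegree ≤ ℓ →
      ∀ z ∈ closedBall (0 : EuclideanSpace ℝ (Fin d)) 1,
        (pev d p z)^2 ≤ C₀ * ∫ w in ball (0 : EuclideanSpace ℝ (Fin d)) 1, (pev d p w)^2 := by
  classical
  set V := MvPolynomial.restrictTotalDegree (Fin d) ℝ ℓ with hV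
  haveI : Module.Finite ℝ V := inferInstance
  haveI : Module.Free ℝ V := Module.Free.of_divisionRing ℝ V
  set N := Module.finrank ℝ V with hN
  set b : Basis (Fin N) ℝ V := Module.finBasis ℝ V with hb
  set g : EuclideanSpace ℝ (Fin d) → (Fin N → ℝ) → ℝ :=
    fun z v => ∑ i, v i * pev d ((b i : V) : MvPolynomial (Fin d) ℝ) z with hg
  have hgl : ∀ (v : Fin N → ℝ) (z : EuclideanSpace ℝ (Fin d)),
      pev d ((b.equivFun.symm v : V) : MvPolynomial (Fin d) ℝ) z = g z v := by
    intro v z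
    rw [Basis.equivFun_symm_apply]
    rw [show ((∑ i, v i • b i : V) : MvPolynomial (Fin d) ℝ)
        = ∑ i, v i • ((b i : V) : MvPolynomial (Fin d) ℝ) by
      push_cast; rfl]
    rw [show pev d (∑ i, v i • ((b i : V) : MvPolynomial (Fin d) ℝ)) z
        = ∑ i, pev d (v i • ((b i : V) : MvPolynomial (Fin d) ℝ)) z by
      unfold pev; exact map_sum (MvPolynomial.eval _) _ _]
    simp [pev_smul, hg]
  -- continuity of g in each/both variables
  have hgc : Continuous (fun zv : (EuclideanSpace ℝ (Fin d)) × (Fin N → ℝ) => g zv.1 zv.2) := by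
    apply continuous_finset_sum
    intro i _
    exact ((continuous_apply i).comp continuous_snd).mul
      ((pev_continuous _).comp continuous_fst)
  have hgcv : ∀ v, Continuous (fun z => g z v) :=
    fun v => hgc.comp (continuous_id.prodMk continuous_const)
  -- the quadratic form
  set I : (Fin N → ℝ) → ℝ :=
    fun v => ∫ w in ball (0 : EuclideanSpace ℝ (Fin d)) 1, (g w v)^2 with hI
  have hIQ : ∀ v, I v = ∑ i, ∑ j, v i * v j *
      ∫ w in ball (0 : EuclideanSpace ℝ (Fin d)) 1,
        pev d ((b i : V) : MvPolynomial (Fin d) ℝ) w *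
          pev d ((b j : V) : MvPolynomial (Fin d) ℝ) w := by
    intro v
    have hexp : ∀ w, (g w v)^2 = ∑ i, ∑ j, v i * v j *
        (pev d ((b i : V) : MvPolynomial (Fin d) ℝ) w *
          pev d ((b j : V) : MvPolynomial (Fin d) ℝ) w) := by
      intro w
      rw [hg, sq, Finset.sum_mul_sum]
      congr 1; ext i; congr 1; ext j; ring
    rw [hI]
    simp only [hexp]
    rw [integral_finset_sum]
    · refine Finset.sum_congr rfl fun i _ => ?_
      rw [integral_finset_sum]
      · refine Finset.sum_congr rfl fun j _ => ?_
        exact MeasureTheory.integral_const_mul _ _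
      · intro j _
        exact (integrableOn_ball_of_continuous
          (((pev_continuous _).mul (pev_continuous _)))).const_mul _
    · intro i _
      apply integrable_finset_sum
      intro j _
      exact (integrableOn_ball_of_continuous
        (((pev_continuous _).mul (pev_continuous _)))).const_mul _
  have hIc : Continuous I := by
    have : Continuous fun v : Fin N → ℝ => ∑ i, ∑ j, v i * v j *
        ∫ w in ball (0 : EuclideanSpace ℝ (Fin d)) 1,
          pev d ((b i : V) : MvPolynomial (Fin d) ℝ) w *
            pev d ((b j : V) : MvPolynomial (Fin d) ℝ) w := by
      apply continuous_finset_sum; intro i _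
      apply continuous_finset_sum; intro j _
      exact (((continuous_apply i).mul (continuous_apply j)).mul continuous_const)
    convert this using 1
    funext v; exact hIQ v
  have hInonneg : ∀ v, 0 ≤ I v :=
    fun v => setIntegral_nonneg measurableSet_ball (fun w _ => sq_nonneg _)
  have hIpos : ∀ v, v ≠ 0 → 0 < I v := by
    intro v hv
    rcases lt_or_eq_of_le (hInonneg v) with h | h
    · exact h
    exfalso
    have hzero : ∀ w ∈ ball (0 : EuclideanSpace ℝ (Fin d)) 1, g w v = 0 := by
      have hae : (fun w => (g w v)^2) =ᵐ[volume.restrict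
          (ball (0 : EuclideanSpace ℝ (Fin d)) 1)] 0 := by
        rw [← MeasureTheory.setIntegral_eq_zero_iff_of_nonneg_ae]
        · exact h.symm
        · exact Filter.Eventually.of_forall (fun w => sq_nonneg _)
        · exact (integrableOn_ball_of_continuous ((hgcv v).pow 2))
      have := MeasureTheory.Measure.eqOn_open_of_ae_eq hae isOpen_ball
        ((hgcv v).pow 2).continuousOn continuousOn_const
      intro w hw
      have h2 := this hw
      simpa using pow_eq_zero_iff (n := 2) (by norm_num) |>.mp (by simpa using h2)
    have hp0 : ((b.equivFun.symm v : V) : MvPolynomial (Fin d) ℝ) = 0 := by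
      apply pev_zero_on_ball
      intro z hz
      rw [hgl v z]
      exact hzero z hz
    have h4 : b.equivFun.symm v = 0 := by
      exact_mod_cast Subtype.ext hp0
    have h5 := congrArg b.equivFun h4
    rw [LinearEquiv.apply_symm_apply, map_zero] at h5
    exact hv h5
  -- main claim on coefficient vectors
  have claim : ∃ C₀ : ℝ, 0 < C₀ ∧ ∀ v : Fin N → ℝ,
      ∀ z ∈ closedBall (0 : EuclideanSpace ℝ (Fin d)) 1, (g z v)^2 ≤ C₀ * I v := by
    rcases isEmpty_or_nonempty (Fin N) with hNe | hNe
    · refine ⟨1, one_pos, fun v z hz => ?_⟩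
      have h1 : g z v = 0 := by simp [hg]
      have h2 : I v = 0 := by rw [hIQ]; simp
      simp [h1, h2]
    · have hSne : (sphere (0 : Fin N → ℝ) 1).Nonempty := by
        rw [NormedSpace.sphere_nonempty]; norm_num
      obtain ⟨u₀, hu₀, hmin⟩ := (isCompact_sphere (0 : Fin N → ℝ) 1).exists_isMinOn
        hSne hIc.continuousOn
      have hu₀pos : 0 < I u₀ := by
        apply hIpos
        intro h0
        rw [h0] at hu₀
        simp at hu₀
      have hKne : (closedBall (0 : EuclideanSpace ℝ (Fin d)) 1 ×ˢ
          sphere (0 : Fin N → ℝ) 1).Nonempty :=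
        ⟨(0, hSne.choose), by
          refine Set.mk_mem_prod (mem_closedBall_self (by norm_num)) hSne.choose_spec⟩
      obtain ⟨⟨z₁, u₁⟩, hzu₁, hmax⟩ := ((isCompact_closedBall (0 : EuclideanSpace ℝ (Fin d)) 1).prod
        (isCompact_sphere (0 : Fin N → ℝ) 1)).exists_isMaxOn hKne
        ((hgc.pow 2).continuousOn)
      set M := (g z₁ u₁)^2 with hM
      have hMnn : 0 ≤ M := sq_nonneg _
      refine ⟨M / I u₀ + 1, by positivity, fun v z hz => ?_⟩
      by_cases hv : v = 0
      · subst hv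
        have h1 : g z 0 = 0 := by simp [hg]
        have h2 : I 0 = 0 := by
          rw [hI]
          have : ∀ w, (g w (0 : Fin N → ℝ))^2 = 0 := by intro w; simp [hg]
          simp [this]
        simp [h1, h2]
      · set t := ‖v‖ with ht
        have htpos : 0 < t := norm_pos_iff.mpr hv
        set u := t⁻¹ • v with hu
        have huS : u ∈ sphere (0 : Fin N → ℝ) 1 := by
          simp only [hu, mem_sphere_iff_norm, sub_zero, norm_smul, norm_inv,
            Real.norm_eq_abs, abs_of_pos htpos]
          have hvt : ‖v‖ = t := ht.symm
          rw [hvt]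
          exact inv_mul_cancel₀ htpos.ne'
        have hgv : ∀ w, g w v = t * g w u := by
          intro w
          rw [hg]
          simp only [hu, Pi.smul_apply, smul_eq_mul, Finset.mul_sum]
          refine Finset.sum_congr rfl fun i _ => ?_
          field_simp
        have hIv : I v = t^2 * I u := by
          simp only [hI]
          rw [← MeasureTheory.integral_const_mul]
          congr 1; funext w
          rw [hgv w]; ring
        have step1 : (g z u)^2 ≤ M := hmax (Set.mk_mem_prod hz huS)
        have step2 : M ≤ (M / I u₀) * I u := by
          have h1 : I u₀ ≤ I u := hmin huS
          calc M = (M / I u₀) * I u₀ := by field_simp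
          _ ≤ (M / I u₀) * I u := by
            apply mul_le_mul_of_nonneg_left h1 (by positivity)
        calc (g z v)^2 = t^2 * (g z u)^2 := by rw [hgv]; ring
        _ ≤ t^2 * ((M / I u₀) * I u) := by
          apply mul_le_mul_of_nonneg_left (step1.trans step2) (by positivity)
        _ = (M / I u₀) * I v := by rw [hIv]; ring
        _ ≤ (M / I u₀ + 1) * I v := by
          have := hInonneg v
          nlinarith
  obtain ⟨C₀, hC₀, hclaim⟩ := claim
  refine ⟨C₀, hC₀, fun p hp z hz => ?_⟩
  have hpV : p ∈ V := (MvPolynomial.mem_restrictTotalDegree _ _ _).mpr hp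
  set v := b.equivFun ⟨p, hpV⟩ with hv
  have hvp : ((b.equivFun.symm v : V) : MvPolynomial (Fin d) ℝ) = p := by
    rw [hv, LinearEquiv.symm_apply_apply]
  have hpev : ∀ w, pev d p w = g w v := by
    intro w; rw [← hvp, hgl]
  have := hclaim v z hz
  rw [hpev z]
  convert this using 2
  rw [hI]
  congr 1; funext w; rw [hpev w]


lemma scaled_inverse_estimate (d ℓ : ℕ) :
    ∃ C₀ : ℝ, 0 < C₀ ∧ ∀ p : MvPolynomial (Fin d) ℝ, p.totalDegree ≤ ℓ →
      ∀ (x : EuclideanSpace ℝ (Fin d)) (r : ℝ), 0 < r →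
      ∀ z ∈ closedBall x r,
        (pev d p z)^2 ≤ C₀ * (r^d)⁻¹ * ∫ w in ball x r, (pev d p w)^2 := by
  obtain ⟨C₀, hC₀, h⟩ := unit_inverse_estimate d ℓ
  refine ⟨C₀, hC₀, fun p hp x r hr z hz => ?_⟩
  set q : MvPolynomial (Fin d) ℝ :=
    MvPolynomial.aeval (fun i => MvPolynomial.C r * MvPolynomial.X i
      + MvPolynomial.C (x i)) p with hqdef
  have hqdeg : q.totalDegree ≤ ℓ := (totalDegree_aeval_affine p _ _).trans hp
  have hqev : ∀ w : EuclideanSpace ℝ (Fin d), pev d q w = pev d p (x + r • w) := by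
    intro w
    rw [pev, hqdef, MvPolynomial.aeval_eq_bind₁]
    have : MvPolynomial.eval (fun i => w i) = MvPolynomial.eval₂Hom (RingHom.id ℝ)
        (fun i => w i) := rfl
    rw [this, MvPolynomial.eval₂Hom_bind₁]
    rw [pev]
    have harg : (fun i => MvPolynomial.eval₂Hom (RingHom.id ℝ) (fun i => w i)
        (MvPolynomial.C r * MvPolynomial.X i + MvPolynomial.C (x i)))
        = fun i => (x + r • w) i := by
      funext i
      simp [PiLp.add_apply, PiLp.smul_apply, smul_eq_mul]
      ring
    rw [harg]
    rfl
  -- the point in the unit ball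
  set w : EuclideanSpace ℝ (Fin d) := r⁻¹ • (z - x) with hwdef
  have hzw : x + r • w = z := by
    rw [hwdef, smul_smul, mul_inv_cancel₀ hr.ne', one_smul]
    abel
  have hw1 : w ∈ closedBall (0 : EuclideanSpace ℝ (Fin d)) 1 := by
    rw [mem_closedBall, dist_zero_right, hwdef, norm_smul, norm_inv, Real.norm_eq_abs,
      abs_of_pos hr]
    rw [mem_closedBall, dist_eq_norm] at hz
    calc r⁻¹ * ‖z - x‖ ≤ r⁻¹ * r := by
          apply mul_le_mul_of_nonneg_left hz (by positivity)
    _ = 1 := inv_mul_cancel₀ hr.ne'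
  have hmain := h q hqdeg w hw1
  rw [hqev w, hzw] at hmain
  -- change of variables in the integral
  have hint : ∫ w in ball (0 : EuclideanSpace ℝ (Fin d)) 1, (pev d q w)^2
      = (r^d)⁻¹ * ∫ y in ball x r, (pev d p y)^2 := by
    have h1 : ∀ w : EuclideanSpace ℝ (Fin d), (pev d q w)^2
        = (fun y => (pev d p (x + y))^2) (r • w) := by
      intro w; rw [hqev w]
    calc ∫ w in ball (0 : EuclideanSpace ℝ (Fin d)) 1, (pev d q w)^2
        = ∫ w in ball (0 : EuclideanSpace ℝ (Fin d)) 1,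
            (fun y => (pev d p (x + y))^2) (r • w) := by
          congr 1; funext w; exact h1 w
      _ = |(r ^ Module.finrank ℝ (EuclideanSpace ℝ (Fin d)))⁻¹| •
            ∫ y in r • ball (0 : EuclideanSpace ℝ (Fin d)) 1, (pev d p (x + y))^2 :=
          MeasureTheory.Measure.setIntegral_comp_smul volume (fun y => (pev d p (x + y))^2) _ hr.ne'
      _ = (r^d)⁻¹ * ∫ y in ball (0 : EuclideanSpace ℝ (Fin d)) r, (pev d p (x + y))^2 := by
          rw [finrank_euclideanSpace_fin]
          rw [smul_ball hr.ne' (0 : EuclideanSpace ℝ (Fin d)) 1]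
          rw [abs_of_pos (by positivity)]
          simp [Real.norm_eq_abs, abs_of_pos hr, smul_eq_mul]
      _ = (r^d)⁻¹ * ∫ y in ball x r, (pev d p y)^2 := by
          congr 1
          have hpre : (fun y => x + y) ⁻¹' (ball x r) = ball (0 : EuclideanSpace ℝ (Fin d)) r := by
            ext y
            simp [mem_ball, dist_eq_norm]
          rw [← hpre]
          exact (measurePreserving_add_left volume x).setIntegral_preimage_emb
            (MeasurableEquiv.addLeft x).measurableEmbedding
            (fun y => (pev d p y)^2) (ball x r)
  rw [hint] at hmain
  calc (pev d p z)^2 ≤ C₀ * ((r^d)⁻¹ * ∫ y in ball x r, (pev d p y)^2) := hmain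
  _ = C₀ * (r^d)⁻¹ * ∫ w in ball x r, (pev d p w)^2 := by ring


lemma hausdorff_slice_bound (d : ℕ) (hd : 1 ≤ d) :
    ∃ K : ℝ≥0∞, K ≠ ∞ ∧ ∀ (x : EuclideanSpace ℝ (Fin d)) (r : ℝ), 0 < r →
      ∀ (n : EuclideanSpace ℝ (Fin d)), ‖n‖ = 1 → ∀ c : ℝ,
      (MeasureTheory.Measure.hausdorffMeasure ((d : ℝ) - 1) :
          Measure (EuclideanSpace ℝ (Fin d)))
        {z : EuclideanSpace ℝ (Fin d) | z ∈ closedBall x r ∧ (inner ℝ z n : ℝ) = c}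
        ≤ K * ENNReal.ofReal (r ^ (d-1)) := by
  classical
  set m := d - 1 with hm
  have hdm : (d : ℝ) - 1 = (m : ℝ) := by
    rw [hm]
    push_cast [Nat.cast_sub hd]
    ring
  have hmnn : (0:ℝ) ≤ (d:ℝ) - 1 := by rw [hdm]; positivity
  set κ : ℝ≥0 := (Fintype.card (Fin m) : ℝ≥0) ^ ((1:ℝ≥0∞) / 2).toReal with hκ
  refine ⟨(κ : ℝ≥0∞) ^ ((m:ℝ)) * ENNReal.ofReal (4^m), ?_, ?_⟩
  · apply ENNReal.mul_ne_top
    · exact (ENNReal.rpow_lt_top_of_nonneg (by positivity) ENNReal.coe_ne_top).ne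
    · exact ENNReal.ofReal_ne_top
  intro x r hr n hn c
  set F := {z : EuclideanSpace ℝ (Fin d) | z ∈ closedBall x r ∧ (inner ℝ z n : ℝ) = c} with hF
  rcases Set.eq_empty_or_nonempty F with hFe | ⟨z₀, hz₀⟩
  · rw [hFe]
    simp
  have hn0 : n ≠ 0 := by
    intro h; rw [h] at hn; simp at hn
  haveI : Fact (finrank ℝ (EuclideanSpace ℝ (Fin d)) = m + 1) :=
    ⟨by rw [finrank_euclideanSpace_fin]; omega⟩
  set U := (ℝ ∙ n)ᗮ with hU
  set B : OrthonormalBasis (Fin m) ℝ U :=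
    OrthonormalBasis.fromOrthogonalSpanSingleton m hn0 with hB
  -- the parametrization of the hyperplane through 0
  set ψ : (Fin m → ℝ) → EuclideanSpace ℝ (Fin d) :=
    fun v => (B.repr.symm ((WithLp.equiv 2 (Fin m → ℝ)).symm v) : EuclideanSpace ℝ (Fin d))
    with hψ
  have hψlip : LipschitzWith κ ψ := by
    have h0 : LipschitzWith ((Fintype.card (Fin m) : ℝ≥0) ^ ((1:ℝ≥0∞) / 2).toReal)
        ((WithLp.equiv 2 (Fin m → ℝ)).symm) :=
      (PiLp.antilipschitzWith_ofLp 2 (fun _ : Fin m => ℝ)).to_rightInverse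
        (WithLp.equiv 2 (Fin m → ℝ)).right_inv
    have h1 := ((isometry_subtype_coe).lipschitz.comp
      B.repr.symm.isometry.lipschitz).comp h0
    have hconst : (1 : ℝ≥0) * 1 * ((Fintype.card (Fin m) : ℝ≥0) ^ ((1:ℝ≥0∞) / 2).toReal)
        = κ := by
      rw [hκ]; ring
    rw [hconst] at h1
    exact h1
  -- translation isometry
  have hT : Isometry (fun z : EuclideanSpace ℝ (Fin d) => z - z₀) :=
    Isometry.of_dist_eq (fun a b => by simp [dist_eq_norm])
  have htrans : (MeasureTheory.Measure.hausdorffMeasure ((d : ℝ) - 1) :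
      Measure (EuclideanSpace ℝ (Fin d))) ((fun z => z - z₀) '' F)
      = (MeasureTheory.Measure.hausdorffMeasure ((d : ℝ) - 1) :
      Measure (EuclideanSpace ℝ (Fin d))) F :=
    hT.hausdorffMeasure_image (Or.inl hmnn) F
  -- the translated face sits inside the image of a closed ball
  have hcover : (fun z => z - z₀) '' F ⊆ ψ '' (closedBall (0 : Fin m → ℝ) (2*r)) := by
    rintro _ ⟨z, hz, rfl⟩
    have hzU : z - z₀ ∈ U := by
      rw [hU, Submodule.mem_orthogonal_singleton_iff_inner_right]
      have h1 : (inner ℝ z n : ℝ) = c := hz.2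
      have h2 : (inner ℝ z₀ n : ℝ) = c := hz₀.2
      rw [real_inner_comm, inner_sub_left, h1, h2, sub_self]
    set u : U := ⟨z - z₀, hzU⟩ with hu
    set v : Fin m → ℝ := WithLp.equiv 2 (Fin m → ℝ) (B.repr u) with hv
    have hψv : ψ v = z - z₀ := by
      rw [hψ, hv]
      simp
      rfl
    have hnormu : ‖(u : EuclideanSpace ℝ (Fin d))‖ ≤ 2*r := by
      have h1 : dist z z₀ ≤ dist z x + dist z₀ x := dist_triangle_right _ _ _
      have h2 : dist z x ≤ r := mem_closedBall.mp hz.1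
      have h3 : dist z₀ x ≤ r := mem_closedBall.mp hz₀.1
      have : dist z z₀ ≤ 2*r := by linarith
      simpa [dist_eq_norm] using this
    have hvnorm : ‖v‖ ≤ 2*r := by
      have h1 : ‖WithLp.equiv 2 (Fin m → ℝ) (B.repr u)‖ ≤ ‖B.repr u‖ := by
        have := (PiLp.lipschitzWith_ofLp 2 (fun _ : Fin m => ℝ)).dist_le_mul
          (B.repr u) 0
        simpa [dist_zero_right] using this
      have h2 : ‖B.repr u‖ = ‖u‖ := B.repr.norm_map u
      rw [hv]
      calc ‖WithLp.equiv 2 (Fin m → ℝ) (B.repr u)‖ ≤ ‖B.repr u‖ := h1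
      _ = ‖u‖ := h2
      _ ≤ 2*r := by
        rw [show ‖u‖ = ‖(u : EuclideanSpace ℝ (Fin d))‖ from rfl]
        exact hnormu
    exact ⟨v, by simpa [mem_closedBall, dist_zero_right] using hvnorm, hψv⟩
  -- put it all together
  have hμpi : (MeasureTheory.Measure.hausdorffMeasure ((d : ℝ) - 1) :
      Measure (Fin m → ℝ)) = volume := by
    rw [hdm]
    have := MeasureTheory.hausdorffMeasure_pi_real (ι := Fin m)
    simpa [Fintype.card_fin] using this
  calc (MeasureTheory.Measure.hausdorffMeasure ((d : ℝ) - 1) :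
      Measure (EuclideanSpace ℝ (Fin d))) F
      = (MeasureTheory.Measure.hausdorffMeasure ((d : ℝ) - 1) :
      Measure (EuclideanSpace ℝ (Fin d))) ((fun z => z - z₀) '' F) := htrans.symm
    _ ≤ (MeasureTheory.Measure.hausdorffMeasure ((d : ℝ) - 1) :
      Measure (EuclideanSpace ℝ (Fin d))) (ψ '' (closedBall (0 : Fin m → ℝ) (2*r))) :=
      measure_mono hcover
    _ ≤ (κ : ℝ≥0∞) ^ ((d:ℝ)-1) * (MeasureTheory.Measure.hausdorffMeasure ((d : ℝ) - 1) :
      Measure (Fin m → ℝ)) (closedBall (0 : Fin m → ℝ) (2*r)) :=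
      hψlip.hausdorffMeasure_image_le hmnn _
    _ ≤ (κ : ℝ≥0∞) ^ ((m:ℝ)) * ENNReal.ofReal (4^m) * ENNReal.ofReal (r ^ m) := by
      rw [hμpi, Real.volume_pi_closedBall _ (by positivity), hdm]
      rw [Fintype.card_fin]
      rw [show (2 * (2*r))^m = 4^m * r^m by ring]
      rw [ENNReal.ofReal_mul (by positivity)]
      rw [mul_assoc]


/-- Discrete trace inequality for polynomials on flat faces cutting through a ball. -/
theorem polynomial_trace_inequality_flat_face
    (d ℓ : ℕ) (hd : 1 ≤ d) :
    ∃ C : ℝ, 0 < C ∧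
      ∀ (p : MvPolynomial (Fin d) ℝ), p.totalDegree ≤ ℓ →
        ∀ (x : EuclideanSpace ℝ (Fin d)) (r : ℝ), 0 < r →
          ∀ (n : EuclideanSpace ℝ (Fin d)), ‖n‖ = 1 → ∀ (c : ℝ),
            (∫ z in {z : EuclideanSpace ℝ (Fin d) |
                z ∈ closedBall x r ∧ (inner ℝ z n : ℝ) = c},
                (MvPolynomial.eval (fun i => z i) p) ^ 2
                ∂(MeasureTheory.Measure.hausdorffMeasure ((d : ℝ) - 1))) ≤
              C * r⁻¹ * ∫ z in ball x r, (MvPolynomial.eval (fun i => z i) p) ^ 2 := by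
  obtain ⟨C₀, hC₀, hinv⟩ := scaled_inverse_estimate d ℓ
  obtain ⟨K, hKfin, hKb⟩ := hausdorff_slice_bound d hd
  refine ⟨C₀ * K.toReal + 1, by positivity, fun p hp x r hr n hn c => ?_⟩
  set μ : Measure (EuclideanSpace ℝ (Fin d)) :=
    MeasureTheory.Measure.hausdorffMeasure ((d : ℝ) - 1) with hμ
  set F := {z : EuclideanSpace ℝ (Fin d) | z ∈ closedBall x r ∧ (inner ℝ z n : ℝ) = c} with hF
  set J := ∫ w in ball x r, (pev d p w)^2 with hJ
  have hJnn : 0 ≤ J := setIntegral_nonneg measurableSet_ball (fun w _ => sq_nonneg _)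
  have hFK : μ F ≤ K * ENNReal.ofReal (r ^ (d-1)) := hKb x r hr n hn c
  have hprod_fin : K * ENNReal.ofReal (r ^ (d-1)) ≠ ∞ :=
    ENNReal.mul_ne_top hKfin ENNReal.ofReal_ne_top
  have hFfin : μ F < ∞ := lt_of_le_of_lt hFK (lt_of_le_of_ne le_top hprod_fin)
  have hFmeas : MeasurableSet F := by
    have hclosed : IsClosed F := by
      have : F = (closedBall x r) ∩ ((fun z : EuclideanSpace ℝ (Fin d) =>
          (inner ℝ z n : ℝ)) ⁻¹' {c}) := by
        ext z; simp [hF]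
      rw [this]
      exact Metric.isClosed_closedBall.inter (IsClosed.preimage
        (continuous_id.inner continuous_const) isClosed_singleton)
    exact hclosed.measurableSet
  set M₀ := C₀ * (r^d)⁻¹ * J with hM₀
  have hM₀nn : 0 ≤ M₀ := by
    have : (0:ℝ) ≤ (r^d)⁻¹ := by positivity
    rw [hM₀]; positivity
  have hb : ∀ z ∈ F, ‖(pev d p z)^2‖ ≤ M₀ := by
    intro z hz
    rw [Real.norm_eq_abs, abs_of_nonneg (sq_nonneg _)]
    exact hinv p hp x r hr z hz.1
  have happ := norm_setIntegral_le_of_norm_le_const (μ := μ) hFfin hb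
  have htr : (μ F).toReal ≤ K.toReal * r^(d-1) := by
    have := ENNReal.toReal_mono hprod_fin hFK
    rwa [ENNReal.toReal_mul, ENNReal.toReal_ofReal (by positivity)] at this
  have hLHS : (∫ z in F, (pev d p z)^2 ∂μ) ≤ M₀ * (μ F).toReal :=
    le_trans (le_abs_self _) happ
  have hpow : (r^d)⁻¹ * r^(d-1) = r⁻¹ := by
    have h1 : r^d = r^(d-1) * r := by
      rw [← pow_succ]
      congr 1
      omega
    rw [h1, mul_inv]
    have h2 : (r^(d-1))⁻¹ * r⁻¹ * r^(d-1) = r⁻¹ * ((r^(d-1))⁻¹ * r^(d-1)) := by ring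
    rw [h2, inv_mul_cancel₀ (pow_ne_zero _ hr.ne'), mul_one]
  have main : (∫ z in F, (pev d p z)^2 ∂μ) ≤ (C₀ * K.toReal + 1) * r⁻¹ * J := by
    calc (∫ z in F, (pev d p z)^2 ∂μ) ≤ M₀ * (μ F).toReal := hLHS
    _ ≤ M₀ * (K.toReal * r^(d-1)) := by
        apply mul_le_mul_of_nonneg_left htr hM₀nn
    _ = (C₀ * K.toReal) * ((r^d)⁻¹ * r^(d-1)) * J := by rw [hM₀]; ring
    _ = (C₀ * K.toReal) * r⁻¹ * J := by rw [hpow]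
    _ ≤ (C₀ * K.toReal + 1) * r⁻¹ * J := by
        have h3 : (0:ℝ) ≤ r⁻¹ * J := by positivity
        nlinarith
  exact main
end

section
/- For every dimension d ≥ 1, every degree ℓ ∈ ℕ, and every θ ∈ (0,1], there exists a constant C > 0, depending only on d, ℓ and θ, such that for every d-variate real polynomial p of total degree at most ℓ, all x, y ∈ ℝ^d, all radii R > 0, ρ > 0 with θR ≤ ρ and closedBall(y,ρ) ⊆ closedBall(x,R), every unit vector n ∈ ℝ^d and every c ∈ ℝ, letting F := {z ∈ closedBall(x,R) : ⟪z,n⟫ = c}, one has ∫_F p(z)² dμ^{d−1}(z) ≤ C R⁻¹ ∫_{B(y,ρ)} p(z)² dz. (Trace of an extended polynomial on a flat face of a neighboring ill-cut cell controlled by the L² norm on the ball contained in the well-cut sub-cell.) -/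
open MeasureTheory Metric
open scoped NNReal ENNReal Pointwise

namespace PETFF

noncomputable section

variable {d ℓ : ℕ}

abbrev ES (d : ℕ) := EuclideanSpace ℝ (Fin d)
abbrev Idx (d ℓ : ℕ) := Fin d → Fin (ℓ + 1)

def φ (d ℓ : ℕ) (e : Idx d ℓ) : Fin d →₀ ℕ :=
  Finsupp.equivFunOnFinite.symm (fun i => (e i : ℕ))

lemma φ_apply (e : Idx d ℓ) (i : Fin d) : φ d ℓ e i = e i := rfl

lemma φ_injective : Function.Injective (φ d ℓ) := by
  intro e e' h
  funext i
  have := DFunLike.congr_fun h i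
  simpa [φ_apply, Fin.val_eq_val] using this

/-- coefficient-vector polynomial -/
def P (d ℓ : ℕ) (a : Idx d ℓ → ℝ) (w : Fin d → ℝ) : ℝ :=
  ∑ e : Idx d ℓ, a e * ∏ i, w i ^ (e i : ℕ)

def coeffvec (d ℓ : ℕ) (p : MvPolynomial (Fin d) ℝ) : Idx d ℓ → ℝ :=
  fun e => p.coeff (φ d ℓ e)

lemma support_subset_image {p : MvPolynomial (Fin d) ℝ} (hp : p.totalDegree ≤ ℓ) :
    p.support ⊆ Finset.image (φ d ℓ) Finset.univ := by
  intro s hs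
  have hle : ∀ i, s i ≤ ℓ := by
    intro i
    rcases Nat.eq_zero_or_pos (s i) with h0 | h0
    · omega
    · have hi : i ∈ s.support := Finsupp.mem_support_iff.2 (by omega)
      have : s i ≤ s.sum fun _ e => e := by
        rw [Finsupp.sum]
        exact Finset.single_le_sum (fun j _ => Nat.zero_le _) hi
      exact le_trans this (le_trans (MvPolynomial.le_totalDegree hs) hp)
  refine Finset.mem_image.2 ⟨fun i => ⟨s i, Nat.lt_succ_of_le (hle i)⟩, Finset.mem_univ _, ?_⟩
  ext i
  rfl

lemma eval_eq_P {p : MvPolynomial (Fin d) ℝ} (hp : p.totalDegree ≤ ℓ) (w : Fin d → ℝ) :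
    MvPolynomial.eval w p = P d ℓ (coeffvec d ℓ p) w := by
  rw [MvPolynomial.eval_eq']
  have h1 := Finset.sum_image (s := (Finset.univ : Finset (Idx d ℓ))) (g := φ d ℓ)
    (f := fun s => MvPolynomial.coeff s p * ∏ i, w i ^ s i)
    (fun e _ e' _ h => φ_injective h)
  have h2 : ∑ s ∈ p.support, MvPolynomial.coeff s p * ∏ i, w i ^ s i
      = ∑ s ∈ Finset.image (φ d ℓ) Finset.univ, MvPolynomial.coeff s p * ∏ i, w i ^ s i :=
    Finset.sum_subset (support_subset_image hp)
      (fun s _ hs => by rw [MvPolynomial.notMem_support_iff.1 hs, zero_mul])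
  rw [h2, h1]
  rfl

/-- the polynomial with coefficient vector a -/
def Q (d ℓ : ℕ) (a : Idx d ℓ → ℝ) : MvPolynomial (Fin d) ℝ :=
  ∑ e : Idx d ℓ, MvPolynomial.monomial (φ d ℓ e) (a e)

lemma eval_Q (a : Idx d ℓ → ℝ) (w : Fin d → ℝ) :
    MvPolynomial.eval w (Q d ℓ a) = P d ℓ a w := by
  rw [Q, MvPolynomial.eval_sum, P]
  refine Finset.sum_congr rfl fun e _ => ?_
  rw [MvPolynomial.eval_monomial, Finsupp.prod_fintype _ _ (fun i => pow_zero _)]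
  rfl

lemma coeff_Q (a : Idx d ℓ → ℝ) (e : Idx d ℓ) :
    MvPolynomial.coeff (φ d ℓ e) (Q d ℓ a) = a e := by
  classical
  rw [Q, MvPolynomial.coeff_sum]
  rw [Finset.sum_eq_single e]
  · simp [MvPolynomial.coeff_monomial]
  · intro e' _ hne
    rw [MvPolynomial.coeff_monomial, if_neg (fun h => hne (φ_injective h))]
  · intro h
    exact absurd (Finset.mem_univ e) h

-- coordinate bound
lemma coord_le (z : ES d) (i : Fin d) : |z i| ≤ ‖z‖ := by
  rw [EuclideanSpace.norm_eq]
  calc |z i| = Real.sqrt (‖z i‖ ^ 2) := by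
        rw [Real.sqrt_sq (norm_nonneg _), Real.norm_eq_abs]
    _ ≤ Real.sqrt (∑ j, ‖z j‖ ^ 2) :=
        Real.sqrt_le_sqrt (Finset.single_le_sum (f := fun j => ‖z j‖ ^ 2)
          (fun j _ => sq_nonneg _) (Finset.mem_univ i))

lemma P_bound (a : Idx d ℓ → ℝ) (w : Fin d → ℝ) {B : ℝ} (hB : 1 ≤ B)
    (hw : ∀ i, |w i| ≤ B) :
    |P d ℓ a w| ≤ (Fintype.card (Idx d ℓ) : ℝ) * ‖a‖ * B ^ (d * ℓ) := by
  have hB0 : 0 ≤ B := le_trans zero_le_one hB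
  have hterm : ∀ e : Idx d ℓ, |a e * ∏ i, w i ^ (e i : ℕ)| ≤ ‖a‖ * B ^ (d * ℓ) := by
    intro e
    rw [abs_mul]
    have h1 : |a e| ≤ ‖a‖ := by
      rw [← Real.norm_eq_abs]; exact norm_le_pi_norm a e
    have h2 : |∏ i, w i ^ (e i : ℕ)| ≤ B ^ (d * ℓ) := by
      rw [Finset.abs_prod]
      have h3 : ∀ i : Fin d, |w i ^ (e i : ℕ)| ≤ B ^ (e i : ℕ) := by
        intro i; rw [abs_pow]; exact pow_le_pow_left₀ (abs_nonneg _) (hw i) _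
      calc ∏ i, |w i ^ (e i : ℕ)| ≤ ∏ i, B ^ (e i : ℕ) :=
            Finset.prod_le_prod (fun i _ => abs_nonneg _) (fun i _ => h3 i)
        _ = B ^ (∑ i, (e i : ℕ)) := by rw [← Finset.prod_pow_eq_pow_sum]
        _ ≤ B ^ (d * ℓ) := by
            apply pow_le_pow_right₀ hB
            calc ∑ i, (e i : ℕ) ≤ ∑ _i : Fin d, ℓ :=
                  Finset.sum_le_sum (fun i _ => Nat.lt_succ_iff.1 (e i).isLt)
              _ = d * ℓ := by simp [Finset.sum_const, mul_comm]
    exact mul_le_mul h1 h2 (abs_nonneg _) (norm_nonneg _)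
  refine le_trans (Finset.abs_sum_le_sum_abs _ _) ?_
  refine le_trans (Finset.sum_le_card_nsmul _ _ _ (fun e _ => hterm e)) ?_
  rw [Finset.card_univ, nsmul_eq_mul]
  exact le_of_eq (by ring)

lemma P_smul (t : ℝ) (a : Idx d ℓ → ℝ) (w : Fin d → ℝ) :
    P d ℓ (t • a) w = t * P d ℓ a w := by
  simp only [P, Finset.mul_sum, Pi.smul_apply, smul_eq_mul, mul_assoc]

lemma P_cont : Continuous fun q : (Idx d ℓ → ℝ) × (Fin d → ℝ) => P d ℓ q.1 q.2 := by
  apply continuous_finset_sum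
  intro e _
  exact ((continuous_apply e).comp continuous_fst).mul
    (continuous_finset_prod _ fun i _ => ((continuous_apply i).comp continuous_snd).pow _)

lemma cont_coord (i : Fin d) : Continuous fun u : ES d => u i := by
  have := (EuclideanSpace.proj (𝕜 := ℝ) i).continuous
  simpa [EuclideanSpace.proj] using this

def toES (d : ℕ) (w : Fin d → ℝ) : ES d := (WithLp.equiv 2 (Fin d → ℝ)).symm w

lemma toES_apply (w : Fin d → ℝ) (i : Fin d) : toES d w i = w i := rfl

lemma P_vanish {θ : ℝ} (hθ : 0 < θ) (a : Idx d ℓ → ℝ) (y : ES d)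
    (h : ∀ w : ES d, w ∈ ball y θ → P d ℓ a (fun i => w i) = 0) : a = 0 := by
  set yp : Fin d → ℝ := WithLp.equiv 2 (Fin d → ℝ) y with hyp
  have hypa : ∀ i, yp i = y i := fun i => rfl
  have hQ : ∀ w : Fin d → ℝ, MvPolynomial.eval w (Q d ℓ a) = 0 := by
    have han : AnalyticOnNhd ℝ (fun w : Fin d → ℝ => MvPolynomial.eval w (Q d ℓ a)) Set.univ :=
      AnalyticOnNhd.eval_mvPolynomial _
    set r : ℝ := θ / (Real.sqrt d + 1) with hr
    have hsd : (0:ℝ) ≤ Real.sqrt d := Real.sqrt_nonneg _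
    have hrpos : 0 < r := div_pos hθ (by linarith)
    have hev : (fun w : Fin d → ℝ => MvPolynomial.eval w (Q d ℓ a)) =ᶠ[nhds yp] 0 := by
      refine Filter.eventually_of_mem (Metric.ball_mem_nhds _ hrpos) ?_
      intro w hw
      have hD : dist w yp < r := by simpa [mem_ball] using hw
      have hD0 : (0:ℝ) ≤ dist w yp := dist_nonneg
      have h1 : dist (toES d w) y ≤ Real.sqrt d * dist w yp := by
        rw [EuclideanSpace.dist_eq]
        have h2 : ∀ i : Fin d, dist (toES d w i) (y i) ^ 2 ≤ dist w yp ^ 2 := by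
          intro i
          rw [toES_apply, ← hypa i]
          exact pow_le_pow_left₀ dist_nonneg (dist_le_pi_dist w yp i) 2
        calc Real.sqrt (∑ i, dist (toES d w i) (y i) ^ 2)
            ≤ Real.sqrt (∑ _i : Fin d, dist w yp ^ 2) :=
              Real.sqrt_le_sqrt (Finset.sum_le_sum fun i _ => h2 i)
          _ = Real.sqrt ((d : ℝ) * dist w yp ^ 2) := by
              simp [Finset.sum_const, mul_comm]
          _ = Real.sqrt d * dist w yp := by
              rw [Real.sqrt_mul (Nat.cast_nonneg d), Real.sqrt_sq hD0]
      have hmem : toES d w ∈ ball y θ := by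
        rw [mem_ball]
        have h3 : Real.sqrt d * dist w yp ≤ Real.sqrt d * r :=
          mul_le_mul_of_nonneg_left hD.le hsd
        have h4 : Real.sqrt d * r < (Real.sqrt d + 1) * r := by nlinarith
        have h5 : (Real.sqrt d + 1) * r = θ := by
          rw [hr, mul_div_cancel₀]
          linarith
        have h6 : dist (toES d w) y < θ := by linarith
        exact h6
      have hPw : P d ℓ a w = 0 := h (toES d w) hmem
      show MvPolynomial.eval w (Q d ℓ a) = 0
      rw [eval_Q]
      exact hPw
    have heq := han.eqOn_zero_of_preconnected_of_eventuallyEq_zero isPreconnected_univ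
      (Set.mem_univ yp) hev
    intro w
    exact heq (Set.mem_univ w)
  have hQ0 : Q d ℓ a = 0 := MvPolynomial.funext (fun w => by rw [hQ w, map_zero])
  funext e
  rw [← coeff_Q a e, hQ0]
  simp

def G (d ℓ : ℕ) (θ : ℝ) (a : Idx d ℓ → ℝ) (y : ES d) : ℝ :=
  ∫ u in ball (0 : ES d) θ, (P d ℓ a (fun i => y i + u i)) ^ 2

lemma G_smul (θ t : ℝ) (a : Idx d ℓ → ℝ) (y : ES d) :
    G d ℓ θ (t • a) y = t ^ 2 * G d ℓ θ a y := by
  rw [G, G, ← integral_const_mul]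
  refine setIntegral_congr_fun measurableSet_ball (fun u _ => ?_)
  rw [P_smul]
  ring

lemma G_cont {θ : ℝ} (hθ : 0 < θ) :
    Continuous fun z : (Idx d ℓ → ℝ) × ES d => G d ℓ θ z.1 z.2 := by
  rw [continuous_iff_continuousAt]
  intro z₀
  have hcont_int : ∀ u : ES d, Continuous fun z : (Idx d ℓ → ℝ) × ES d =>
      (P d ℓ z.1 (fun i => z.2 i + u i)) ^ 2 := fun u =>
    (P_cont.comp (continuous_fst.prodMk (continuous_pi fun i =>
      ((cont_coord i).comp continuous_snd).add continuous_const))).pow 2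
  set B : ℝ := ‖z₀.2‖ + θ + 2 with hBdef
  have hB1 : 1 ≤ B := by
    have := norm_nonneg z₀.2
    rw [hBdef]; linarith
  apply continuousAt_of_dominated
    (bound := fun _ => ((Fintype.card (Idx d ℓ) : ℝ) * (‖z₀.1‖ + 1) * B ^ (d * ℓ)) ^ 2)
  · refine Filter.Eventually.of_forall fun z => ?_
    exact ((P_cont.comp (continuous_const.prodMk (continuous_pi fun i =>
      continuous_const.add (cont_coord i)))).pow 2).aestronglyMeasurable
  · have hU : IsOpen {z : (Idx d ℓ → ℝ) × ES d | ‖z.1‖ < ‖z₀.1‖ + 1 ∧ ‖z.2 - z₀.2‖ < 1} :=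
      IsOpen.and (isOpen_lt continuous_fst.norm continuous_const)
        (isOpen_lt (continuous_snd.sub continuous_const).norm continuous_const)
    have hz₀U : z₀ ∈ {z : (Idx d ℓ → ℝ) × ES d | ‖z.1‖ < ‖z₀.1‖ + 1 ∧ ‖z.2 - z₀.2‖ < 1} := by
      constructor
      · linarith [norm_nonneg z₀.1]
      · simp
    refine Filter.eventually_of_mem (hU.mem_nhds hz₀U) ?_
    rintro z ⟨hz1, hz2⟩
    refine (ae_restrict_mem measurableSet_ball).mono (fun u hu => ?_)
    have h4 : ‖u‖ < θ := by simpa [mem_ball, dist_zero_right] using hu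
    have h3 : ‖z.2‖ ≤ ‖z₀.2‖ + 1 := by
      have := norm_sub_norm_le z.2 z₀.2
      linarith
    have hcoord : ∀ i, |z.2 i + u i| ≤ B := by
      intro i
      have h1 := coord_le z.2 i
      have h2 := coord_le u i
      calc |z.2 i + u i| ≤ |z.2 i| + |u i| := abs_add_le _ _
        _ ≤ B := by rw [hBdef]; linarith
    have hPb := P_bound z.1 (fun i => z.2 i + u i) hB1 hcoord
    have hPb2 : |P d ℓ z.1 (fun i => z.2 i + u i)|
        ≤ (Fintype.card (Idx d ℓ) : ℝ) * (‖z₀.1‖ + 1) * B ^ (d * ℓ) := by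
      refine le_trans hPb ?_
      have hBp : (0:ℝ) ≤ B ^ (d * ℓ) := by positivity
      have : ‖z.1‖ ≤ ‖z₀.1‖ + 1 := hz1.le
      have hhc : (0:ℝ) ≤ (Fintype.card (Idx d ℓ) : ℝ) := Nat.cast_nonneg _
      exact mul_le_mul_of_nonneg_right (mul_le_mul_of_nonneg_left this hhc) hBp
    rw [Real.norm_eq_abs]
    calc |(P d ℓ z.1 fun i => z.2 i + u i) ^ 2|
        = |P d ℓ z.1 (fun i => z.2 i + u i)| ^ 2 := by rw [abs_pow]
      _ ≤ ((Fintype.card (Idx d ℓ) : ℝ) * (‖z₀.1‖ + 1) * B ^ (d * ℓ)) ^ 2 :=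
          pow_le_pow_left₀ (abs_nonneg _) hPb2 2
  · exact integrableOn_const measure_ball_lt_top.ne
  · exact Filter.Eventually.of_forall fun u => (hcont_int u).continuousAt


lemma f_cont (a : Idx d ℓ → ℝ) (y : ES d) :
    Continuous fun u : ES d => (P d ℓ a (fun i => y i + u i)) ^ 2 :=
  (P_cont.comp (continuous_const.prodMk (continuous_pi fun i =>
    continuous_const.add (cont_coord i)))).pow 2

lemma G_pos {θ : ℝ} (hθ : 0 < θ) {a : Idx d ℓ → ℝ} (ha : a ≠ 0) (y : ES d) :
    0 < G d ℓ θ a y := by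
  set f : ES d → ℝ := fun u => (P d ℓ a (fun i => y i + u i)) ^ 2 with hf
  have hfc : Continuous f := f_cont a y
  have hint : IntegrableOn f (ball (0 : ES d) θ) volume :=
    (hfc.continuousOn.integrableOn_compact (isCompact_closedBall _ _)).mono_set
      ball_subset_closedBall
  rw [G]
  rw [setIntegral_pos_iff_support_of_nonneg_ae
    (Filter.Eventually.of_forall fun u => sq_nonneg _) hint]
  have hex : ∃ u₀ ∈ ball (0 : ES d) θ, f u₀ ≠ 0 := by
    by_contra hcon
    push_neg at hcon
    apply ha
    apply P_vanish hθ a y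
    intro w hw
    have hu : w - y ∈ ball (0 : ES d) θ := by
      rw [mem_ball, dist_zero_right]
      rw [mem_ball, dist_eq_norm] at hw
      simpa using hw
    have h0 := hcon _ hu
    have harg : (fun i => y i + (w - y) i) = fun i => w i := by
      funext i
      simp [PiLp.sub_apply]
    rw [hf] at h0
    simp only [harg] at h0
    exact pow_eq_zero_iff (two_ne_zero) |>.1 h0
  obtain ⟨u₀, hu₀b, hu₀⟩ := hex
  have hopen : IsOpen {u : ES d | f u ≠ 0} := IsOpen.preimage hfc isOpen_ne
  have hpos : 0 < volume ({u : ES d | f u ≠ 0} ∩ ball (0 : ES d) θ) :=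
    (hopen.inter isOpen_ball).measure_pos volume ⟨u₀, hu₀, hu₀b⟩
  refine lt_of_lt_of_le hpos (measure_mono ?_)
  rintro u ⟨hu1, hu2⟩
  exact ⟨hu1, hu2⟩

lemma G_min (d ℓ : ℕ) {θ : ℝ} (hθ0 : 0 < θ) (hθ1 : θ ≤ 1) :
    ∃ m : ℝ, 0 < m ∧ ∀ a : Idx d ℓ → ℝ, ‖a‖ = 1 → ∀ y : ES d, ‖y‖ ≤ 1 - θ →
      m ≤ G d ℓ θ a y := by
  have hne : (sphere (0 : Idx d ℓ → ℝ) 1 ×ˢ closedBall (0 : ES d) (1 - θ)).Nonempty := by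
    refine Set.Nonempty.prod ?_ ?_
    · exact (NormedSpace.sphere_nonempty).2 zero_le_one
    · exact nonempty_closedBall.2 (by linarith)
  have hcomp := (isCompact_sphere (0 : Idx d ℓ → ℝ) 1).prod
    (isCompact_closedBall (0 : ES d) (1 - θ))
  obtain ⟨z₀, hz₀, hmin'⟩ := hcomp.exists_isMinOn hne ((G_cont hθ0).continuousOn)
  have hmin : ∀ z ∈ sphere (0 : Idx d ℓ → ℝ) 1 ×ˢ closedBall (0 : ES d) (1 - θ),
      G d ℓ θ z₀.1 z₀.2 ≤ G d ℓ θ z.1 z.2 := fun z hz => hmin' hz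
  refine ⟨G d ℓ θ z₀.1 z₀.2, ?_, ?_⟩
  · have h1 : ‖z₀.1‖ = 1 := by
      have := hz₀.1
      rwa [mem_sphere_zero_iff_norm] at this
    exact G_pos hθ0 (by intro h0; rw [h0] at h1; simp at h1) z₀.2
  · intro a ha y hy
    refine hmin (a, y) (Set.mk_mem_prod ?_ ?_)
    · rwa [mem_sphere_zero_iff_norm]
    · rwa [mem_closedBall_zero_iff]

lemma translate_ball_integral (f : ES d → ℝ) (y : ES d) (r : ℝ) :
    ∫ u in ball y r, f u = ∫ u in ball (0 : ES d) r, f (y + u) := by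
  rw [← integral_indicator measurableSet_ball, ← integral_indicator measurableSet_ball]
  rw [← integral_add_left_eq_self (fun u => (ball y r).indicator f u) y]
  congr 1
  funext u
  have hmem : y + u ∈ ball y r ↔ u ∈ ball (0 : ES d) r := by
    rw [mem_ball, mem_ball, dist_self_add_left, dist_zero_right]
  by_cases h : u ∈ ball (0 : ES d) r
  · rw [Set.indicator_of_mem (hmem.2 h), Set.indicator_of_mem h]
  · rw [Set.indicator_of_notMem (fun hc => h (hmem.1 hc)), Set.indicator_of_notMem h]

/-- Core inequality at unit scale. -/
lemma core (d ℓ : ℕ) {θ : ℝ} (hθ0 : 0 < θ) (hθ1 : θ ≤ 1) :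
    ∃ c₀ : ℝ, 0 < c₀ ∧ ∀ p : MvPolynomial (Fin d) ℝ, p.totalDegree ≤ ℓ →
      ∀ y : ES d, ‖y‖ ≤ 1 - θ → ∀ w : ES d, w ∈ closedBall (0 : ES d) 1 →
        (MvPolynomial.eval (fun i => w i) p) ^ 2
          ≤ c₀ * ∫ u in ball y θ, (MvPolynomial.eval (fun i => u i) p) ^ 2 := by
  obtain ⟨m, hm, hmin⟩ := G_min d ℓ hθ0 hθ1
  refine ⟨((Fintype.card (Idx d ℓ) : ℝ) + 1) ^ 2 / m, by positivity, ?_⟩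
  intro p hp y hy w hw
  set a : Idx d ℓ → ℝ := coeffvec d ℓ p with hadef
  have hIint : ∫ u in ball y θ, (MvPolynomial.eval (fun i => u i) p) ^ 2 = G d ℓ θ a y := by
    have h1 : ∀ u : ES d, (MvPolynomial.eval (fun i => u i) p) ^ 2 = (P d ℓ a (fun i => u i)) ^ 2 :=
      fun u => by rw [eval_eq_P hp]
    rw [G]
    rw [show (fun u : ES d => (MvPolynomial.eval (fun i => u i) p) ^ 2)
      = fun u : ES d => (P d ℓ a (fun i => u i)) ^ 2 from funext h1]
    rw [translate_ball_integral (fun u : ES d => (P d ℓ a (fun i => u i)) ^ 2) y θ]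
    refine setIntegral_congr_fun measurableSet_ball (fun u _ => ?_)
    congr 1
  rw [hIint]
  have hPw : (MvPolynomial.eval (fun i => w i) p) ^ 2 = (P d ℓ a (fun i => w i)) ^ 2 := by
    rw [eval_eq_P hp]
  rw [hPw]
  by_cases ha : a = 0
  · rw [ha]
    have hP0 : ∀ v : Fin d → ℝ, P d ℓ (0 : Idx d ℓ → ℝ) v = 0 := by
      intro v; simp [P]
    rw [hP0]
    have hG0 : G d ℓ θ (0 : Idx d ℓ → ℝ) y = 0 := by
      rw [G]
      simp only [hP0]
      simp
    rw [hG0]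
    simp
  · set t : ℝ := ‖a‖ with htdef
    have ht : 0 < t := norm_pos_iff.2 ha
    set b : Idx d ℓ → ℝ := t⁻¹ • a with hbdef
    have hb : ‖b‖ = 1 := by
      rw [hbdef, norm_smul]
      simp [htdef, abs_of_pos (inv_pos.2 ht), inv_mul_cancel₀ ht.ne']
      exact inv_mul_cancel₀ (norm_ne_zero_iff.2 ha)
    have hab : a = t • b := by
      rw [hbdef, smul_smul, mul_inv_cancel₀ ht.ne', one_smul]
    -- bound on P b w
    have hwc : ∀ i, |w i| ≤ (1:ℝ) := by
      intro i
      refine le_trans (coord_le w i) ?_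
      rwa [mem_closedBall, dist_zero_right] at hw
    have hPbw : |P d ℓ b (fun i => w i)| ≤ (Fintype.card (Idx d ℓ) : ℝ) + 1 := by
      have := P_bound b (fun i => w i) le_rfl hwc
      rw [hb, one_pow, mul_one, mul_one] at this
      linarith
    have hGb : m ≤ G d ℓ θ b y := hmin b hb y hy
    have hGab : G d ℓ θ a y = t ^ 2 * G d ℓ θ b y := by rw [hab, G_smul]
    have hPab : (P d ℓ a (fun i => w i)) ^ 2 = t ^ 2 * (P d ℓ b (fun i => w i)) ^ 2 := by
      rw [hab, P_smul]; ring
    rw [hPab, hGab]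
    have h2 : (P d ℓ b (fun i => w i)) ^ 2 ≤ ((Fintype.card (Idx d ℓ) : ℝ) + 1) ^ 2 := by
      rw [← sq_abs]
      exact pow_le_pow_left₀ (abs_nonneg _) hPbw 2
    have hC1 : (0:ℝ) ≤ ((Fintype.card (Idx d ℓ) : ℝ) + 1) ^ 2 := sq_nonneg _
    rw [div_mul_eq_mul_div, le_div_iff₀ hm]
    nlinarith [mul_le_mul_of_nonneg_right (mul_le_mul_of_nonneg_left h2 (sq_nonneg t)) hm.le,
      mul_le_mul_of_nonneg_left hGb (mul_nonneg (sq_nonneg t) hC1)]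


lemma slice_bound (d : ℕ) (hd : 1 ≤ d) :
    ∃ K : ℝ, 0 ≤ K ∧ ∀ (x : ES d) (R : ℝ), 0 < R → ∀ n : ES d, ‖n‖ = 1 → ∀ c : ℝ,
      μH[(d : ℝ) - 1] {z : ES d | z ∈ closedBall x R ∧ (inner ℝ z n : ℝ) = c}
        ≤ ENNReal.ofReal (K * R ^ (d - 1)) := by
  classical
  set m := d - 1 with hm
  have hcast : ((m : ℕ) : ℝ) = (d : ℝ) - 1 := by
    rw [hm, Nat.cast_sub hd, Nat.cast_one]
  have hd0 : (0:ℝ) ≤ (d : ℝ) - 1 := by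
    rw [← hcast]; exact Nat.cast_nonneg _
  set Kn : ℝ≥0 := (Fintype.card (Fin m) : ℝ≥0) ^ ((1 / (2:ℝ≥0∞)).toReal) with hKn
  refine ⟨(Kn : ℝ) ^ m * 4 ^ m, by positivity, ?_⟩
  intro x R hR n hn c
  set S := {z : ES d | z ∈ closedBall x R ∧ (inner ℝ z n : ℝ) = c} with hS
  rcases Set.eq_empty_or_nonempty S with hSe | ⟨z₀, hz₀⟩
  · rw [hSe, measure_empty]
    exact (zero_le : (0:ℝ≥0∞) ≤ _)
  · have hn0 : n ≠ 0 := by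
      intro h; rw [h, norm_zero] at hn; exact one_ne_zero hn.symm
    set W := (Submodule.span ℝ {n})ᗮ with hW
    have hrank : Module.finrank ℝ W = m := by
      rw [hW]
      have h1 := Submodule.finrank_add_finrank_orthogonal (K := Submodule.span ℝ {n})
        (𝕜 := ℝ) (E := ES d)
      rw [finrank_span_singleton hn0, finrank_euclideanSpace_fin] at h1
      omega
    set b : OrthonormalBasis (Fin m) ℝ W := (stdOrthonormalBasis ℝ W).reindex (finCongr hrank)
      with hb
    set L : EuclideanSpace ℝ (Fin m) →ₗᵢ[ℝ] ES d :=
      W.subtypeₗᵢ.comp b.repr.symm.toLinearIsometry with hL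
    set g : EuclideanSpace ℝ (Fin m) → ES d := fun w => z₀ + L w with hg
    have hgiso : Isometry g := by
      apply Isometry.of_dist_eq
      intro w w'
      rw [hg]
      simp only []
      rw [dist_eq_norm, dist_eq_norm, add_sub_add_left_eq_sub, ← map_sub, L.norm_map]
    have hcover : S ⊆ g '' (closedBall 0 (2 * R)) := by
      rintro z ⟨hz1, hz2⟩
      have hzW : z - z₀ ∈ W := by
        rw [hW, Submodule.mem_orthogonal_singleton_iff_inner_left, inner_sub_left, hz2, hz₀.2,
          sub_self]
      refine ⟨b.repr ⟨z - z₀, hzW⟩, ?_, ?_⟩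
      · rw [mem_closedBall_zero_iff, b.repr.norm_map]
        have h3 : ‖(⟨z - z₀, hzW⟩ : W)‖ = ‖z - z₀‖ := rfl
        rw [h3, ← dist_eq_norm]
        calc dist z z₀ ≤ dist z x + dist x z₀ := dist_triangle _ _ _
          _ ≤ R + R := by
              refine add_le_add hz1 ?_
              rw [dist_comm]; exact hz₀.1
          _ = 2 * R := by ring
      · rw [hg]
        simp only []
        have h4 : L (b.repr ⟨z - z₀, hzW⟩) = z - z₀ := by
          rw [hL]
          simp only [LinearIsometry.coe_comp, Function.comp_apply,
            LinearIsometryEquiv.coe_toLinearIsometry, LinearIsometryEquiv.symm_apply_apply]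
          rfl
        rw [h4, add_sub_cancel]
    have hψ : LipschitzWith Kn ((WithLp.equiv 2 (Fin m → ℝ)).symm) := by
      rw [hKn]
      exact (PiLp.antilipschitzWith_ofLp 2 (fun _ : Fin m => ℝ)).to_rightInverse
        (WithLp.equiv 2 (Fin m → ℝ)).apply_symm_apply
    have hsub : closedBall (0 : EuclideanSpace ℝ (Fin m)) (2 * R)
        ⊆ (WithLp.equiv 2 (Fin m → ℝ)).symm '' (closedBall (0 : Fin m → ℝ) (2 * R)) := by
      intro z hz
      refine ⟨WithLp.equiv 2 (Fin m → ℝ) z, ?_, (WithLp.equiv 2 (Fin m → ℝ)).symm_apply_apply z⟩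
      rw [mem_closedBall_zero_iff] at hz ⊢
      have h7 : ‖WithLp.equiv 2 (Fin m → ℝ) z‖ ≤ ‖z‖ := by
        have h5 := (PiLp.lipschitzWith_ofLp 2 (fun _ : Fin m => ℝ)).dist_le_mul z 0
        simpa [show (WithLp.equiv 2 (Fin m → ℝ)) 0 = 0 from rfl, dist_zero_right] using h5
      exact le_trans h7 hz
    have hpi : (μH[(d : ℝ) - 1] : Measure (Fin m → ℝ)) = volume := by
      have h6 : ((Fintype.card (Fin m) : ℕ) : ℝ) = (d : ℝ) - 1 := by
        rw [Fintype.card_fin]; exact hcast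
      rw [← h6, hausdorffMeasure_pi_real]
    calc μH[(d : ℝ) - 1] S ≤ μH[(d : ℝ) - 1] (g '' (closedBall 0 (2 * R))) :=
          measure_mono hcover
      _ = μH[(d : ℝ) - 1] (closedBall (0 : EuclideanSpace ℝ (Fin m)) (2 * R)) :=
          hgiso.hausdorffMeasure_image (Or.inl hd0) _
      _ ≤ μH[(d : ℝ) - 1] ((WithLp.equiv 2 (Fin m → ℝ)).symm
            '' (closedBall (0 : Fin m → ℝ) (2 * R))) := measure_mono hsub
      _ ≤ (Kn : ℝ≥0∞) ^ ((d : ℝ) - 1)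
            * μH[(d : ℝ) - 1] (closedBall (0 : Fin m → ℝ) (2 * R)) :=
          hψ.hausdorffMeasure_image_le hd0 _
      _ = (Kn : ℝ≥0∞) ^ ((d : ℝ) - 1) * ENNReal.ofReal ((2 * (2 * R)) ^ m) := by
          rw [hpi]
          congr 1
          rw [Real.volume_pi_closedBall 0 (by positivity), Fintype.card_fin]
      _ ≤ ENNReal.ofReal ((Kn : ℝ) ^ m * 4 ^ m * R ^ m) := by
          rw [← hcast, ENNReal.rpow_natCast]
          rw [← ENNReal.coe_pow, ← ENNReal.ofReal_coe_nnreal]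
          push_cast
          rw [← ENNReal.ofReal_mul (by positivity)]
          apply ENNReal.ofReal_le_ofReal
          have : (2 * (2 * R)) ^ m = 4 ^ m * R ^ m := by
            rw [← mul_pow]; ring_nf
          rw [this]
          ring_nf
          exact le_refl _


def subst (d : ℕ) (x : Fin d → ℝ) (R : ℝ) (p : MvPolynomial (Fin d) ℝ) :
    MvPolynomial (Fin d) ℝ :=
  MvPolynomial.eval₂ MvPolynomial.C
    (fun i => MvPolynomial.C (x i) + MvPolynomial.C R * MvPolynomial.X i) p

lemma eval_subst (x : Fin d → ℝ) (R : ℝ) (p : MvPolynomial (Fin d) ℝ) (w : Fin d → ℝ) :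
    MvPolynomial.eval w (subst d x R p) = MvPolynomial.eval (fun i => x i + R * w i) p := by
  rw [subst, MvPolynomial.eval_eval₂]
  have h1 : (MvPolynomial.eval w).comp (MvPolynomial.C (σ := Fin d)) = RingHom.id ℝ :=
    RingHom.ext fun r => MvPolynomial.eval_C _
  rw [h1, MvPolynomial.eval₂_id]
  have h2 : (fun s => MvPolynomial.eval w
      (MvPolynomial.C (x s) + MvPolynomial.C R * MvPolynomial.X s)) = fun i => x i + R * w i := by
    funext i; simp
  rw [h2]

lemma totalDegree_subst_le (x : Fin d → ℝ) (R : ℝ) (p : MvPolynomial (Fin d) ℝ) :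
    (subst d x R p).totalDegree ≤ p.totalDegree := by
  rw [subst, MvPolynomial.eval₂_eq]
  refine le_trans (MvPolynomial.totalDegree_finset_sum _ _) ?_
  apply Finset.sup_le
  intro s hs
  refine le_trans (MvPolynomial.totalDegree_mul _ _) ?_
  rw [MvPolynomial.totalDegree_C, zero_add]
  refine le_trans (MvPolynomial.totalDegree_finset_prod _ _) ?_
  have hdeg1 : ∀ i : Fin d,
      (MvPolynomial.C (x i) + MvPolynomial.C R * MvPolynomial.X (R := ℝ) i).totalDegree ≤ 1 := by
    intro i
    refine le_trans (MvPolynomial.totalDegree_add _ _) ?_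
    rw [MvPolynomial.totalDegree_C]
    refine sup_le (Nat.zero_le _) ?_
    refine le_trans (MvPolynomial.totalDegree_mul _ _) ?_
    rw [MvPolynomial.totalDegree_C, zero_add]
    exact le_of_eq (MvPolynomial.totalDegree_X i)
  calc ∑ i ∈ s.support,
        ((MvPolynomial.C (x i) + MvPolynomial.C R * MvPolynomial.X i) ^ s i).totalDegree
      ≤ ∑ i ∈ s.support, s i * 1 := by
        refine Finset.sum_le_sum fun i _ => ?_
        refine le_trans (MvPolynomial.totalDegree_pow _ _) ?_
        exact Nat.mul_le_mul_left _ (hdeg1 i)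
    _ = s.sum fun _ e => e := by
        simp [Finsupp.sum]
    _ ≤ p.totalDegree := MvPolynomial.le_totalDegree hs

lemma dist_add_le_of_closedBall_subset (hd : 1 ≤ d) {x y : ES d} {ρ R : ℝ} (hρ : 0 < ρ)
    (h : closedBall y ρ ⊆ closedBall x R) : ‖y - x‖ + ρ ≤ R := by
  by_cases hyx : y = x
  · subst hyx
    have hz : y + ρ • EuclideanSpace.single (⟨0, hd⟩ : Fin d) (1:ℝ) ∈ closedBall y ρ := by
      rw [mem_closedBall, dist_self_add_left, norm_smul, EuclideanSpace.norm_single]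
      simp [abs_of_pos hρ]
    have := h hz
    rw [mem_closedBall, dist_self_add_left, norm_smul, EuclideanSpace.norm_single] at this
    simp only [norm_one, mul_one, Real.norm_eq_abs, abs_of_pos hρ] at this
    simp only [sub_self, norm_zero, zero_add]
    exact this
  · set u := y - x with hu
    have hu0 : u ≠ 0 := sub_ne_zero.2 hyx
    have hun : ‖u‖ ≠ 0 := norm_ne_zero_iff.2 hu0
    set t := ‖u‖⁻¹ with ht
    have hz : y + (ρ * t) • u ∈ closedBall y ρ := by
      rw [mem_closedBall, dist_self_add_left, norm_smul]
      rw [Real.norm_eq_abs, abs_of_nonneg (by positivity)]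
      rw [ht, mul_assoc, inv_mul_cancel₀ hun, mul_one]
    have hmem := h hz
    rw [mem_closedBall, dist_eq_norm] at hmem
    have harg : y + (ρ * t) • u - x = (1 + ρ * t) • u := by
      rw [add_smul, one_smul, hu]
      module
    rw [harg, norm_smul, Real.norm_eq_abs, abs_of_nonneg (by positivity)] at hmem
    have hexp : (1 + ρ * t) * ‖u‖ = ‖u‖ + ρ := by
      rw [ht]
      field_simp
    rw [hexp] at hmem
    exact hmem

end
end PETFF

open MeasureTheory Metric

/-- Trace of an extended polynomial on a flat face controlled by the L² norm on the
small ball contained in the well-cut sub-cell. -/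
theorem polynomial_extension_trace_flat_face_bound
    (d ℓ : ℕ) (hd : 1 ≤ d) (θ : ℝ) (hθ : θ ∈ Set.Ioc (0 : ℝ) 1) :
    ∃ C : ℝ, 0 < C ∧
      ∀ (p : MvPolynomial (Fin d) ℝ), p.totalDegree ≤ ℓ →
        ∀ (x y : EuclideanSpace ℝ (Fin d)) (R ρ : ℝ), 0 < R → 0 < ρ →
          θ * R ≤ ρ → closedBall y ρ ⊆ closedBall x R →
          ∀ (n : EuclideanSpace ℝ (Fin d)), ‖n‖ = 1 → ∀ (c : ℝ),
            (∫ z in {z : EuclideanSpace ℝ (Fin d) |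
                z ∈ closedBall x R ∧ (inner ℝ z n : ℝ) = c},
                (MvPolynomial.eval (fun i => z i) p) ^ 2
                ∂(MeasureTheory.Measure.hausdorffMeasure ((d : ℝ) - 1))) ≤
              C * R⁻¹ * ∫ z in ball y ρ, (MvPolynomial.eval (fun i => z i) p) ^ 2 := by
  obtain ⟨hθ0, hθ1⟩ := hθ
  obtain ⟨c₀, hc₀, hcore⟩ := PETFF.core d ℓ hθ0 hθ1
  obtain ⟨K, hK, hslice⟩ := PETFF.slice_bound d hd
  refine ⟨c₀ * (K + 1), by positivity, ?_⟩
  intro p hp x y R ρ hR hρ hθR hsub n hn c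
  set q := PETFF.subst d (fun i => x i) R p with hq
  have hqdeg : q.totalDegree ≤ ℓ := le_trans (PETFF.totalDegree_subst_le _ _ _) hp
  set y' : EuclideanSpace ℝ (Fin d) := R⁻¹ • (y - x) with hy'def
  have hdistyx : ‖y - x‖ + ρ ≤ R := PETFF.dist_add_le_of_closedBall_subset hd hρ hsub
  have hRinv : (0:ℝ) < R⁻¹ := inv_pos.2 hR
  have hy' : ‖y'‖ ≤ 1 - θ := by
    rw [hy'def, norm_smul, Real.norm_eq_abs, abs_of_pos hRinv]
    have h1 : ‖y - x‖ ≤ R - θ * R := by linarith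
    have h2 : R⁻¹ * ‖y - x‖ ≤ R⁻¹ * (R - θ * R) :=
      mul_le_mul_of_nonneg_left h1 hRinv.le
    have h3 : R⁻¹ * (R - θ * R) = 1 - θ := by
      field_simp
    linarith
  set f : EuclideanSpace ℝ (Fin d) → ℝ := fun z => (MvPolynomial.eval (fun i => z i) p) ^ 2
    with hfdef
  have hfc : Continuous f := by
    rw [hfdef]
    have hrepr : (fun z : EuclideanSpace ℝ (Fin d) => (MvPolynomial.eval (fun i => z i) p) ^ 2)
        = fun z => (PETFF.P d ℓ (PETFF.coeffvec d ℓ p) (fun i => z i)) ^ 2 := by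
      funext z
      rw [PETFF.eval_eq_P hp]
    rw [hrepr]
    exact (PETFF.P_cont.comp (continuous_const.prodMk
      (continuous_pi fun i => PETFF.cont_coord i))).pow 2
  set I := ∫ u in ball y' θ, (MvPolynomial.eval (fun i => u i) q) ^ 2 with hIdef
  have hI0 : 0 ≤ I := setIntegral_nonneg measurableSet_ball (fun u _ => sq_nonneg _)
  have hpoint : ∀ z ∈ {z : EuclideanSpace ℝ (Fin d) |
      z ∈ closedBall x R ∧ (inner ℝ z n : ℝ) = c}, ‖f z‖ ≤ c₀ * I := by
    rintro z ⟨hz1, _⟩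
    set w : EuclideanSpace ℝ (Fin d) := R⁻¹ • (z - x) with hwdef
    have hwmem : w ∈ closedBall (0 : EuclideanSpace ℝ (Fin d)) 1 := by
      rw [mem_closedBall_zero_iff, hwdef, norm_smul, Real.norm_eq_abs, abs_of_pos hRinv]
      rw [mem_closedBall, dist_eq_norm] at hz1
      calc R⁻¹ * ‖z - x‖ ≤ R⁻¹ * R := mul_le_mul_of_nonneg_left hz1 hRinv.le
        _ = 1 := inv_mul_cancel₀ hR.ne'
    have hzw : MvPolynomial.eval (fun i => w i) q = MvPolynomial.eval (fun i => z i) p := by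
      rw [hq, PETFF.eval_subst]
      have harg : (fun i => x i + R * w i) = (fun i : Fin d => z i) := by
        funext i
        rw [hwdef]
        simp only [PiLp.smul_apply, PiLp.sub_apply, smul_eq_mul]
        field_simp
        ring
      rw [harg]
    have hb := hcore q hqdeg y' hy' w hwmem
    rw [hzw, ← hIdef] at hb
    rw [hfdef]
    rw [Real.norm_eq_abs, abs_of_nonneg (sq_nonneg _)]
    exact hb
  have hSmeas : MeasurableSet {z : EuclideanSpace ℝ (Fin d) |
      z ∈ closedBall x R ∧ (inner ℝ z n : ℝ) = c} := by
    rw [Set.setOf_and]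
    refine IsClosed.measurableSet (IsClosed.inter ?_ ?_)
    · exact Metric.isClosed_closedBall (x := x) (ε := R)
    · exact isClosed_eq (Continuous.inner continuous_id continuous_const) continuous_const
  have hμS := hslice x R hR n hn c
  have hμfin : μH[(d : ℝ) - 1] {z : EuclideanSpace ℝ (Fin d) |
      z ∈ closedBall x R ∧ (inner ℝ z n : ℝ) = c} < ⊤ :=
    lt_of_le_of_lt hμS ENNReal.ofReal_lt_top
  have hc₀I : (0:ℝ) ≤ c₀ * I := mul_nonneg hc₀.le hI0
  have htrace : (∫ z in {z : EuclideanSpace ℝ (Fin d) |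
      z ∈ closedBall x R ∧ (inner ℝ z n : ℝ) = c}, f z
        ∂(MeasureTheory.Measure.hausdorffMeasure ((d : ℝ) - 1)))
      ≤ (c₀ * I) * ((K + 1) * R ^ (d - 1)) := by
    have hn1 := norm_setIntegral_le_of_norm_le_const (μ := μH[(d : ℝ) - 1]) hμfin hpoint
    have h2 : (μH[(d : ℝ) - 1] {z : EuclideanSpace ℝ (Fin d) |
        z ∈ closedBall x R ∧ (inner ℝ z n : ℝ) = c}).toReal ≤ (K + 1) * R ^ (d - 1) := by
      have h3 := ENNReal.toReal_mono ENNReal.ofReal_ne_top hμS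
      rw [ENNReal.toReal_ofReal (by positivity)] at h3
      nlinarith [pow_nonneg hR.le (d - 1)]
    calc (∫ z in {z : EuclideanSpace ℝ (Fin d) |
          z ∈ closedBall x R ∧ (inner ℝ z n : ℝ) = c}, f z
            ∂(MeasureTheory.Measure.hausdorffMeasure ((d : ℝ) - 1)))
        ≤ ‖(∫ z in {z : EuclideanSpace ℝ (Fin d) |
            z ∈ closedBall x R ∧ (inner ℝ z n : ℝ) = c}, f z
              ∂(MeasureTheory.Measure.hausdorffMeasure ((d : ℝ) - 1)))‖ := le_abs_self _
      _ ≤ (c₀ * I) * (μH[(d : ℝ) - 1] {z : EuclideanSpace ℝ (Fin d) |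
            z ∈ closedBall x R ∧ (inner ℝ z n : ℝ) = c}).toReal := hn1
      _ ≤ (c₀ * I) * ((K + 1) * R ^ (d - 1)) := mul_le_mul_of_nonneg_left h2 hc₀I
  have hscale : ∫ z in ball y (θ * R), f z = R ^ d * I := by
    have hg1 : ∀ w : EuclideanSpace ℝ (Fin d),
        f (x + R • w) = (MvPolynomial.eval (fun i => w i) q) ^ 2 := by
      intro w
      rw [hfdef, hq, PETFF.eval_subst]
      have harg2 : x + R • w = WithLp.toLp 2 (fun i => x i + R * w i : Fin d → ℝ) := by
        ext i
        simp only [PiLp.add_apply, PiLp.smul_apply, smul_eq_mul]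
      rw [harg2]
    have hcv := MeasureTheory.Measure.setIntegral_comp_smul_of_pos volume
      (fun z' => f (x + z')) (ball y' θ) hR
    rw [finrank_euclideanSpace_fin] at hcv
    have hIeq : I = (R ^ d)⁻¹ • ∫ z' in R • ball y' θ, f (x + z') := by
      rw [← hcv, hIdef]
      refine setIntegral_congr_fun measurableSet_ball (fun w _ => ?_)
      exact (hg1 w).symm
    have hball : R • ball y' θ = ball (y - x) (θ * R) := by
      rw [_root_.smul_ball hR.ne', hy'def, smul_inv_smul₀ hR.ne']
      congr 1
      rw [Real.norm_eq_abs, abs_of_pos hR]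
      ring
    rw [hball] at hIeq
    have ht1 := PETFF.translate_ball_integral (fun z' => f (x + z')) (y - x) (θ * R)
    have ht2 := PETFF.translate_ball_integral f y (θ * R)
    have ht3 : ∀ u : EuclideanSpace ℝ (Fin d), x + ((y - x) + u) = y + u := fun u => by abel
    rw [ht1] at hIeq
    simp only [ht3] at hIeq
    rw [ht2, hIeq, smul_eq_mul]
    have hRd : R ^ d ≠ 0 := pow_ne_zero _ hR.ne'
    field_simp
  have hmono : ∫ z in ball y (θ * R), f z ≤ ∫ z in ball y ρ, f z := by
    refine setIntegral_mono_set ?_ ?_ ?_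
    · exact (hfc.continuousOn.integrableOn_compact (isCompact_closedBall y ρ)).mono_set
        ball_subset_closedBall
    · exact Filter.Eventually.of_forall fun z => sq_nonneg _
    · exact HasSubset.Subset.eventuallyLE (ball_subset_ball hθR)
  have hpow : R⁻¹ * R ^ d = R ^ (d - 1) := by
    have hd' : d = (d - 1) + 1 := by omega
    rw [hd', pow_succ]
    have : d - 1 + 1 - 1 = d - 1 := by omega
    rw [this]
    field_simp
  have hfin : (c₀ * I) * ((K + 1) * R ^ (d - 1))
      ≤ c₀ * (K + 1) * R⁻¹ * ∫ z in ball y ρ, f z := by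
    have h5 : R ^ d * I ≤ ∫ z in ball y ρ, f z := by rw [← hscale]; exact hmono
    have h6 := mul_le_mul_of_nonneg_left h5
      (by positivity : (0:ℝ) ≤ c₀ * (K + 1) * R⁻¹)
    calc (c₀ * I) * ((K + 1) * R ^ (d - 1)) = c₀ * (K + 1) * R⁻¹ * (R ^ d * I) := by
          rw [← hpow]; ring
      _ ≤ _ := h6
  exact le_trans htrace hfin
end

section
/- For every dimension d ≥ 1, every degree ℓ ∈ ℕ, and every θ ∈ (0,1], there exists a constant C > 0, depending only on d, ℓ and θ, such that for every d-variate real polynomial p of total degree at most ℓ, all x, y ∈ ℝ^d and all radii R > 0, ρ > 0 with θR ≤ ρ and closedBall(y,ρ) ⊆ closedBall(x,R), one has ∫_{B(x,R)} (p(z) − ⟨p⟩_{B(y,ρ)})² dz ≤ C R² ∫_{B(x,R)} ‖∇p(z)‖² dz, where ⟨p⟩_{B(y,ρ)} is the mean value of p over B(y,ρ). (Discrete Poincaré inequality with the mean taken over a sub-ball, the key estimate used to control (I−Π)(φ⁺) in the discrete inverse inequalities of the unfitted HHO analysis.) -/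
open MeasureTheory Metric MvPolynomial Pointwise

noncomputable def Pev {d : ℕ} (p : MvPolynomial (Fin d) ℝ) : EuclideanSpace ℝ (Fin d) → ℝ :=
  fun z => MvPolynomial.eval (fun i => z i) p

theorem contDiff_Pev {d : ℕ} (p : MvPolynomial (Fin d) ℝ) : ContDiff ℝ ⊤ (Pev p) := by
  induction p using MvPolynomial.induction_on with
  | C a =>
      have : Pev (MvPolynomial.C (σ := Fin d) a) = fun _ => a := by funext z; simp [Pev]
      rw [this]; exact contDiff_const
  | add p q hp hq =>
      have : Pev (p + q) = fun z => Pev p z + Pev q z := by funext z; simp [Pev]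
      rw [this]; exact hp.add hq
  | mul_X p i hp =>
      have : Pev (p * X i) = fun z => Pev p z * (EuclideanSpace.proj i z) := by
        funext z; simp [Pev]
      rw [this]; exact hp.mul (EuclideanSpace.proj i : EuclideanSpace ℝ (Fin d) →L[ℝ] ℝ).contDiff

/-- change of variables -/
theorem cov {d : ℕ} (g : EuclideanSpace ℝ (Fin d) → ℝ) (x : EuclideanSpace ℝ (Fin d))
    {R : ℝ} (hR : 0 < R) :
    ∫ u in ball (0 : EuclideanSpace ℝ (Fin d)) 1, g (x + R • u) =
      (R ^ d)⁻¹ * ∫ z in ball x R, g z := by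
  have h1 : ∫ u in ball (0 : EuclideanSpace ℝ (Fin d)) 1, (fun w => g (x + w)) (R • u) =
      (R ^ Module.finrank ℝ (EuclideanSpace ℝ (Fin d)))⁻¹ •
        ∫ w in R • ball (0 : EuclideanSpace ℝ (Fin d)) 1, g (x + w) :=
    MeasureTheory.Measure.setIntegral_comp_smul_of_pos volume (fun w => g (x + w))
      (ball (0 : EuclideanSpace ℝ (Fin d)) 1) hR
  have h2 : R • ball (0 : EuclideanSpace ℝ (Fin d)) 1 = ball (0 : EuclideanSpace ℝ (Fin d)) R := by
    rw [_root_.smul_ball hR.ne' (0 : EuclideanSpace ℝ (Fin d)) 1]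
    simp [Real.norm_eq_abs, abs_of_pos hR]
  have h3 : ∫ w in ball (0 : EuclideanSpace ℝ (Fin d)) R, g (x + w) = ∫ z in ball x R, g z := by
    have hpre : (fun w : EuclideanSpace ℝ (Fin d) => x + w) ⁻¹' (ball x R) =
        ball (0 : EuclideanSpace ℝ (Fin d)) R := by
      ext w; simp [mem_ball, dist_eq_norm]
    rw [← hpre]
    exact (measurePreserving_add_left volume x).setIntegral_preimage_emb
      ((Homeomorph.addLeft x).measurableEmbedding) _ _
  rw [h1, h2, h3, finrank_euclideanSpace_fin]
  simp [smul_eq_mul]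

theorem volball {d : ℕ} (x : EuclideanSpace ℝ (Fin d)) {R : ℝ} (hR : 0 < R) :
    (volume (ball x R)).toReal =
      R ^ d * (volume (ball (0 : EuclideanSpace ℝ (Fin d)) 1)).toReal := by
  have := cov (fun _ => (1 : ℝ)) x hR
  simp only [setIntegral_const, smul_eq_mul, mul_one] at this
  have hRd : (0:ℝ) < R ^ d := pow_pos hR d
  field_simp at this ⊢
  rw [measureReal_def, measureReal_def] at this
  linarith [this]

theorem diff_Pev {d : ℕ} (p : MvPolynomial (Fin d) ℝ) : Differentiable ℝ (Pev p) :=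
  (contDiff_Pev p).differentiable (by simp)

theorem cont_Pev {d : ℕ} (p : MvPolynomial (Fin d) ℝ) : Continuous (Pev p) :=
  (contDiff_Pev p).continuous

theorem cont_grad_Pev {d : ℕ} (p : MvPolynomial (Fin d) ℝ) :
    Continuous (fun z => gradient (Pev p) z) := by
  have h := (contDiff_Pev p).continuous_fderiv (by simp)
  exact (InnerProductSpace.toDual ℝ (EuclideanSpace ℝ (Fin d))).symm.continuous.comp h

theorem Pev_add {d : ℕ} (p q : MvPolynomial (Fin d) ℝ) (z : EuclideanSpace ℝ (Fin d)) :
    Pev (p + q) z = Pev p z + Pev q z := by simp [Pev]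

theorem Pev_smul {d : ℕ} (c : ℝ) (p : MvPolynomial (Fin d) ℝ) (z : EuclideanSpace ℝ (Fin d)) :
    Pev (c • p) z = c * Pev p z := by simp [Pev]

theorem Pev_zero {d : ℕ} (z : EuclideanSpace ℝ (Fin d)) : Pev (0 : MvPolynomial (Fin d) ℝ) z = 0 := by
  simp [Pev]

theorem grad_Pev_add {d : ℕ} (p q : MvPolynomial (Fin d) ℝ) (z : EuclideanSpace ℝ (Fin d)) :
    gradient (Pev (p + q)) z = gradient (Pev p) z + gradient (Pev q) z := by
  unfold gradient
  have h1 : Pev (p + q) = fun z => Pev p z + Pev q z := by funext w; exact Pev_add p q w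
  rw [h1, fderiv_fun_add (diff_Pev p z) (diff_Pev q z), map_add]

theorem grad_Pev_smul {d : ℕ} (c : ℝ) (p : MvPolynomial (Fin d) ℝ) (z : EuclideanSpace ℝ (Fin d)) :
    gradient (Pev (c • p)) z = c • gradient (Pev p) z := by
  unfold gradient
  have h1 : Pev (c • p) = fun z => c • Pev p z := by
    funext w; rw [Pev_smul]; rfl
  rw [h1, fderiv_fun_const_smul (diff_Pev p z), _root_.map_smul]

theorem grad_Pev_zero {d : ℕ} (z : EuclideanSpace ℝ (Fin d)) :
    gradient (Pev (0 : MvPolynomial (Fin d) ℝ)) z = 0 := by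
  have h1 : Pev (0 : MvPolynomial (Fin d) ℝ) = fun _ => (0:ℝ) := by funext w; exact Pev_zero w
  rw [h1]; exact gradient_const z 0

theorem intOn_ball {d : ℕ} {g : EuclideanSpace ℝ (Fin d) → ℝ} (hg : Continuous g)
    (x : EuclideanSpace ℝ (Fin d)) (r : ℝ) : IntegrableOn g (ball x r) volume :=
  (hg.continuousOn.integrableOn_compact (isCompact_closedBall x r)).mono_set
    ball_subset_closedBall

theorem totalDegree_bind₁_le {d : ℕ} (f : Fin d → MvPolynomial (Fin d) ℝ)
    (hf : ∀ i, (f i).totalDegree ≤ 1) (p : MvPolynomial (Fin d) ℝ) :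
    ((bind₁ f) p).totalDegree ≤ p.totalDegree := by
  conv_lhs => rw [p.as_sum]
  rw [map_sum]
  refine (MvPolynomial.totalDegree_finset_sum _ _).trans ?_
  refine Finset.sup_le fun v hv => ?_
  rw [bind₁_monomial]
  refine (MvPolynomial.totalDegree_mul _ _).trans ?_
  have h1 : (MvPolynomial.C (σ := Fin d) (p.coeff v)).totalDegree = 0 :=
    MvPolynomial.totalDegree_C _
  rw [h1, zero_add]
  refine (MvPolynomial.totalDegree_finset_prod _ _).trans ?_
  refine le_trans ?_ (MvPolynomial.le_totalDegree hv)
  have : ∀ i ∈ v.support, ((f i) ^ (v i)).totalDegree ≤ v i := fun i _ =>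
    (MvPolynomial.totalDegree_pow _ _).trans (by
      calc v i * (f i).totalDegree ≤ v i * 1 := Nat.mul_le_mul_left _ (hf i)
      _ = v i := Nat.mul_one _)
  calc ∑ i ∈ v.support, ((f i) ^ (v i)).totalDegree ≤ ∑ i ∈ v.support, v i :=
        Finset.sum_le_sum this
    _ = v.sum (fun _ n => n) := rfl

theorem Pev_sum {d n : ℕ} (c : Fin n → ℝ) (q : Fin n → MvPolynomial (Fin d) ℝ)
    (z : EuclideanSpace ℝ (Fin d)) :
    Pev (∑ i, c i • q i) z = ∑ i, c i * Pev (q i) z := by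
  classical
  induction (Finset.univ : Finset (Fin n)) using Finset.induction with
  | empty => simp [Pev_zero]
  | insert a s hx ih => rw [Finset.sum_insert hx, Finset.sum_insert hx, Pev_add,
      Pev_smul, ih]

theorem grad_Pev_sum {d n : ℕ} (c : Fin n → ℝ) (q : Fin n → MvPolynomial (Fin d) ℝ)
    (z : EuclideanSpace ℝ (Fin d)) :
    gradient (Pev (∑ i, c i • q i)) z = ∑ i, c i • gradient (Pev (q i)) z := by
  classical
  induction (Finset.univ : Finset (Fin n)) using Finset.induction with
  | empty => simp [grad_Pev_zero]
  | insert a s hx ih => rw [Finset.sum_insert hx, Finset.sum_insert hx, grad_Pev_add,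
      grad_Pev_smul, ih]

/-- evaluation of the affinely substituted polynomial -/
theorem Pev_bind₁ {d : ℕ} (p : MvPolynomial (Fin d) ℝ) (x : EuclideanSpace ℝ (Fin d)) (R : ℝ)
    (u : EuclideanSpace ℝ (Fin d)) :
    Pev ((bind₁ (fun i => MvPolynomial.C (x i) + MvPolynomial.C R * MvPolynomial.X i)) p) u =
      Pev p (x + R • u) := by
  unfold Pev
  rw [show (MvPolynomial.eval fun i => u i) = eval₂Hom (RingHom.id ℝ) (fun i => u i) by rfl,
    MvPolynomial.eval₂Hom_bind₁]
  simp

theorem grad_Pev_affine {d : ℕ} (p : MvPolynomial (Fin d) ℝ) (x : EuclideanSpace ℝ (Fin d))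
    {R : ℝ} (u : EuclideanSpace ℝ (Fin d)) :
    gradient (Pev ((bind₁ (fun i => MvPolynomial.C (x i) + MvPolynomial.C R * MvPolynomial.X i)) p)) u =
      R • gradient (Pev p) (x + R • u) := by
  have hq : Pev ((bind₁ (fun i => MvPolynomial.C (x i) + MvPolynomial.C R * MvPolynomial.X i)) p) =
      fun u => Pev p (x + R • u) := by funext w; exact Pev_bind₁ p x R w
  have hA : HasFDerivAt (fun u : EuclideanSpace ℝ (Fin d) => x + R • u)
      (R • ContinuousLinearMap.id ℝ (EuclideanSpace ℝ (Fin d))) u := by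
    exact ((hasFDerivAt_id u).const_smul R).const_add x
  have hcomp : HasFDerivAt (fun u => Pev p (x + R • u))
      ((fderiv ℝ (Pev p) (x + R • u)).comp (R • ContinuousLinearMap.id ℝ (EuclideanSpace ℝ (Fin d))))
      u := by have := (diff_Pev p (x + R • u)).hasFDerivAt.comp u hA; exact this
  rw [hq]
  have key : (fderiv ℝ (Pev p) (x + R • u)).comp
      (R • ContinuousLinearMap.id ℝ (EuclideanSpace ℝ (Fin d))) =
      InnerProductSpace.toDual ℝ (EuclideanSpace ℝ (Fin d))
        (R • gradient (Pev p) (x + R • u)) := by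
    ext v
    have hdual : fderiv ℝ (Pev p) (x + R • u) =
        InnerProductSpace.toDual ℝ (EuclideanSpace ℝ (Fin d)) (gradient (Pev p) (x + R • u)) := by
      unfold gradient; rw [LinearIsometryEquiv.apply_symm_apply]
    simp only [ContinuousLinearMap.coe_comp', Function.comp_apply, ContinuousLinearMap.coe_smul',
      Pi.smul_apply, ContinuousLinearMap.coe_id', id_eq, InnerProductSpace.toDual_apply_apply]
    rw [hdual, InnerProductSpace.toDual_apply_apply, real_inner_smul_left, real_inner_smul_right]
  unfold gradient
  rw [hcomp.fderiv, key, LinearIsometryEquiv.symm_apply_apply]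
  rfl

noncomputable def avg01 {d : ℕ} (p : MvPolynomial (Fin d) ℝ) : ℝ :=
  ⨍ w in ball (0 : EuclideanSpace ℝ (Fin d)) 1, Pev p w

noncomputable def Hf {d : ℕ} (p : MvPolynomial (Fin d) ℝ) : EuclideanSpace ℝ (Fin d) → ℝ :=
  fun z => Pev p z - avg01 p

theorem avg01_eq {d : ℕ} (p : MvPolynomial (Fin d) ℝ) :
    avg01 p = (volume (ball (0 : EuclideanSpace ℝ (Fin d)) 1)).toReal⁻¹ *
      ∫ z in ball (0 : EuclideanSpace ℝ (Fin d)) 1, Pev p z := by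
  rw [avg01, setAverage_eq, smul_eq_mul]; rfl

theorem avg01_add {d : ℕ} (p q : MvPolynomial (Fin d) ℝ) :
    avg01 (p + q) = avg01 p + avg01 q := by
  rw [avg01_eq, avg01_eq, avg01_eq, ← mul_add, ← integral_add (intOn_ball (cont_Pev p) _ _)
    (intOn_ball (cont_Pev q) _ _)]
  congr 1
  exact setIntegral_congr_fun measurableSet_ball fun z _ => Pev_add p q z

theorem avg01_smul {d : ℕ} (c : ℝ) (p : MvPolynomial (Fin d) ℝ) :
    avg01 (c • p) = c * avg01 p := by
  rw [avg01_eq, avg01_eq]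
  rw [show (∫ z in ball (0 : EuclideanSpace ℝ (Fin d)) 1, Pev (c • p) z) =
      ∫ z in ball (0 : EuclideanSpace ℝ (Fin d)) 1, c * Pev p z from
    setIntegral_congr_fun measurableSet_ball fun z _ => Pev_smul c p z, integral_const_mul]
  ring

theorem avg01_zero {d : ℕ} : avg01 (0 : MvPolynomial (Fin d) ℝ) = 0 := by
  have := avg01_smul (d := d) 0 0
  simpa using this

theorem Hf_add {d : ℕ} (p q : MvPolynomial (Fin d) ℝ) (z : EuclideanSpace ℝ (Fin d)) :
    Hf (p + q) z = Hf p z + Hf q z := by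
  simp only [Hf, Pev_add, avg01_add]; ring

theorem Hf_smul {d : ℕ} (c : ℝ) (p : MvPolynomial (Fin d) ℝ) (z : EuclideanSpace ℝ (Fin d)) :
    Hf (c • p) z = c * Hf p z := by
  simp only [Hf, Pev_smul, avg01_smul]; ring

theorem Hf_zero {d : ℕ} (z : EuclideanSpace ℝ (Fin d)) :
    Hf (0 : MvPolynomial (Fin d) ℝ) z = 0 := by
  simp [Hf, Pev_zero, avg01_zero]

theorem Hf_sum {d n : ℕ} (c : Fin n → ℝ) (q : Fin n → MvPolynomial (Fin d) ℝ)
    (z : EuclideanSpace ℝ (Fin d)) :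
    Hf (∑ i, c i • q i) z = ∑ i, c i * Hf (q i) z := by
  classical
  induction (Finset.univ : Finset (Fin n)) using Finset.induction with
  | empty => simp [Hf_zero]
  | insert a s hx ih => rw [Finset.sum_insert hx, Finset.sum_insert hx, Hf_add,
      Hf_smul, ih]

theorem cont_Hf {d : ℕ} (p : MvPolynomial (Fin d) ℝ) : Continuous (Hf p) :=
  (cont_Pev p).sub continuous_const

theorem vol01_pos {d : ℕ} :
    0 < (volume (ball (0 : EuclideanSpace ℝ (Fin d)) 1)).toReal :=
  ENNReal.toReal_pos (measure_ball_pos volume _ one_pos).ne' measure_ball_lt_top.ne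

theorem unit_poincare (d ℓ : ℕ) :
    ∃ C : ℝ, 0 < C ∧ ∀ p : MvPolynomial (Fin d) ℝ, p.totalDegree ≤ ℓ →
      (∫ z in ball (0 : EuclideanSpace ℝ (Fin d)) 1, (Hf p z) ^ 2) ≤
        C * ∫ z in ball (0 : EuclideanSpace ℝ (Fin d)) 1, ‖gradient (Pev p) z‖ ^ 2 := by
  classical
  set V := MvPolynomial.restrictTotalDegree (Fin d) ℝ ℓ with hV
  set n := Module.finrank ℝ V with hn
  haveI : Module.Free ℝ V := Module.Free.of_divisionRing ℝ V
  set b : Module.Basis (Fin n) ℝ V := Module.finBasis ℝ V with hb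
  set qi : Fin n → MvPolynomial (Fin d) ℝ := fun i => ((b i : V) : MvPolynomial (Fin d) ℝ) with hqi
  set Φ : EuclideanSpace ℝ (Fin n) → MvPolynomial (Fin d) ℝ :=
    fun a => ∑ i, a i • qi i with hΦ
  set B : Set (EuclideanSpace ℝ (Fin d)) := ball 0 1 with hB
  set Q1 : EuclideanSpace ℝ (Fin n) → ℝ := fun a => ∫ z in B, (Hf (Φ a) z) ^ 2 with hQ1def
  set Q2 : EuclideanSpace ℝ (Fin n) → ℝ :=
    fun a => ∫ z in B, ‖gradient (Pev (Φ a)) z‖ ^ 2 with hQ2def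
  -- quadratic expansions
  have hHΦ : ∀ a z, Hf (Φ a) z = ∑ i, a i * Hf (qi i) z := fun a z => Hf_sum _ _ z
  have hGΦ : ∀ a z, gradient (Pev (Φ a)) z = ∑ i, a i • gradient (Pev (qi i)) z :=
    fun a z => grad_Pev_sum _ _ z
  set c1 : Fin n → Fin n → ℝ := fun i j => ∫ z in B, Hf (qi i) z * Hf (qi j) z with hc1
  set c2 : Fin n → Fin n → ℝ :=
    fun i j => ∫ z in B, (inner ℝ (gradient (Pev (qi i)) z) (gradient (Pev (qi j)) z) : ℝ) with hc2
  have hQ1 : ∀ a, Q1 a = ∑ i, ∑ j, a i * a j * c1 i j := by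
    intro a
    have h1 : ∀ z, (Hf (Φ a) z) ^ 2 =
        ∑ i, ∑ j, a i * a j * (Hf (qi i) z * Hf (qi j) z) := by
      intro z
      rw [hHΦ, sq, Finset.sum_mul_sum]
      refine Finset.sum_congr rfl fun i _ => Finset.sum_congr rfl fun j _ => by ring
    rw [hQ1def]
    simp only [h1]
    rw [integral_finset_sum _ fun i _ => ?_]
    · refine Finset.sum_congr rfl fun i _ => ?_
      rw [integral_finset_sum _ fun j _ => ?_]
      · exact Finset.sum_congr rfl fun j _ => integral_const_mul _ _
      · exact intOn_ball (continuous_const.mul ((cont_Hf _).mul (cont_Hf _))) _ _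
    · exact integrable_finset_sum _ fun j _ =>
        intOn_ball (continuous_const.mul ((cont_Hf _).mul (cont_Hf _))) _ _
  have hQ2 : ∀ a, Q2 a = ∑ i, ∑ j, a i * a j * c2 i j := by
    intro a
    have h1 : ∀ z, ‖gradient (Pev (Φ a)) z‖ ^ 2 = ∑ i, ∑ j, a i * a j *
        (inner ℝ (gradient (Pev (qi i)) z) (gradient (Pev (qi j)) z) : ℝ) := by
      intro z
      rw [← real_inner_self_eq_norm_sq, hGΦ, sum_inner]
      refine Finset.sum_congr rfl fun i _ => ?_
      rw [inner_sum]
      refine Finset.sum_congr rfl fun j _ => ?_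
      rw [real_inner_smul_left, real_inner_smul_right]; ring
    rw [hQ2def]
    simp only [h1]
    rw [integral_finset_sum _ fun i _ => ?_]
    · refine Finset.sum_congr rfl fun i _ => ?_
      rw [integral_finset_sum _ fun j _ => ?_]
      · exact Finset.sum_congr rfl fun j _ => integral_const_mul _ _
      · exact intOn_ball (continuous_const.mul ((cont_grad_Pev _).inner (cont_grad_Pev _))) _ _
    · exact integrable_finset_sum _ fun j _ =>
        intOn_ball (continuous_const.mul ((cont_grad_Pev _).inner (cont_grad_Pev _))) _ _
  -- continuity
  have contQ1 : Continuous Q1 := by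
    have : Q1 = fun a => ∑ i, ∑ j, a i * a j * c1 i j := funext hQ1
    rw [this]
    refine continuous_finset_sum _ fun i _ => continuous_finset_sum _ fun j _ => ?_
    exact (((continuous_apply i).comp (PiLp.continuous_ofLp 2 _)).mul
      ((continuous_apply j).comp (PiLp.continuous_ofLp 2 _))).mul continuous_const
  have contQ2 : Continuous Q2 := by
    have : Q2 = fun a => ∑ i, ∑ j, a i * a j * c2 i j := funext hQ2
    rw [this]
    refine continuous_finset_sum _ fun i _ => continuous_finset_sum _ fun j _ => ?_
    exact (((continuous_apply i).comp (PiLp.continuous_ofLp 2 _)).mul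
      ((continuous_apply j).comp (PiLp.continuous_ofLp 2 _))).mul continuous_const
  -- Φ is linear
  have hΦadd : ∀ a a' : EuclideanSpace ℝ (Fin n), Φ (a + a') = Φ a + Φ a' := by
    intro a a'
    rw [hΦ, ← Finset.sum_add_distrib]
    refine Finset.sum_congr rfl fun i _ => ?_
    have : (a + a') i = a i + a' i := rfl
    rw [this, add_smul]
  have hΦsmul : ∀ (t : ℝ) (a : EuclideanSpace ℝ (Fin n)), Φ (t • a) = t • Φ a := by
    intro t a
    rw [hΦ, Finset.smul_sum]
    refine Finset.sum_congr rfl fun i _ => ?_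
    have : (t • a) i = t * a i := rfl
    rw [this, mul_smul]
  have hΦzero : Φ 0 = 0 := by
    rw [hΦ]
    refine Finset.sum_eq_zero fun i _ => ?_
    have : (0 : EuclideanSpace ℝ (Fin n)) i = 0 := rfl
    rw [this, zero_smul]
  -- the kernel submodule
  set L : Submodule ℝ (EuclideanSpace ℝ (Fin n)) :=
    { carrier := {a | ∀ z ∈ B, gradient (Pev (Φ a)) z = 0}
      add_mem' := by
        intro a a' ha ha' z hz
        rw [hΦadd, grad_Pev_add, ha z hz, ha' z hz, add_zero]
      zero_mem' := by
        intro z hz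
        rw [hΦzero]; exact grad_Pev_zero z
      smul_mem' := by
        intro t a ha z hz
        rw [hΦsmul, grad_Pev_smul, ha z hz, smul_zero] } with hL
  have memL : ∀ a, a ∈ L ↔ ∀ z ∈ B, gradient (Pev (Φ a)) z = 0 := fun a => Iff.rfl
  -- members of L are constant on B, hence Hf vanishes on B
  have hfderiv_zero : ∀ a ∈ L, ∀ z ∈ B, fderiv ℝ (Pev (Φ a)) z = 0 := by
    intro a ha z hz
    have h1 : gradient (Pev (Φ a)) z = 0 := ha z hz
    have h2 : (InnerProductSpace.toDual ℝ (EuclideanSpace ℝ (Fin d))).symm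
        (fderiv ℝ (Pev (Φ a)) z) = 0 := h1
    have := congrArg (InnerProductSpace.toDual ℝ (EuclideanSpace ℝ (Fin d))) h2
    rwa [LinearIsometryEquiv.apply_symm_apply, map_zero] at this
  have hconst : ∀ a ∈ L, ∀ z ∈ B, Pev (Φ a) z = Pev (Φ a) 0 := by
    intro a ha z hz
    have h0 : (0 : EuclideanSpace ℝ (Fin d)) ∈ B := mem_ball_self one_pos
    have hbd : ∀ w ∈ B, ‖fderivWithin ℝ (Pev (Φ a)) B w‖ ≤ 0 := by
      intro w hw
      rw [fderivWithin_of_isOpen isOpen_ball hw, hfderiv_zero a ha w hw]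
      simp
    have := (convex_ball (0 : EuclideanSpace ℝ (Fin d)) 1).norm_image_sub_le_of_norm_fderivWithin_le
      ((diff_Pev (Φ a)).differentiableOn) hbd h0 hz
    rw [zero_mul] at this
    have h2 : ‖Pev (Φ a) z - Pev (Φ a) 0‖ = 0 := le_antisymm this (norm_nonneg _)
    rwa [norm_eq_zero, sub_eq_zero] at h2
  have hHzero : ∀ a ∈ L, ∀ z ∈ B, Hf (Φ a) z = 0 := by
    intro a ha z hz
    have havg : avg01 (Φ a) = Pev (Φ a) 0 := by
      rw [avg01_eq]
      rw [show (∫ w in ball (0 : EuclideanSpace ℝ (Fin d)) 1, Pev (Φ a) w)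
          = ∫ _ in ball (0 : EuclideanSpace ℝ (Fin d)) 1, Pev (Φ a) 0 from
        setIntegral_congr_fun measurableSet_ball fun w hw => hconst a ha w hw]
      rw [setIntegral_const, smul_eq_mul, measureReal_def, ← mul_assoc, inv_mul_cancel₀ vol01_pos.ne', one_mul]
    rw [Hf, havg, hconst a ha z hz, sub_self]
  -- invariance of Q1 and Q2 under adding elements of L
  have hQ1inv : ∀ (a : EuclideanSpace ℝ (Fin n)), ∀ l ∈ L, Q1 (a + l) = Q1 a := by
    intro a l hl
    refine setIntegral_congr_fun measurableSet_ball fun z hz => ?_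
    rw [hΦadd, Hf_add, hHzero l hl z hz, add_zero]
  have hQ2inv : ∀ (a : EuclideanSpace ℝ (Fin n)), ∀ l ∈ L, Q2 (a + l) = Q2 a := by
    intro a l hl
    refine setIntegral_congr_fun measurableSet_ball fun z hz => ?_
    rw [hΦadd, grad_Pev_add, hl z hz, add_zero]
  -- Q1 and Q2 vanish on L
  have hQ1L : ∀ a ∈ L, Q1 a = 0 := by
    intro a ha
    have : Q1 a = ∫ _ in B, (0:ℝ) :=
      setIntegral_congr_fun measurableSet_ball fun z hz => by rw [hHzero a ha z hz]; norm_num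
    rw [this, integral_zero]
  have hQ1zero : Q1 0 = 0 := hQ1L 0 (Submodule.zero_mem L)
  -- nonnegativity
  have hQ1nonneg : ∀ a, 0 ≤ Q1 a := fun a => setIntegral_nonneg measurableSet_ball
    fun z _ => sq_nonneg _
  have hQ2nonneg : ∀ a, 0 ≤ Q2 a := fun a => setIntegral_nonneg measurableSet_ball
    fun z _ => sq_nonneg _
  -- Q2 positive away from L
  have hQ2pos : ∀ a, a ∉ L → 0 < Q2 a := by
    intro a ha
    rw [memL] at ha
    push_neg at ha
    obtain ⟨z0, hz0B, hz0⟩ := ha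
    set f : EuclideanSpace ℝ (Fin d) → ℝ := fun z => ‖gradient (Pev (Φ a)) z‖ ^ 2 with hf
    have hcont : Continuous f := ((cont_grad_Pev _).norm).pow 2
    have h1 : 0 < ∫ z in B, f z := by
      rw [setIntegral_pos_iff_support_of_nonneg_ae
        (Filter.Eventually.of_forall fun z => sq_nonneg _) (intOn_ball hcont _ _)]
      have hopen : IsOpen (Function.support f ∩ B) :=
        (hcont.isOpen_support).inter isOpen_ball
      refine hopen.measure_pos volume ⟨z0, ?_, hz0B⟩
      simp only [Function.mem_support, hf]
      exact (pow_pos (norm_pos_iff.mpr hz0) 2).ne'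
    exact h1
  -- decomposition and compactness
  have hsurj : ∀ p : MvPolynomial (Fin d) ℝ, p.totalDegree ≤ ℓ → ∃ a, Φ a = p := by
    intro p hp
    refine ⟨WithLp.toLp 2 (fun i => b.equivFun ⟨p, (MvPolynomial.mem_restrictTotalDegree _ _ _).2 hp⟩ i), ?_⟩
    have := b.sum_equivFun ⟨p, (MvPolynomial.mem_restrictTotalDegree _ _ _).2 hp⟩
    calc Φ (WithLp.toLp 2 (fun i => b.equivFun ⟨p, _⟩ i))
        = ((∑ i, b.equivFun ⟨p, (MvPolynomial.mem_restrictTotalDegree _ _ _).2 hp⟩ i • b i : V) :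
          MvPolynomial (Fin d) ℝ) := by
          rw [hΦ]; push_cast; rfl
      _ = p := by rw [this]
  have hQ1hom : ∀ (t : ℝ) (a : EuclideanSpace ℝ (Fin n)), Q1 (t • a) = t ^ 2 * Q1 a := by
    intro t a
    calc Q1 (t • a) = ∫ z in B, t ^ 2 * (Hf (Φ a) z) ^ 2 :=
          setIntegral_congr_fun measurableSet_ball fun z _ => by
            rw [hΦsmul, Hf_smul, mul_pow]
      _ = t ^ 2 * Q1 a := integral_const_mul _ _
  have hQ2hom : ∀ (t : ℝ) (a : EuclideanSpace ℝ (Fin n)), Q2 (t • a) = t ^ 2 * Q2 a := by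
    intro t a
    calc Q2 (t • a) = ∫ z in B, t ^ 2 * ‖gradient (Pev (Φ a)) z‖ ^ 2 :=
          setIntegral_congr_fun measurableSet_ball fun z _ => by
            rw [hΦsmul, grad_Pev_smul, norm_smul, mul_pow, Real.norm_eq_abs, sq_abs]
      _ = t ^ 2 * Q2 a := integral_const_mul _ _
  have hperp_notL : ∀ m : EuclideanSpace ℝ (Fin n), m ∈ Lᗮ → m ≠ 0 → m ∉ L := by
    intro m hmO hm0 hmL
    exact hm0 (inner_self_eq_zero.mp (hmO m hmL))
  by_cases hbot : (Lᗮ : Submodule ℝ (EuclideanSpace ℝ (Fin n))) = ⊥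
  · -- everything is in L
    refine ⟨1, one_pos, fun p hp => ?_⟩
    obtain ⟨a, haΦ⟩ := hsurj p hp
    obtain ⟨l, hlL, m, hmO, hdec⟩ := Submodule.exists_add_mem_mem_orthogonal (K := L) a
    rw [hbot, Submodule.mem_bot] at hmO
    subst hmO
    rw [add_zero] at hdec
    subst hdec
    have h1 : Q1 a = 0 := hQ1L a hlL
    calc (∫ z in ball (0 : EuclideanSpace ℝ (Fin d)) 1, (Hf p z) ^ 2)
        = Q1 a := by rw [← haΦ]
      _ = 0 := h1
      _ ≤ 1 * ∫ z in ball (0 : EuclideanSpace ℝ (Fin d)) 1, ‖gradient (Pev p) z‖ ^ 2 := by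
          rw [one_mul, ← haΦ]
          exact hQ2nonneg a
  · -- Lᗮ is nontrivial: compactness argument on the unit sphere of Lᗮ
    set S : Set (EuclideanSpace ℝ (Fin n)) := sphere 0 1 ∩ (Lᗮ : Set (EuclideanSpace ℝ (Fin n)))
      with hS
    have hScompact : IsCompact S :=
      (isCompact_sphere 0 1).inter_right (Lᗮ).closed_of_finiteDimensional
    have hSne : S.Nonempty := by
      obtain ⟨m, hmO, hm0⟩ := Submodule.exists_mem_ne_zero_of_ne_bot hbot
      refine ⟨‖m‖⁻¹ • m, ?_, Submodule.smul_mem _ _ hmO⟩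
      rw [mem_sphere_zero_iff_norm, norm_smul, norm_inv, norm_norm,
        inv_mul_cancel₀ (norm_ne_zero_iff.2 hm0)]
    obtain ⟨aM, haMS, hmax'⟩ := hScompact.exists_isMaxOn hSne contQ1.continuousOn
    have hmax : ∀ u ∈ S, Q1 u ≤ Q1 aM := fun u hu => hmax' hu
    obtain ⟨am, hamS, hmin'⟩ := hScompact.exists_isMinOn hSne contQ2.continuousOn
    have hmin : ∀ u ∈ S, Q2 am ≤ Q2 u := fun u hu => hmin' hu
    have ham0 : am ≠ 0 := by
      intro h
      have := hamS.1
      rw [h, mem_sphere_zero_iff_norm, norm_zero] at this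
      exact one_ne_zero this.symm
    have hm2pos : 0 < Q2 am := hQ2pos am (hperp_notL am hamS.2 ham0)
    set Cc : ℝ := max 1 (Q1 aM / Q2 am) with hCc
    have hCpos : 0 < Cc := lt_of_lt_of_le one_pos (le_max_left _ _)
    have hCkey : Q1 aM ≤ Cc * Q2 am := by
      have h1 : Q1 aM / Q2 am ≤ Cc := le_max_right _ _
      calc Q1 aM = (Q1 aM / Q2 am) * Q2 am := by field_simp
        _ ≤ Cc * Q2 am := mul_le_mul_of_nonneg_right h1 hm2pos.le
    refine ⟨Cc, hCpos, fun p hp => ?_⟩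
    obtain ⟨a, haΦ⟩ := hsurj p hp
    obtain ⟨l, hlL, m, hmO, hdec⟩ := Submodule.exists_add_mem_mem_orthogonal (K := L) a
    have hQ1a : Q1 a = Q1 m := by rw [hdec, add_comm, hQ1inv m l hlL]
    have hQ2a : Q2 a = Q2 m := by rw [hdec, add_comm, hQ2inv m l hlL]
    have key : Q1 a ≤ Cc * Q2 a := by
      rcases eq_or_ne m 0 with hm0 | hm0
      · rw [hQ1a, hm0, hQ1zero]
        exact mul_nonneg hCpos.le (hQ2nonneg a)
      · set t : ℝ := ‖m‖ with ht
        have htpos : 0 < t := norm_pos_iff.2 hm0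
        set u : EuclideanSpace ℝ (Fin n) := t⁻¹ • m with hu
        have huS : u ∈ S := by
          constructor
          · rw [mem_sphere_zero_iff_norm, hu, norm_smul, norm_inv, Real.norm_eq_abs,
              abs_of_pos htpos, inv_mul_cancel₀ htpos.ne']
          · exact Submodule.smul_mem _ _ hmO
        have hmu : m = t • u := by rw [hu, smul_inv_smul₀ htpos.ne']
        calc Q1 a = Q1 m := hQ1a
          _ = t ^ 2 * Q1 u := by rw [hmu, hQ1hom]
          _ ≤ t ^ 2 * Q1 aM := by
              exact mul_le_mul_of_nonneg_left (hmax u huS) (sq_nonneg t)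
          _ ≤ t ^ 2 * (Cc * Q2 am) := mul_le_mul_of_nonneg_left hCkey (sq_nonneg t)
          _ ≤ t ^ 2 * (Cc * Q2 u) := by
              exact mul_le_mul_of_nonneg_left
                (mul_le_mul_of_nonneg_left (hmin u huS) hCpos.le) (sq_nonneg t)
          _ = Cc * (t ^ 2 * Q2 u) := by ring
          _ = Cc * Q2 m := by rw [← hQ2hom, ← hmu]
          _ = Cc * Q2 a := by rw [hQ2a]
    calc (∫ z in ball (0 : EuclideanSpace ℝ (Fin d)) 1, (Hf p z) ^ 2)
        = Q1 a := by rw [← haΦ]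
      _ ≤ Cc * Q2 a := key
      _ = Cc * ∫ z in ball (0 : EuclideanSpace ℝ (Fin d)) 1, ‖gradient (Pev p) z‖ ^ 2 := by
          rw [← haΦ]

theorem same_ball (d ℓ : ℕ) :
    ∃ C : ℝ, 0 < C ∧ ∀ p : MvPolynomial (Fin d) ℝ, p.totalDegree ≤ ℓ →
      ∀ (x : EuclideanSpace ℝ (Fin d)) (R : ℝ), 0 < R →
        (∫ z in ball x R, (Pev p z - ⨍ w in ball x R, Pev p w) ^ 2) ≤
          C * R ^ 2 * ∫ z in ball x R, ‖gradient (Pev p) z‖ ^ 2 := by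
  obtain ⟨C0, hC0, h0⟩ := unit_poincare d ℓ
  refine ⟨C0, hC0, fun p hp x R hR => ?_⟩
  set q : MvPolynomial (Fin d) ℝ :=
    (bind₁ (fun i => MvPolynomial.C (x i) + MvPolynomial.C R * MvPolynomial.X i)) p with hq
  have hdeg1 : ∀ i : Fin d,
      (MvPolynomial.C (x i) + MvPolynomial.C R * MvPolynomial.X i).totalDegree ≤ 1 := by
    intro i
    refine (MvPolynomial.totalDegree_add _ _).trans ?_
    refine max_le (by simp [MvPolynomial.totalDegree_C]) ?_
    refine (MvPolynomial.totalDegree_mul _ _).trans ?_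
    simp [MvPolynomial.totalDegree_C, MvPolynomial.totalDegree_X]
  have hqdeg : q.totalDegree ≤ ℓ := (totalDegree_bind₁_le _ hdeg1 p).trans hp
  set M : ℝ := ⨍ w in ball x R, Pev p w with hM
  have hRd : (0:ℝ) < R ^ d := pow_pos hR d
  set v0 : ℝ := (volume (ball (0 : EuclideanSpace ℝ (Fin d)) 1)).toReal with hv0
  have hv0pos : 0 < v0 := vol01_pos
  -- the average of q over the unit ball is M
  have havg : avg01 q = M := by
    have h1 : (∫ u in ball (0 : EuclideanSpace ℝ (Fin d)) 1, Pev q u) =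
        (R ^ d)⁻¹ * ∫ z in ball x R, Pev p z := by
      rw [show (∫ u in ball (0 : EuclideanSpace ℝ (Fin d)) 1, Pev q u) =
          ∫ u in ball (0 : EuclideanSpace ℝ (Fin d)) 1, Pev p (x + R • u) from
        setIntegral_congr_fun measurableSet_ball fun u _ => Pev_bind₁ p x R u]
      exact cov (Pev p) x hR
    rw [avg01_eq, h1, hM, setAverage_eq, smul_eq_mul, measureReal_def, volball x hR, ← hv0]
    rw [mul_inv]
    ring
  -- transfer of the L² distance integral
  have h1 : (∫ u in ball (0 : EuclideanSpace ℝ (Fin d)) 1, (Hf q u) ^ 2) =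
      (R ^ d)⁻¹ * ∫ z in ball x R, (Pev p z - M) ^ 2 := by
    rw [show (∫ u in ball (0 : EuclideanSpace ℝ (Fin d)) 1, (Hf q u) ^ 2) =
        ∫ u in ball (0 : EuclideanSpace ℝ (Fin d)) 1,
          (fun z => (Pev p z - M) ^ 2) (x + R • u) from
      setIntegral_congr_fun measurableSet_ball fun u _ => by
        simp only [Hf, havg]; rw [hq, Pev_bind₁ p x R u]]
    exact cov (fun z => (Pev p z - M) ^ 2) x hR
  -- transfer of the gradient integral
  have h2 : (∫ u in ball (0 : EuclideanSpace ℝ (Fin d)) 1, ‖gradient (Pev q) u‖ ^ 2) =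
      R ^ 2 * ((R ^ d)⁻¹ * ∫ z in ball x R, ‖gradient (Pev p) z‖ ^ 2) := by
    rw [show (∫ u in ball (0 : EuclideanSpace ℝ (Fin d)) 1, ‖gradient (Pev q) u‖ ^ 2) =
        ∫ u in ball (0 : EuclideanSpace ℝ (Fin d)) 1,
          R ^ 2 * (fun z => ‖gradient (Pev p) z‖ ^ 2) (x + R • u) from
      setIntegral_congr_fun measurableSet_ball fun u _ => by
        rw [hq, grad_Pev_affine p x u, norm_smul, mul_pow, Real.norm_eq_abs, sq_abs]]
    rw [integral_const_mul]
    congr 1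
    exact cov (fun z => ‖gradient (Pev p) z‖ ^ 2) x hR
  have key := h0 q hqdeg
  rw [h1, h2] at key
  calc (∫ z in ball x R, (Pev p z - M) ^ 2)
      = R ^ d * ((R ^ d)⁻¹ * ∫ z in ball x R, (Pev p z - M) ^ 2) := by
        rw [← mul_assoc, mul_inv_cancel₀ hRd.ne', one_mul]
    _ ≤ R ^ d * (C0 * (R ^ 2 * ((R ^ d)⁻¹ * ∫ z in ball x R, ‖gradient (Pev p) z‖ ^ 2))) :=
        mul_le_mul_of_nonneg_left key hRd.le
    _ = (R ^ d * (R ^ d)⁻¹) * (C0 * R ^ 2 * ∫ z in ball x R, ‖gradient (Pev p) z‖ ^ 2) := by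
        ring
    _ = C0 * R ^ 2 * ∫ z in ball x R, ‖gradient (Pev p) z‖ ^ 2 := by
        rw [mul_inv_cancel₀ hRd.ne', one_mul]

/-- Discrete Poincaré inequality for polynomials with the mean taken over a sub-ball. -/
theorem polynomial_discrete_poincare_subball_mean
    (d ℓ : ℕ) (hd : 1 ≤ d) (θ : ℝ) (hθ : θ ∈ Set.Ioc (0 : ℝ) 1) :
    ∃ C : ℝ, 0 < C ∧
      ∀ (p : MvPolynomial (Fin d) ℝ), p.totalDegree ≤ ℓ →
        ∀ (x y : EuclideanSpace ℝ (Fin d)) (R ρ : ℝ), 0 < R → 0 < ρ →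
          θ * R ≤ ρ → closedBall y ρ ⊆ closedBall x R →
          (∫ z in ball x R,
              (MvPolynomial.eval (fun i => z i) p -
                ⨍ w in ball y ρ, MvPolynomial.eval (fun i => w i) p) ^ 2) ≤
            C * R ^ 2 * ∫ z in ball x R,
              ‖gradient (fun w : EuclideanSpace ℝ (Fin d) =>
                MvPolynomial.eval (fun i => w i) p) z‖ ^ 2 := by
  obtain ⟨hθ0, hθ1⟩ := hθ
  obtain ⟨C0, hC0, h0⟩ := same_ball d ℓ
  have hθd : (0:ℝ) < θ ^ d := pow_pos hθ0 d
  refine ⟨2 * (1 + (θ ^ d)⁻¹) * C0, by positivity, ?_⟩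
  intro p hp x y R ρ hR hρ hθR hsub
  haveI : Nontrivial (EuclideanSpace ℝ (Fin d)) := by
    refine ⟨⟨EuclideanSpace.single ⟨0, hd⟩ 1, 0, fun h => ?_⟩⟩
    have h2 : (EuclideanSpace.single (⟨0, hd⟩ : Fin d) (1:ℝ)) ⟨0, hd⟩ =
        (0 : EuclideanSpace ℝ (Fin d)) ⟨0, hd⟩ := by rw [h]
    rw [EuclideanSpace.single_apply] at h2
    simp at h2
  show (∫ z in ball x R, (Pev p z - ⨍ w in ball y ρ, Pev p w) ^ 2) ≤
      2 * (1 + (θ ^ d)⁻¹) * C0 * R ^ 2 * ∫ z in ball x R, ‖gradient (Pev p) z‖ ^ 2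
  set v0 : ℝ := (volume (ball (0 : EuclideanSpace ℝ (Fin d)) 1)).toReal with hv0
  have hv0pos : 0 < v0 := vol01_pos
  set m : ℝ := ⨍ w in ball y ρ, Pev p w with hm
  set M : ℝ := ⨍ w in ball x R, Pev p w with hM
  set A1 : ℝ := ∫ z in ball x R, (Pev p z - M) ^ 2 with hA1def
  set A2 : ℝ := ∫ z in ball x R, ‖gradient (Pev p) z‖ ^ 2 with hA2def
  have hA1nonneg : 0 ≤ A1 := setIntegral_nonneg measurableSet_ball fun z _ => sq_nonneg _
  have hA1 : A1 ≤ C0 * R ^ 2 * A2 := h0 p hp x R hR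
  set c : ℝ := m - M with hc
  have hgc : Continuous fun z : EuclideanSpace ℝ (Fin d) => Pev p z - M :=
    (cont_Pev p).sub continuous_const
  set VB : ℝ := (volume (ball x R)).toReal with hVB
  set Vr : ℝ := (volume (ball y ρ)).toReal with hVr
  have hVBval : VB = R ^ d * v0 := volball x hR
  have hVrval : Vr = ρ ^ d * v0 := volball y hρ
  have hVBpos : 0 < VB := by rw [hVBval]; positivity
  have hVrpos : 0 < Vr := by rw [hVrval]; positivity
  -- the open big ball and the closed big ball agree a.e.
  have haecb : ball x R =ᵐ[volume] closedBall x R := by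
    rw [MeasureTheory.ae_eq_set]
    constructor
    · rw [Set.diff_eq_empty.mpr ball_subset_closedBall]; exact measure_empty
    · refine measure_mono_null (t := sphere x R) ?_ (Measure.addHaar_sphere volume x R)
      rw [← Metric.closedBall_diff_ball]
  -- the small ball integral is dominated by the big ball integral
  have hsmall : (∫ z in ball y ρ, (Pev p z - M) ^ 2) ≤ A1 := by
    have hint : IntegrableOn (fun z => (Pev p z - M) ^ 2) (closedBall x R) volume :=
      ((hgc.pow 2).continuousOn.integrableOn_compact (isCompact_closedBall x R))
    calc (∫ z in ball y ρ, (Pev p z - M) ^ 2)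
        ≤ ∫ z in closedBall x R, (Pev p z - M) ^ 2 := by
          refine setIntegral_mono_set hint
            (Filter.Eventually.of_forall fun z => sq_nonneg _) ?_
          exact (ball_subset_closedBall.trans hsub).eventuallyLE
      _ = A1 := setIntegral_congr_set haecb.symm
  have hsmallnonneg : 0 ≤ ∫ z in ball y ρ, (Pev p z - M) ^ 2 :=
    setIntegral_nonneg measurableSet_ball fun z _ => sq_nonneg _
  -- mean value identity over the small ball
  have hintg : IntegrableOn (fun z => Pev p z - M) (ball y ρ) volume :=
    intOn_ball hgc y ρ
  have hintg2 : IntegrableOn (fun z => (Pev p z - M) ^ 2) (ball y ρ) volume :=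
    intOn_ball (hgc.pow 2) y ρ
  have hmeanval : (∫ z in ball y ρ, (Pev p z - M)) = Vr * c := by
    have h1 : (∫ z in ball y ρ, (Pev p z - M)) =
        (∫ z in ball y ρ, Pev p z) - ∫ _z in ball y ρ, M :=
      integral_sub (intOn_ball (cont_Pev p) y ρ) (integrableOn_const measure_ball_lt_top.ne)
    have h2 : (∫ _z in ball y ρ, M) = Vr * M := by
      rw [setIntegral_const, smul_eq_mul, show volume.real (ball y ρ) = Vr from rfl]
    have h3 : (∫ z in ball y ρ, Pev p z) = Vr * m := by
      rw [hm, setAverage_eq, smul_eq_mul, ← mul_assoc, show volume.real (ball y ρ) = Vr from rfl, mul_inv_cancel₀ hVrpos.ne', one_mul]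
    rw [h1, h2, h3, hc]; ring
  -- Jensen: (m - M)² ≤ mean of the squares
  have hJ : Vr * c ^ 2 ≤ ∫ z in ball y ρ, (Pev p z - M) ^ 2 := by
    have hexp : (∫ z in ball y ρ, ((Pev p z - M) - c) ^ 2) =
        (∫ z in ball y ρ, (Pev p z - M) ^ 2) - Vr * c ^ 2 := by
      have e1 : ∀ z, ((Pev p z - M) - c) ^ 2 =
          (Pev p z - M) ^ 2 - (2 * c) * (Pev p z - M) + c ^ 2 := fun z => by ring
      simp only [e1]
      have i1 : IntegrableOn (fun z => (Pev p z - M) ^ 2 - (2 * c) * (Pev p z - M))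
          (ball y ρ) volume := hintg2.sub (hintg.const_mul (2 * c))
      have i2 : IntegrableOn (fun _ : EuclideanSpace ℝ (Fin d) => c ^ 2) (ball y ρ) volume :=
        integrableOn_const measure_ball_lt_top.ne
      rw [integral_add i1 i2, integral_sub hintg2 (hintg.const_mul (2 * c)),
        integral_const_mul, hmeanval, setIntegral_const, smul_eq_mul,
          show volume.real (ball y ρ) = Vr from rfl]
      ring
    have hpos : 0 ≤ ∫ z in ball y ρ, ((Pev p z - M) - c) ^ 2 :=
      setIntegral_nonneg measurableSet_ball fun z _ => sq_nonneg _
    linarith [hexp ▸ hpos]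
  -- pointwise bound on the big ball and combination
  have hmono : (∫ z in ball x R, (Pev p z - m) ^ 2) ≤
      ∫ z in ball x R, (2 * (Pev p z - M) ^ 2 + 2 * c ^ 2) := by
    refine setIntegral_mono_on (intOn_ball (((cont_Pev p).sub continuous_const).pow 2) x R)
      ((intOn_ball (continuous_const.mul (hgc.pow 2)) x R).add
        (integrableOn_const measure_ball_lt_top.ne)) measurableSet_ball fun z _ => ?_
    have : Pev p z - m = (Pev p z - M) - c := by rw [hc]; ring
    rw [this]
    nlinarith [sq_nonneg ((Pev p z - M) + c)]
  have hsplit : (∫ z in ball x R, (2 * (Pev p z - M) ^ 2 + 2 * c ^ 2)) =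
      2 * A1 + 2 * c ^ 2 * VB := by
    rw [integral_add (intOn_ball (g := fun z => 2 * (Pev p z - M) ^ 2) (continuous_const.mul (hgc.pow 2)) x R)
      (integrableOn_const measure_ball_lt_top.ne), integral_const_mul,
      setIntegral_const, smul_eq_mul, show volume.real (ball x R) = VB from rfl]
    rw [hA1def]; ring
  -- volume ratio bound
  have hratio : VB * Vr⁻¹ ≤ (θ ^ d)⁻¹ := by
    have h1 : (θ * R) ^ d ≤ ρ ^ d := pow_le_pow_left₀ (by positivity) hθR d
    rw [mul_pow] at h1
    have h2 : VB * Vr⁻¹ = R ^ d / ρ ^ d := by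
      rw [hVBval, hVrval]
      field_simp
    have h3 : R ^ d ≤ (θ ^ d)⁻¹ * ρ ^ d := by
      calc R ^ d = (θ ^ d)⁻¹ * (θ ^ d * R ^ d) := by field_simp
        _ ≤ (θ ^ d)⁻¹ * ρ ^ d := mul_le_mul_of_nonneg_left h1 (by positivity)
    rw [h2, div_le_iff₀ (pow_pos hρ d)]
    calc R ^ d ≤ (θ ^ d)⁻¹ * ρ ^ d := h3
      _ = (θ ^ d)⁻¹ * ρ ^ d := rfl
  have hc2VB : c ^ 2 * VB ≤ (θ ^ d)⁻¹ * A1 := by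
    have h1 : c ^ 2 ≤ Vr⁻¹ * A1 := by
      have h2 : Vr * c ^ 2 ≤ A1 := hJ.trans hsmall
      calc c ^ 2 = Vr⁻¹ * (Vr * c ^ 2) := by field_simp
        _ ≤ Vr⁻¹ * A1 := mul_le_mul_of_nonneg_left h2 (inv_nonneg.2 hVrpos.le)
    calc c ^ 2 * VB ≤ (Vr⁻¹ * A1) * VB := mul_le_mul_of_nonneg_right h1 hVBpos.le
      _ = (VB * Vr⁻¹) * A1 := by ring
      _ ≤ (θ ^ d)⁻¹ * A1 := mul_le_mul_of_nonneg_right hratio hA1nonneg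
  calc (∫ z in ball x R, (Pev p z - m) ^ 2)
      ≤ 2 * A1 + 2 * c ^ 2 * VB := by rw [← hsplit]; exact hmono
    _ ≤ 2 * A1 + 2 * ((θ ^ d)⁻¹ * A1) := by linarith [hc2VB]
    _ = 2 * (1 + (θ ^ d)⁻¹) * A1 := by ring
    _ ≤ 2 * (1 + (θ ^ d)⁻¹) * (C0 * R ^ 2 * A2) := by
        refine mul_le_mul_of_nonneg_left hA1 ?_
        positivity
    _ = 2 * (1 + (θ ^ d)⁻¹) * C0 * R ^ 2 * A2 := by ring
end
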